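/- arXiv:2504.03542 — 11 statements merged into one kernel-verified Lean document; each statement's English description precedes it below -/
import Mathlib

section
/- For any integer m ≥ 2 and any pairwise distinct complex numbers x₁, …, x_m, and for every ε > 0, there exist indices 1 ≤ k < l ≤ m and a complex number t with 0 < |t| < ε such that |t·x_k + 1| = |t·x_l + 1| and |t·x_k + 1| > |t·x_j + 1| for every index j ∈ {1, …, m} with j ≠ k and j ≠ l. -/
def HPx (z : ℂ) : Prop := 0 < z.re ∨ (z.re = 0 ∧ 0 < z.im)

lemma HPx.ne_zero {z : ℂ} (h : HPx z) : z ≠ 0 := by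
  intro h0; rcases h with h | ⟨h1, h2⟩ <;> simp [h0] at *

lemma HPx.re_nonneg {z : ℂ} (h : HPx z) : 0 ≤ z.re := by
  rcases h with h | ⟨h1, h2⟩ <;> linarith

lemma HPx.abs_pos {z : ℂ} (h : HPx z) : 0 < ‖z‖ :=
  norm_pos_iff.mpr h.ne_zero

lemma HPx.den_pos {z : ℂ} (h : HPx z) : 0 < z.re + ‖z‖ := by
  linarith [h.re_nonneg, h.abs_pos]

set_option maxHeartbeats 1000000 in
lemma cross_nonneg {zb zj : ℂ} (hb : HPx zb) (hj : HPx zj)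
    (h : zb.im / (zb.re + ‖zb‖) ≤ zj.im / (zj.re + ‖zj‖)) :
    0 ≤ zb.re * zj.im - zb.im * zj.re := by
  set rb := zb.re; set ib := zb.im; set rj := zj.re; set ij := zj.im
  set ab := ‖zb‖ with hab_def
  set aj := ‖zj‖ with haj_def
  have hab : 0 < rb + ab := hb.den_pos
  have haj : 0 < rj + aj := hj.den_pos
  have hab0 : 0 < ab := hb.abs_pos
  have haj0 : 0 < aj := hj.abs_pos
  have hb2 : rb ^ 2 + ib ^ 2 = ab ^ 2 := by
    rw [hab_def, Complex.sq_norm, Complex.normSq_apply]; ring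
  have hj2 : rj ^ 2 + ij ^ 2 = aj ^ 2 := by
    rw [haj_def, Complex.sq_norm, Complex.normSq_apply]; ring
  set tb := ib / (rb + ab) with htb_def
  set tj := ij / (rj + aj) with htj_def
  have hib : ib = tb * (rb + ab) := by rw [htb_def, div_mul_cancel₀ _ hab.ne']
  have hij : ij = tj * (rj + aj) := by rw [htj_def, div_mul_cancel₀ _ haj.ne']
  have hib_le : ib ≤ ab := le_trans (le_abs_self _) (Complex.abs_im_le_norm zb)
  have hib_ge : -ab ≤ ib := neg_le_of_abs_le (Complex.abs_im_le_norm zb)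
  have hij_le : ij ≤ aj := le_trans (le_abs_self _) (Complex.abs_im_le_norm zj)
  have hij_ge : -aj ≤ ij := neg_le_of_abs_le (Complex.abs_im_le_norm zj)
  have htb1 : tb ≤ 1 := by
    rw [htb_def, div_le_one hab]; linarith [hb.re_nonneg]
  have htj1 : tj ≤ 1 := by
    rw [htj_def, div_le_one haj]; linarith [hj.re_nonneg]
  have htb2 : -1 < tb := by
    rw [htb_def, lt_div_iff₀ hab]
    rcases hb with h' | ⟨h1, h2⟩ <;> nlinarith
  have htj2 : -1 < tj := by
    rw [htj_def, lt_div_iff₀ haj]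
    rcases hj with h' | ⟨h1, h2⟩ <;> nlinarith
  have e1 : rb * (1 + tb ^ 2) = ab * (1 - tb ^ 2) := by
    have h0 : (rb + ab) * (rb * (1 + tb ^ 2) - ab * (1 - tb ^ 2)) = 0 := by
      linear_combination hb2 - (ib + tb * (rb + ab)) * hib
    rcases mul_eq_zero.1 h0 with h' | h'
    · linarith
    · linarith
  have e2 : rj * (1 + tj ^ 2) = aj * (1 - tj ^ 2) := by
    have h0 : (rj + aj) * (rj * (1 + tj ^ 2) - aj * (1 - tj ^ 2)) = 0 := by
      linear_combination hj2 - (ij + tj * (rj + aj)) * hij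
    rcases mul_eq_zero.1 h0 with h' | h'
    · linarith
    · linarith
  have e3 : (rb + ab) * (1 + tb ^ 2) = 2 * ab := by linear_combination e1
  have e4 : (rj + aj) * (1 + tj ^ 2) = 2 * aj := by linear_combination e2
  have htbj : tb ≤ tj := h
  have hpos : 0 < 1 + tb * tj := by nlinarith [mul_pos (by linarith : (0:ℝ) < 1 + tb) (by linarith : (0:ℝ) < 1 + tj), mul_nonneg (by linarith : (0:ℝ) ≤ 1 - tb) (by linarith : (0:ℝ) ≤ 1 - tj)]
  have hfac : (1 + tb ^ 2) * (1 + tj ^ 2) * (rb * ij - ib * rj)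
      = 2 * ab * aj * ((tj - tb) * (1 + tb * tj)) := by
    clear_value tb tj
    rw [hib, hij]
    linear_combination (tj * (rj + aj) * (1 + tj ^ 2)) * e1 + (tj * ab * (1 - tb ^ 2)) * e4 - (tb * (rb + ab) * (1 + tb ^ 2)) * e2 - (tb * aj * (1 - tj ^ 2)) * e3
  have hK : 0 < (1 + tb ^ 2) * (1 + tj ^ 2) := by positivity
  nlinarith [hfac, mul_nonneg (mul_nonneg (by positivity : (0:ℝ) ≤ 2 * ab * aj) (by linarith : (0:ℝ) ≤ tj - tb)) hpos.le, hK]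

lemma collinear_of_cross {v u : ℂ} (h : v.re * u.im - v.im * u.re = 0) :
    (Complex.normSq v : ℂ) * u = ((v.re * u.re + v.im * u.im : ℝ) : ℂ) * v := by
  apply Complex.ext <;>
    simp [Complex.normSq_apply, Complex.mul_re, Complex.mul_im]
  · linear_combination (-v.im) * h
  · linear_combination v.re * h

lemma dist_id (u v : ℂ) (y R : ℝ) :
    Complex.normSq (u - (y : ℂ) * v - (R : ℂ) * Complex.I * v) =
      Complex.normSq (u - (y : ℂ) * v) - 2 * R * (v.re * u.im - v.im * u.re) +
        R ^ 2 * Complex.normSq v := by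
  simp [Complex.normSq_apply, Complex.sub_re, Complex.sub_im, Complex.mul_re, Complex.mul_im]
  ring

lemma normSq_real_mul (s : ℝ) (v : ℂ) :
    Complex.normSq ((s : ℂ) * v) = s ^ 2 * Complex.normSq v := by
  rw [Complex.normSq_mul, Complex.normSq_ofReal]; ring

set_option maxHeartbeats 1600000 in
theorem stmt0 (m : ℕ) (hm : 2 ≤ m) (x : Fin m → ℂ) (hx : Function.Injective x)
    (ε : ℝ) (hε : 0 < ε) :
    ∃ k l : Fin m, k < l ∧ ∃ t : ℂ, 0 < ‖t‖ ∧ ‖t‖ < ε ∧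
      ‖t * x k + 1‖ = ‖t * x l + 1‖ ∧
      ∀ j : Fin m, j ≠ k → j ≠ l → ‖t * x j + 1‖ < ‖t * x k + 1‖ := by
  classical
  -- choose a : lexicographic minimum
  obtain ⟨a, -, ha⟩ := Finset.exists_min_image Finset.univ
    (fun j => toLex ((x j).re, (x j).im)) ⟨⟨0, by omega⟩, Finset.mem_univ _⟩
  set z : Fin m → ℂ := fun j => x j - x a with hz_def
  have hza : z a = 0 := by simp [hz_def]
  have hHP : ∀ j, j ≠ a → HPx (z j) := by
    intro j hj
    have h := ha j (Finset.mem_univ j)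
    rw [Prod.Lex.le_iff] at h
    dsimp only [ofLex_toLex] at h
    have hne : x j ≠ x a := fun h' => hj (hx h')
    rcases h with h | ⟨h1, h2⟩
    · left; simp [hz_def, Complex.sub_re]; linarith
    · rcases lt_or_eq_of_le h2 with h3 | h3
      · right
        constructor
        · simp [hz_def, Complex.sub_re]; linarith
        · simp [hz_def, Complex.sub_im]; linarith
      · exact absurd (Complex.ext h1.symm h3.symm) hne
  have hzne : ∀ j, j ≠ a → z j ≠ 0 := fun j hj => (hHP j hj).ne_zero
  -- choose b : minimal half-angle-tangent among j ≠ a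
  obtain ⟨j0, hj0⟩ := Fintype.exists_ne_of_one_lt_card (by simp; omega) a
  obtain ⟨b, hbmem, hbmin⟩ := Finset.exists_min_image (Finset.univ.erase a)
    (fun j => (z j).im / ((z j).re + ‖z j‖)) ⟨j0, by simp [hj0]⟩
  have hba : b ≠ a := (Finset.mem_erase.1 hbmem).1
  have hHPb := hHP b hba
  have hzb0 : z b ≠ 0 := hHPb.ne_zero
  have hnz : 0 < Complex.normSq (z b) := Complex.normSq_pos.2 hzb0
  have hnz0 : (Complex.normSq (z b) : ℂ) ≠ 0 := by exact_mod_cast hnz.ne'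
  have habz : 0 < ‖z b‖ := hHPb.abs_pos
  -- cross products are nonnegative
  have hcr : ∀ j, 0 ≤ (z b).re * (z j).im - (z b).im * (z j).re := by
    intro j
    by_cases hj : j = a
    · subst hj; rw [hza]; simp
    · exact cross_nonneg hHPb (hHP j hj) (hbmin j (by simp [hj]))
  -- the set of collinear indices
  set S : Finset (Fin m) :=
    Finset.univ.filter (fun j => (z b).re * (z j).im - (z b).im * (z j).re = 0) with hS_def
  have haS : a ∈ S := by simp [hS_def, hza]
  have hbS : b ∈ S := by simp [hS_def]; ring
  obtain ⟨l, hlS, hlmax⟩ := Finset.exists_max_image S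
    (fun j => (z b).re * (z j).re + (z b).im * (z j).im) ⟨b, hbS⟩
  have hlmax' : ∀ j ∈ S, (z b).re * (z j).re + (z b).im * (z j).im
      ≤ (z b).re * (z l).re + (z b).im * (z l).im := hlmax
  have hpb : (z b).re * (z b).re + (z b).im * (z b).im = Complex.normSq (z b) := by
    rw [Complex.normSq_apply]
  have hpl : Complex.normSq (z b) ≤ (z b).re * (z l).re + (z b).im * (z l).im := by
    rw [← hpb]; exact hlmax' b hbS
  have hpa : (z b).re * (z a).re + (z b).im * (z a).im = 0 := by rw [hza]; simp
  have hla : l ≠ a := by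
    intro h; rw [h, hpa] at hpl; linarith
  have hcrl : (z b).re * (z l).im - (z b).im * (z l).re = 0 := by
    have := (Finset.mem_filter.1 hlS).2; exact this
  -- y : half the parameter of l along the line
  set y : ℝ := ((z b).re * (z l).re + (z b).im * (z l).im) / (2 * Complex.normSq (z b))
    with hy_def
  have hy : 0 < y := div_pos (lt_of_lt_of_le hnz hpl) (by linarith)
  have hzl : z l = ((2 * y : ℝ) : ℂ) * z b := by
    apply mul_left_cancel₀ hnz0
    rw [collinear_of_cross hcrl]
    have : ((z b).re * (z l).re + (z b).im * (z l).im : ℝ) = 2 * y * Complex.normSq (z b) := by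
      rw [hy_def]; field_simp
    rw [this]; push_cast; ring
  -- choose R large
  set Rsum : ℝ := ∑ j, max 0 (Complex.normSq (z j - (y : ℂ) * z b) /
      (2 * ((z b).re * (z j).im - (z b).im * (z j).re))) with hRsum_def
  have hRsum : 0 ≤ Rsum := Finset.sum_nonneg fun j _ => le_max_left _ _
  have hq : 0 < 1 + ‖x a‖ + 1 / ε := by
    have h1 := norm_nonneg (x a); have h2 := one_div_pos.2 hε; linarith
  set R : ℝ := (1 + ‖x a‖ + 1 / ε) / ‖z b‖ + 1 + Rsum with hR_def
  have hR1 : 0 < R := by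
    have := div_pos hq habz; rw [hR_def]; linarith
  have hRbound : ∀ j, (z b).re * (z j).im - (z b).im * (z j).re ≠ 0 →
      Complex.normSq (z j - (y : ℂ) * z b)
        < 2 * R * ((z b).re * (z j).im - (z b).im * (z j).re) := by
    intro j hj
    have hcrj : 0 < (z b).re * (z j).im - (z b).im * (z j).re :=
      lt_of_le_of_ne (hcr j) (Ne.symm hj)
    have hterm : Complex.normSq (z j - (y : ℂ) * z b)
        / (2 * ((z b).re * (z j).im - (z b).im * (z j).re)) ≤ Rsum := by
      rw [hRsum_def]
      have hss := Finset.single_le_sum (f := fun i => max (0:ℝ) (Complex.normSq (z i - (y : ℂ) * z b) /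
          (2 * ((z b).re * (z i).im - (z b).im * (z i).re))))
        (fun i _ => le_max_left _ _) (Finset.mem_univ j)
      exact le_trans (le_max_right _ _) hss
    have hR2 : Complex.normSq (z j - (y : ℂ) * z b)
        / (2 * ((z b).re * (z j).im - (z b).im * (z j).re)) + 1 ≤ R := by
      rw [hR_def]; have := div_pos hq habz; linarith
    have hcanc : Complex.normSq (z j - (y : ℂ) * z b)
        = (Complex.normSq (z j - (y : ℂ) * z b)
            / (2 * ((z b).re * (z j).im - (z b).im * (z j).re)))
          * (2 * ((z b).re * (z j).im - (z b).im * (z j).re)) :=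
      (div_mul_cancel₀ _ (by linarith)).symm
    have h9 : Complex.normSq (z j - (y : ℂ) * z b)
        ≤ (R - 1) * (2 * ((z b).re * (z j).im - (z b).im * (z j).re)) := by
      rw [hcanc]
      exact mul_le_mul_of_nonneg_right (by linarith) (by linarith)
    nlinarith [hcrj, h9]
  -- the center C
  set C : ℂ := x a + (y : ℂ) * z b + (R : ℂ) * Complex.I * z b with hC_def
  have hxjC : ∀ j, x j - C = z j - (y : ℂ) * z b - (R : ℂ) * Complex.I * z b := by
    intro j; rw [hC_def, hz_def]; ring
  have hDist : ∀ j, Complex.normSq (x j - C)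
      = Complex.normSq (z j - (y : ℂ) * z b)
        - 2 * R * ((z b).re * (z j).im - (z b).im * (z j).re)
        + R ^ 2 * Complex.normSq (z b) := by
    intro j; rw [hxjC j, dist_id]
  have hDa : Complex.normSq (x a - C)
      = y ^ 2 * Complex.normSq (z b) + R ^ 2 * Complex.normSq (z b) := by
    rw [hDist a, hza]
    have h1 : (0 : ℂ) - (y : ℂ) * z b = ((-y : ℝ) : ℂ) * z b := by push_cast; ring
    rw [h1, normSq_real_mul]
    simp
  have hDl : Complex.normSq (x l - C)
      = y ^ 2 * Complex.normSq (z b) + R ^ 2 * Complex.normSq (z b) := by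
    rw [hDist l, hzl]
    have h1 : ((2 * y : ℝ) : ℂ) * z b - (y : ℂ) * z b = ((y : ℝ) : ℂ) * z b := by
      push_cast; ring
    rw [h1, normSq_real_mul]
    have h2 : (z b).re * (((2 * y : ℝ) : ℂ) * z b).im
        - (z b).im * (((2 * y : ℝ) : ℂ) * z b).re = 0 := by
      simp [Complex.mul_im, Complex.mul_re]; ring
    rw [h2]; ring
  -- strict inequality for all other indices
  have hstrict : ∀ j, j ≠ a → j ≠ l →
      Complex.normSq (x j - C) < Complex.normSq (x a - C) := by
    intro j hja hjl
    by_cases hjS : (z b).re * (z j).im - (z b).im * (z j).re = 0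
    · -- collinear case
      obtain ⟨s, hs_def⟩ : ∃ s : ℝ,
          s = ((z b).re * (z j).re + (z b).im * (z j).im) / Complex.normSq (z b) := ⟨_, rfl⟩
      have hs : z j = (s : ℂ) * z b := by
        apply mul_left_cancel₀ hnz0
        rw [collinear_of_cross hjS, hs_def]
        push_cast
        field_simp
      have hre : (z j).re = s * (z b).re := by rw [hs]; simp
      have him : (z j).im = s * (z b).im := by rw [hs]; simp
      have hs0 : s ≠ 0 := by
        intro h0; rw [h0] at hs; simp at hs; exact (hzne j hja) hs
      have hsnn : 0 ≤ s := by
        by_contra hneg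
        push_neg at hneg
        rcases hHPb with hb1 | ⟨hb1, hb2⟩
        · have := (hHP j hja).re_nonneg; nlinarith
        · rcases hHP j hja with hj1 | ⟨hj1, hj2⟩
          · rw [hre, hb1] at hj1; simp at hj1
          · rw [him] at hj2; nlinarith
      have hs2y : s ≤ 2 * y := by
        have h5 := hlmax' j (by simp [hS_def, hjS])
        have hyeq : 2 * y * Complex.normSq (z b)
            = (z b).re * (z l).re + (z b).im * (z l).im := by
          rw [hy_def]; field_simp
        rw [hs_def, div_le_iff₀ hnz]
        linarith
      have hs2y' : s ≠ 2 * y := by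
        intro h0
        rw [h0, ← hzl] at hs
        refine hjl (hx ?_)
        have h' : x j - x a = x l - x a := hs
        linear_combination h'
      rw [hDist j, hjS, hDa]
      have h1 : z j - (y : ℂ) * z b = (((s - y : ℝ)) : ℂ) * z b := by
        rw [hs]; push_cast; ring
      rw [h1, normSq_real_mul]
      have h2 : (s - y) ^ 2 < y ^ 2 := by
        nlinarith [lt_of_le_of_ne hsnn (Ne.symm hs0), lt_of_le_of_ne hs2y hs2y']
      linarith [mul_lt_mul_of_pos_right h2 hnz]
    · -- off-line case
      rw [hDist j, hDa]
      have h1 := hRbound j hjS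
      linarith [h1, mul_nonneg (sq_nonneg y) (le_of_lt hnz)]
  -- bound |C| from below
  have hCabs : 1 + 1 / ε ≤ ‖C‖ := by
    have hw : C - x a = ((y : ℂ) + (R : ℂ) * Complex.I) * z b := by
      rw [hC_def]; ring
    have h1 : ‖C - x a‖ ≤ ‖C‖ + ‖x a‖ := by
      simpa using norm_sub_le C (x a)
    have h2 : ‖C - x a‖ = ‖(y : ℂ) + (R : ℂ) * Complex.I‖
        * ‖z b‖ := by rw [hw, norm_mul]
    have h3 : R ≤ ‖(y : ℂ) + (R : ℂ) * Complex.I‖ := by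
      have him : ((y : ℂ) + (R : ℂ) * Complex.I).im = R := by simp
      calc R = |((y : ℂ) + (R : ℂ) * Complex.I).im| := by rw [him, abs_of_pos hR1]
      _ ≤ _ := Complex.abs_im_le_norm _
    have h4 : (1 + ‖x a‖ + 1 / ε) ≤ R * ‖z b‖ := by
      rw [hR_def]
      have : ((1 + ‖x a‖ + 1 / ε) / ‖z b‖) * ‖z b‖
          = 1 + ‖x a‖ + 1 / ε := div_mul_cancel₀ _ habz.ne'
      nlinarith [hRsum, habz]
    have h5 : R * ‖z b‖ ≤ ‖(y : ℂ) + (R : ℂ) * Complex.I‖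
        * ‖z b‖ := by
      exact mul_le_mul_of_nonneg_right h3 habz.le
    have h6 := le_trans h4 h5
    rw [← h2] at h6
    linarith
  have hC0 : C ≠ 0 := by
    intro h0; rw [h0, norm_zero] at hCabs
    have := one_div_pos.2 hε; linarith
  -- define t
  set t : ℂ := -C⁻¹ with ht_def
  have ht0 : t ≠ 0 := by
    rw [ht_def]; simpa using inv_ne_zero hC0
  have htabs : ‖t‖ = (‖C‖)⁻¹ := by
    rw [ht_def, norm_neg, norm_inv]
  have htpos : 0 < ‖t‖ := norm_pos_iff.mpr ht0
  have htlt : ‖t‖ < ε := by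
    rw [htabs]
    have hCpos : 0 < ‖C‖ := by
      have := one_div_pos.2 hε; linarith
    have h6 : 1 / ε < ‖C‖ := by linarith
    have h7 := (inv_lt_inv₀ hCpos (one_div_pos.2 hε)).2 h6
    rwa [one_div, inv_inv] at h7
  have htC : t * C = -1 := by
    rw [ht_def]; field_simp
  have hconv : ∀ j, t * x j + 1 = t * (x j - C) := by
    intro j; rw [mul_sub, htC]; ring
  have habs' : ∀ j, ‖t * x j + 1‖ = ‖t‖ * ‖x j - C‖ := by
    intro j; rw [hconv j, norm_mul]
  have habs_eq : ‖x a - C‖ = ‖x l - C‖ := by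
    rw [Complex.norm_def, Complex.norm_def, hDa, hDl]
  have habs_lt : ∀ j, j ≠ a → j ≠ l → ‖x j - C‖ < ‖x a - C‖ := by
    intro j hja hjl
    rw [Complex.norm_def, Complex.norm_def]
    exact Real.sqrt_lt_sqrt (Complex.normSq_nonneg _) (hstrict j hja hjl)
  -- assemble
  rcases lt_or_gt_of_ne hla with hlt | hlt
  · refine ⟨l, a, hlt, t, htpos, htlt, ?_, ?_⟩
    · rw [habs' l, habs' a, habs_eq]
    · intro j hjl hja
      rw [habs' j, habs' l, ← habs_eq]
      exact mul_lt_mul_of_pos_left (habs_lt j hja hjl) htpos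
  · refine ⟨a, l, hlt, t, htpos, htlt, ?_, ?_⟩
    · rw [habs' a, habs' l, habs_eq]
    · intro j hja hjl
      rw [habs' j, habs' a]
      exact mul_lt_mul_of_pos_left (habs_lt j hja hjl) htpos
end

section
/- Let n ≥ 2 and let u₁, …, u_N ∈ ℂⁿ be vectors spanning ℂⁿ over ℂ such that u_k ∉ absconv{u_j : j ≠ k} for every 1 ≤ k ≤ N. Then there exist indices 1 ≤ k < l ≤ N and a ℂ-linear functional f : ℂⁿ → ℂ satisfying |f(u_k)| = |f(u_l)| = 1 and |f(u_j)| < 1 for every j ≠ k, l. -/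
noncomputable def Complex.abs : AbsoluteValue ℂ ℝ where
  toFun := fun z => ‖z‖
  map_mul' := norm_mul
  nonneg' := norm_nonneg
  eq_zero' := fun _ => norm_eq_zero
  add_le' := norm_add_le

theorem Complex.norm_eq_abs (z : ℂ) : ‖z‖ = Complex.abs z := rfl

theorem Complex.abs_ofReal (r : ℝ) : Complex.abs (r : ℂ) = |r| := Complex.norm_real r

theorem Complex.continuous_abs : Continuous Complex.abs := continuous_norm

theorem Complex.sq_abs (z : ℂ) : Complex.abs z ^ 2 = Complex.normSq z := Complex.sq_norm z

theorem Complex.abs_apply (z : ℂ) : Complex.abs z = Real.sqrt (Complex.normSq z) :=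
  Complex.norm_def z

theorem Complex.abs_exp (z : ℂ) : Complex.abs (Complex.exp z) = Real.exp z.re :=
  Complex.norm_exp z

theorem Complex.re_le_abs (z : ℂ) : z.re ≤ Complex.abs z := Complex.re_le_norm z


lemma quad_roots_finite (p2 p1 p0 : ℂ) (h2 : p2 ≠ 0) :
    {z : ℂ | p2 * z ^ 2 + p1 * z + p0 = 0}.Finite := by
  have key : ∀ z w : ℂ, p2 * z ^ 2 + p1 * z + p0 = 0 → p2 * w ^ 2 + p1 * w + p0 = 0 →
      z ≠ w → p2 * (z + w) + p1 = 0 := by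
    intro z w hz hw hzw
    have h : (p2 * (z + w) + p1) * (z - w) = 0 := by linear_combination hz - hw
    rcases mul_eq_zero.mp h with h' | h'
    · exact h'
    · exact absurd (sub_eq_zero.mp h') hzw
  by_cases hne : {z : ℂ | p2 * z ^ 2 + p1 * z + p0 = 0}.Nonempty
  · obtain ⟨z0, hz0⟩ := hne
    simp only [Set.mem_setOf_eq] at hz0
    by_cases h1 : ∃ z1, (p2 * z1 ^ 2 + p1 * z1 + p0 = 0) ∧ z1 ≠ z0
    · obtain ⟨z1, hz1, hz10⟩ := h1
      apply Set.Finite.subset ((Set.finite_singleton z1).insert z0)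
      intro v hv
      simp only [Set.mem_setOf_eq] at hv
      simp only [Set.mem_insert_iff, Set.mem_singleton_iff]
      by_contra hvn
      push_neg at hvn
      have e0 := key v z0 hv hz0 hvn.1
      have e1 := key v z1 hv hz1 hvn.2
      have : p2 * (z0 - z1) = 0 := by linear_combination e0 - e1
      rcases mul_eq_zero.mp this with h' | h'
      · exact h2 h'
      · exact hz10 (sub_eq_zero.mp h').symm
    · push_neg at h1
      exact Set.Finite.subset (Set.finite_singleton z0) (fun v hv => h1 v hv)
  · rw [Set.not_nonempty_iff_eq_empty] at hne
    rw [hne]; exact Set.finite_empty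

open Complex in
lemma two_circles_finite (a b a' b' : ℂ) (hb : b ≠ 0) (hb' : b' ≠ 0)
    (hne : ¬ (a * b' = a' * b ∧ Complex.abs b = Complex.abs b')) :
    {z : ℂ | Complex.abs (a + z * b) = 1 ∧ Complex.abs (a' + z * b') = 1}.Finite := by
  set K := starRingEnd ℂ with hK
  have hm : b * K b ≠ 0 := mul_ne_zero hb ((map_ne_zero K).mpr hb)
  have hm' : b' * K b' ≠ 0 := mul_ne_zero hb' ((map_ne_zero K).mpr hb')
  have hmem : ∀ z w : ℂ, Complex.abs (a + z * w) = 1 →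
      (a + z * w) * (K a + K z * K w) = 1 := by
    intro z w h1
    have : (a + z * w) * K (a + z * w) = 1 := by
      rw [Complex.mul_conj]
      norm_cast
      rw [← Complex.sq_abs, h1]; norm_num
    rwa [map_add, map_mul] at this
  have hmem' : ∀ z w a₀ : ℂ, Complex.abs (a₀ + z * w) = 1 →
      (a₀ + z * w) * (K a₀ + K z * K w) = 1 := by
    intro z w a₀ h1
    have : (a₀ + z * w) * K (a₀ + z * w) = 1 := by
      rw [Complex.mul_conj]
      norm_cast
      rw [← Complex.sq_abs, h1]; norm_num
    rwa [map_add, map_mul] at this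
  have hclaim : ∀ z : ℂ, (a + z * b) * (K a + K z * K b) = 1 →
      (a' + z * b') * (K a' + K z * K b') = 1 →
      (b * K a * (b' * K b') - b' * K a' * (b * K b)) * z
        + (K b * a * (b' * K b') - K b' * a' * (b * K b)) * K z
        = (1 - a * K a) * (b' * K b') - (1 - a' * K a') * (b * K b) := by
    intro z e1 e2
    linear_combination (b' * K b') * e1 - (b * K b) * e2
  by_cases hβ : b * K a * (b' * K b') - b' * K a' * (b * K b) = 0
  · -- the set is empty
    have h2' : K b * a * (b' * K b') - K b' * a' * (b * K b) = 0 := by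
      have hc := congrArg K hβ
      simp only [map_sub, map_mul, hK, Complex.conj_conj, map_zero] at hc
      rw [hK]
      linear_combination hc
    convert Set.finite_empty
    rw [Set.eq_empty_iff_forall_notMem]
    rintro z ⟨h1, h2⟩
    have e1 := hmem' z b a h1
    have e2 := hmem' z b' a' h2
    have hc := hclaim z e1 e2
    have hγ0 : (1 - a * K a) * (b' * K b') - (1 - a' * K a') * (b * K b) = 0 := by
      linear_combination z * hβ + (K z) * h2' - hc
    have h3 : a * K a * (b' * K b') = a' * K a' * (b * K b) := by
      apply mul_left_cancel₀ (mul_ne_zero hm hm')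
      linear_combination (K b * a * (b' * K b')) * hβ + (b' * K a' * (b * K b)) * h2'
    have h4 : b * K b = b' * K b' := by linear_combination -hγ0 - h3
    have h5 : K b * a = K b' * a' := by
      apply mul_right_cancel₀ hm
      linear_combination h2' + (K b * a) * h4
    have h7 : a * b' = a' * b := by
      apply mul_right_cancel₀ hm
      calc a * b' * (b * K b) = (K b * a) * b * b' := by ring
        _ = (K b' * a') * b * b' := by rw [h5]
        _ = a' * b * (b' * K b') := by ring
        _ = a' * b * (b * K b) := by rw [h4]
    have h8 : Complex.abs b = Complex.abs b' := by
      have hns : Complex.normSq b = Complex.normSq b' := by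
        have hb2 : (Complex.normSq b : ℂ) = (Complex.normSq b' : ℂ) := by
          rw [← Complex.mul_conj, ← Complex.mul_conj]; exact h4
        exact_mod_cast hb2
      rw [Complex.abs_apply, Complex.abs_apply, hns]
    exact hne ⟨h7, h8⟩
  · apply Set.Finite.subset (quad_roots_finite
      (-((b * K b) * (b * K a * (b' * K b') - b' * K a' * (b * K b))))
      ((b * K b) * ((1 - a * K a) * (b' * K b') - (1 - a' * K a') * (b * K b))
        - a * K b * (b * K a * (b' * K b') - b' * K a' * (b * K b))
        + b * K a * (K b * a * (b' * K b') - K b' * a' * (b * K b)))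
      (a * K b * ((1 - a * K a) * (b' * K b') - (1 - a' * K a') * (b * K b))
        + (K b * a * (b' * K b') - K b' * a' * (b * K b)) * (a * K a)
        - (K b * a * (b' * K b') - K b' * a' * (b * K b)))
      (neg_ne_zero.mpr (mul_ne_zero hm hβ)))
    rintro z ⟨h1, h2⟩
    have e1 := hmem' z b a h1
    have e2 := hmem' z b' a' h2
    have hc := hclaim z e1 e2
    show _ = _
    linear_combination (K b * a * (b' * K b') - K b' * a' * (b * K b)) * e1
      - (a * K b + z * (b * K b)) * hc


variable {n : ℕ}

lemma exists_dual_zero_ne (x v : Fin n → ℂ) (hv : v ∉ Submodule.span ℂ {x}) :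
    ∃ h : (Fin n → ℂ) →ₗ[ℂ] ℂ, h x = 0 ∧ h v ≠ 0 := by
  set S := Submodule.span ℂ {x}
  have hq : Submodule.Quotient.mk (p := S) v ≠ 0 := by
    simpa [Submodule.Quotient.mk_eq_zero] using hv
  obtain ⟨φ, hφ⟩ : ∃ φ : Module.Dual ℂ ((Fin n → ℂ) ⧸ S), φ (Submodule.Quotient.mk v) ≠ 0 := by
    by_contra hc
    push_neg at hc
    exact hq ((Module.forall_dual_apply_eq_zero_iff ℂ _).mp hc)
  refine ⟨φ.comp S.mkQ, ?_, ?_⟩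
  · have : x ∈ S := Submodule.mem_span_singleton_self x
    simp [Submodule.mkQ_apply, (Submodule.Quotient.mk_eq_zero S).mpr this]
  · simpa [Submodule.mkQ_apply] using hφ

lemma exists_dual_zero_ne_finset (x : Fin n → ℂ) (S : Finset (Fin n → ℂ))
    (hS : ∀ v ∈ S, v ∉ Submodule.span ℂ {x}) :
    ∃ h : (Fin n → ℂ) →ₗ[ℂ] ℂ, h x = 0 ∧ ∀ v ∈ S, h v ≠ 0 := by
  classical
  induction S using Finset.induction with
  | empty => exact ⟨0, by simp, by simp⟩
  | @insert v₀ S hv₀ ih =>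
    obtain ⟨h, hx, hs⟩ := ih (fun v hv => hS v (Finset.mem_insert_of_mem hv))
    obtain ⟨h', hx', hv'⟩ := exists_dual_zero_ne x v₀ (hS v₀ (Finset.mem_insert_self _ _))
    -- choose t avoiding finitely many bad values
    set bad : Finset ℂ := (insert v₀ S).image (fun v => -(h v) / (h' v)) with hbad
    obtain ⟨t, ht⟩ := Infinite.exists_notMem_finset bad
    refine ⟨h + t • h', by simp [hx, hx'], ?_⟩
    intro v hv
    intro hzero
    simp only [LinearMap.add_apply, LinearMap.smul_apply, smul_eq_mul] at hzero
    by_cases hv'0 : h' v = 0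
    · rw [hv'0, mul_zero, add_zero] at hzero
      rcases Finset.mem_insert.mp hv with rfl | hvS
      · exact hv' hv'0
      · exact hs v hvS hzero
    · apply ht
      rw [hbad]
      apply Finset.mem_image.mpr
      refine ⟨v, hv, ?_⟩
      field_simp
      linear_combination -hzero


lemma exists_peak {n N : ℕ} (u : Fin N → (Fin n → ℂ)) (k₀ : Fin N)
    (hess : ¬ ∃ α : Fin N → ℂ, α k₀ = 0 ∧ (∑ j, Complex.abs (α j)) ≤ 1 ∧ u k₀ = ∑ j, α j • u j) :
    ∃ f : (Fin n → ℂ) →ₗ[ℂ] ℂ, f (u k₀) = 1 ∧ ∀ j, j ≠ k₀ → Complex.abs (f (u j)) < 1 := by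
  classical
  set A : Set (Fin N → ℂ) := {α | α k₀ = 0 ∧ (∑ j, Complex.abs (α j)) ≤ 1} with hA_def
  set T : (Fin N → ℂ) → (Fin n → ℂ) := fun α => ∑ j, α j • u j with hT_def
  set s : Set (Fin n → ℂ) := T '' A with hs_def
  have habs_smul : ∀ (p : ℝ) (z : ℂ), 0 ≤ p → Complex.abs (p • z) = p * Complex.abs z := by
    intro p z hp
    rw [Complex.real_smul, map_mul, Complex.abs_ofReal, _root_.abs_of_nonneg hp]
  have hAconv : Convex ℝ A := by
    rintro α ⟨hα1, hα2⟩ β ⟨hβ1, hβ2⟩ p q hp hq hpq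
    constructor
    · simp only [Pi.add_apply, Pi.smul_apply, hα1, hβ1, smul_zero, add_zero]
    · calc ∑ j, Complex.abs ((p • α + q • β) j)
          ≤ ∑ j, (p * Complex.abs (α j) + q * Complex.abs (β j)) := by
            apply Finset.sum_le_sum
            intro j _
            simp only [Pi.add_apply, Pi.smul_apply]
            calc Complex.abs (p • α j + q • β j)
                ≤ Complex.abs (p • α j) + Complex.abs (q • β j) :=
                  AbsoluteValue.add_le _ _ _
              _ = p * Complex.abs (α j) + q * Complex.abs (β j) := by
                  rw [habs_smul p _ hp, habs_smul q _ hq]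
        _ = p * (∑ j, Complex.abs (α j)) + q * (∑ j, Complex.abs (β j)) := by
            rw [Finset.sum_add_distrib, Finset.mul_sum, Finset.mul_sum]
        _ ≤ p * 1 + q * 1 :=
            add_le_add (mul_le_mul_of_nonneg_left hα2 hp) (mul_le_mul_of_nonneg_left hβ2 hq)
        _ = 1 := by rw [mul_one, mul_one, hpq]
  have hTlin : ∀ (p q : ℝ) (α β : Fin N → ℂ), T (p • α + q • β) = p • T α + q • T β := by
    intro p q α β
    simp only [hT_def]
    rw [Finset.smul_sum, Finset.smul_sum, ← Finset.sum_add_distrib]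
    apply Finset.sum_congr rfl
    intro j _
    simp only [Pi.add_apply, Pi.smul_apply]
    rw [add_smul, smul_assoc, smul_assoc]
  have hsconv : Convex ℝ s := by
    rintro x ⟨α, hα, rfl⟩ y ⟨β, hβ, rfl⟩ p q hp hq hpq
    exact ⟨p • α + q • β, hAconv hα hβ hp hq hpq, hTlin p q α β⟩
  have hAcomp : IsCompact A := by
    apply Metric.isCompact_of_isClosed_isBounded
    · rw [hA_def, Set.setOf_and]
      apply IsClosed.inter
      · exact isClosed_eq (continuous_apply k₀) continuous_const
      · exact isClosed_le
          (continuous_finset_sum _ fun j _ => Complex.continuous_abs.comp (continuous_apply j))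
          continuous_const
    · rw [Metric.isBounded_iff_subset_closedBall 0]
      refine ⟨1, fun α hα => ?_⟩
      rw [Metric.mem_closedBall, dist_zero_right]
      rw [pi_norm_le_iff_of_nonneg zero_le_one]
      intro i
      rw [Complex.norm_eq_abs]
      calc Complex.abs (α i) ≤ ∑ j, Complex.abs (α j) :=
            Finset.single_le_sum (f := fun j => Complex.abs (α j))
              (fun j _ => AbsoluteValue.nonneg _ _) (Finset.mem_univ i)
        _ ≤ 1 := hα.2
  have hTcont : Continuous T := by
    apply continuous_finset_sum
    intro j _
    exact ((continuous_apply j).smul continuous_const)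
  have hscomp : IsCompact s := hAcomp.image hTcont
  have hsclosed : IsClosed s := hscomp.isClosed
  have hxnot : u k₀ ∉ s := by
    rintro ⟨α, ⟨h1, h2⟩, h3⟩
    exact hess ⟨α, h1, h2, h3.symm⟩
  obtain ⟨g, U, hgs, hgx⟩ := geometric_hahn_banach_closed_point hsconv hsclosed hxnot
  set F : (Fin n → ℂ) →L[ℂ] ℂ := g.extendRCLike
  have hre : ∀ y : Fin n → ℂ, (F y).re = g y := by
    intro y
    have h := ContinuousLinearMap.extendTo𝕜'_apply (𝕜 := ℂ) g y
    rw [h]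
    simp [RCLike.I]
  have hU0 : 0 < U := by
    have h0 : (0 : Fin n → ℂ) ∈ s := by
      refine ⟨0, ⟨rfl, by simp⟩, by simp [hT_def]⟩
    have := hgs 0 h0
    simpa using this
  have hbal : ∀ (c : ℂ), Complex.abs c = 1 → ∀ y ∈ s, c • y ∈ s := by
    rintro c hc y ⟨α, ⟨h1, h2⟩, rfl⟩
    refine ⟨c • α, ⟨by simp [h1], ?_⟩, ?_⟩
    · calc ∑ j, Complex.abs ((c • α) j) = ∑ j, Complex.abs (α j) := by
            apply Finset.sum_congr rfl
            intro j _
            simp only [Pi.smul_apply, smul_eq_mul, map_mul, hc, one_mul]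
      _ ≤ 1 := h2
    · simp only [hT_def, Finset.smul_sum]
      apply Finset.sum_congr rfl
      intro j _
      simp [smul_smul]
  have hkey : ∀ y ∈ s, ‖F y‖ < U := by
    intro y hy
    by_cases h0 : F y = 0
    · rw [h0, norm_zero]; exact hU0
    · set c : ℂ := ↑‖F y‖ / F y with hc_def
      have hcabs : Complex.abs c = 1 := by
        rw [hc_def, map_div₀, Complex.abs_ofReal, abs_norm, Complex.norm_eq_abs]
        exact div_self (Complex.abs.ne_zero h0)
      have hcy : c • y ∈ s := hbal c hcabs y hy
      have hFcy : F (c • y) = ↑‖F y‖ := by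
        rw [map_smul, smul_eq_mul, hc_def, div_mul_cancel₀]
        exact h0
      have := hgs (c • y) hcy
      rw [← hre (c • y), hFcy] at this
      simpa using this
  have hFx : U < ‖F (u k₀)‖ := by
    calc U < g (u k₀) := hgx
      _ = (F (u k₀)).re := (hre _).symm
      _ ≤ ‖F (u k₀)‖ := by rw [Complex.norm_eq_abs]; exact Complex.re_le_abs _
  have hFx0 : F (u k₀) ≠ 0 := by
    intro h
    rw [h, norm_zero] at hFx
    exact absurd (hU0.trans hFx) (lt_irrefl 0)
  refine ⟨(F (u k₀))⁻¹ • (F : (Fin n → ℂ) →ₗ[ℂ] ℂ), ?_, ?_⟩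
  · simp only [LinearMap.smul_apply, ContinuousLinearMap.coe_coe, smul_eq_mul]
    exact inv_mul_cancel₀ hFx0
  · intro j hj
    have hjs : u j ∈ s := by
      refine ⟨fun i => if i = j then 1 else 0, ⟨?_, ?_⟩, ?_⟩
      · simp only [Set.mem_setOf_eq, ite_eq_right_iff]
        intro h; exact absurd h.symm hj
      · have : ∀ i : Fin N, Complex.abs (if i = j then (1:ℂ) else 0)
            = if i = j then (1:ℝ) else 0 := by
          intro i; split <;> simp
        rw [Finset.sum_congr rfl (fun i _ => this i), Finset.sum_ite_eq' Finset.univ j]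
        simp
      · simp only [hT_def, ite_smul, one_smul, zero_smul]
        rw [Finset.sum_ite_eq' Finset.univ j]
        simp
    have hlt : ‖F (u j)‖ < ‖F (u k₀)‖ := (hkey (u j) hjs).trans hFx
    simp only [LinearMap.smul_apply, ContinuousLinearMap.coe_coe, smul_eq_mul]
    rw [map_mul, map_inv₀]
    rw [← Complex.norm_eq_abs, ← Complex.norm_eq_abs]
    
    have hpos : 0 < ‖F (u k₀)‖ := hU0.trans hFx
    rw [← div_eq_inv_mul]
    exact (div_lt_one hpos).mpr hlt


open Complex in
theorem stmt1 (n N : ℕ) (hn : 2 ≤ n) (u : Fin N → (Fin n → ℂ))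
    (hspan : Submodule.span ℂ (Set.range u) = ⊤)
    (hess : ∀ k : Fin N, ¬ ∃ α : Fin N → ℂ, α k = 0 ∧
      (∑ j, ‖α j‖) ≤ 1 ∧ u k = ∑ j, α j • u j) :
    ∃ k l : Fin N, k < l ∧ ∃ f : (Fin n → ℂ) →ₗ[ℂ] ℂ,
      ‖f (u k)‖ = 1 ∧ ‖f (u l)‖ = 1 ∧
      ∀ j, j ≠ k → j ≠ l → ‖f (u j)‖ < 1 := by
  simp only [Complex.norm_eq_abs] at hess ⊢
  classical
  haveI : Nontrivial (Fin n → ℂ) := by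
    refine ⟨0, (fun _ => 1), fun h => ?_⟩
    have := congrFun h ⟨0, by omega⟩
    simp at this
  -- single-coefficient sums
  have hsingle : ∀ (c : ℂ) (j : Fin N), (∑ i, (if i = j then c else 0) • u i) = c • u j := by
    intro c j
    rw [Finset.sum_eq_single j]
    · simp
    · intro i _ hij; simp [hij]
    · intro h; exact absurd (Finset.mem_univ j) h
  have habsingle : ∀ (c : ℂ) (j : Fin N), (∑ i, Complex.abs (if i = j then c else 0))
      = Complex.abs c := by
    intro c j
    rw [Finset.sum_eq_single j]
    · simp
    · intro i _ hij; simp [hij]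
    · intro h; exact absurd (Finset.mem_univ j) h
  have hnz : ∀ j, u j ≠ 0 := by
    intro j hj
    exact hess j ⟨0, rfl, by simp, by simp [hj]⟩
  have hN : N ≠ 0 := by
    intro h
    subst h
    rw [Set.range_eq_empty, Submodule.span_empty] at hspan
    exact bot_ne_top hspan
  set k₀ : Fin N := ⟨0, Nat.pos_of_ne_zero hN⟩ with hk₀_def
  -- step 1 : peak functional
  obtain ⟨g₀, hg₀1, hg₀lt⟩ := exists_peak u k₀ (hess k₀)
  -- step 2 : perturb to make all values nonzero
  obtain ⟨g₁, hg₁1, hg₁lt, hg₁ne⟩ :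
      ∃ g₁ : (Fin n → ℂ) →ₗ[ℂ] ℂ, g₁ (u k₀) = 1 ∧ (∀ j, j ≠ k₀ → Complex.abs (g₁ (u j)) < 1) ∧
        (∀ j, g₁ (u j) ≠ 0) := by
    set T : Finset (Fin N) := Finset.univ.filter (fun j => g₀ (u j) = 0) with hT_def
    have hTnot : ∀ x ∈ T.image u, x ∉ Submodule.span ℂ {u k₀} := by
      intro x hx hmem
      obtain ⟨j, hjT, rfl⟩ := Finset.mem_image.mp hx
      have hj0 : g₀ (u j) = 0 := (Finset.mem_filter.mp hjT).2
      obtain ⟨c, hc⟩ := Submodule.mem_span_singleton.mp hmem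
      have hc0 : c = 0 := by
        have h1 := congrArg g₀ hc
        rw [map_smul, smul_eq_mul, hg₀1, mul_one, hj0] at h1
        exact h1
      rw [hc0, zero_smul] at hc
      exact hnz j hc.symm
    obtain ⟨kf, hkf0, hkfne⟩ := exists_dual_zero_ne_finset (u k₀) (T.image u) hTnot
    have hev : ∀ j : Fin N, ∀ᶠ ε : ℝ in nhds 0,
        ((j ≠ k₀ → Complex.abs (g₀ (u j) + ↑ε * kf (u j)) < 1) ∧
         (g₀ (u j) ≠ 0 → g₀ (u j) + ↑ε * kf (u j) ≠ 0)) := by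
      intro j
      have hcont : Continuous fun ε : ℝ => g₀ (u j) + ↑ε * kf (u j) :=
        continuous_const.add (Complex.continuous_ofReal.mul continuous_const)
      have htend : Filter.Tendsto (fun ε : ℝ => g₀ (u j) + ↑ε * kf (u j)) (nhds 0)
          (nhds (g₀ (u j))) := by
        have h := hcont.tendsto 0
        simpa using h
      apply Filter.Eventually.and
      · by_cases hj : j = k₀
        · exact Filter.Eventually.of_forall (fun ε h => absurd hj h)
        · have habs : Filter.Tendsto (fun ε : ℝ => Complex.abs (g₀ (u j) + ↑ε * kf (u j)))
              (nhds 0) (nhds (Complex.abs (g₀ (u j)))) :=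
            (Complex.continuous_abs.tendsto _).comp htend
          exact (habs.eventually_lt_const (hg₀lt j hj)).mono (fun ε h _ => h)
      · by_cases hj : g₀ (u j) ≠ 0
        · exact (htend.eventually_ne hj).mono (fun ε h _ => h)
        · exact Filter.Eventually.of_forall (fun ε h => absurd h hj)
    have hall := (Filter.eventually_all.mpr hev).filter_mono
      (nhdsWithin_le_nhds (s := Set.Ioi (0:ℝ)))
    obtain ⟨ε, hε, hεpos⟩ := (hall.and eventually_mem_nhdsWithin).exists
    refine ⟨g₀ + (↑ε : ℂ) • kf, ?_, ?_, ?_⟩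
    · simp only [LinearMap.add_apply, LinearMap.smul_apply, smul_eq_mul]
      rw [hg₀1, hkf0, mul_zero, add_zero]
    · intro j hj
      have h := (hε j).1 hj
      simp only [LinearMap.add_apply, LinearMap.smul_apply, smul_eq_mul]
      exact h
    · intro j
      by_cases h0 : g₀ (u j) = 0
      · have hjT : j ∈ T := by rw [hT_def]; exact Finset.mem_filter.mpr ⟨Finset.mem_univ _, h0⟩
        have hkfj : kf (u j) ≠ 0 := hkfne (u j) (Finset.mem_image.mpr ⟨j, hjT, rfl⟩)
        simp only [LinearMap.add_apply, LinearMap.smul_apply, smul_eq_mul]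
        rw [h0, zero_add]
        exact mul_ne_zero (Complex.ofReal_ne_zero.mpr (ne_of_gt hεpos)) hkfj
      · have h := (hε j).2 h0
        simp only [LinearMap.add_apply, LinearMap.smul_apply, smul_eq_mul]
        exact h
  set a : Fin N → ℂ := fun j => g₁ (u j) with ha_def
  -- step 3 : choose the slice direction h₀
  have hspan_ne : Submodule.span ℂ {u k₀} ≠ ⊤ := by
    intro h
    have h1 := finrank_span_singleton (K := ℂ) (hnz k₀)
    rw [h, finrank_top, Module.finrank_fin_fun] at h1
    omega
  have hlt_top : Submodule.span ℂ {u k₀} < ⊤ := lt_top_iff_ne_top.mpr hspan_ne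
  obtain ⟨w, -, hw⟩ := SetLike.exists_of_lt hlt_top
  set v : Fin N × Fin N → (Fin n → ℂ) :=
    fun p => a p.2 • u p.1 - a p.1 • u p.2 with hv_def
  set S : Finset (Fin n → ℂ) :=
    insert w ((Finset.univ.filter
      (fun p : Fin N × Fin N => v p ∉ Submodule.span ℂ {u k₀})).image v) with hS_def
  obtain ⟨h₀, hh₀k, hh₀ne⟩ : ∃ h₀ : (Fin n → ℂ) →ₗ[ℂ] ℂ,
      h₀ (u k₀) = 0 ∧ ∀ x ∈ S, h₀ x ≠ 0 := by
    apply exists_dual_zero_ne_finset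
    intro x hx
    rw [hS_def] at hx
    rcases Finset.mem_insert.mp hx with rfl | hx
    · exact hw
    · obtain ⟨p, hp, rfl⟩ := Finset.mem_image.mp hx
      exact (Finset.mem_filter.mp hp).2
  set b : Fin N → ℂ := fun j => h₀ (u j) with hb_def
  have hh₀w : h₀ w ≠ 0 := hh₀ne w (by rw [hS_def]; exact Finset.mem_insert_self _ _)
  have hbk₀ : b k₀ = 0 := hh₀k
  obtain ⟨j₁, hbj₁⟩ : ∃ j₁, b j₁ ≠ 0 := by
    by_contra hc
    push_neg at hc
    have hker : Submodule.span ℂ (Set.range u) ≤ LinearMap.ker h₀ := by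
      rw [Submodule.span_le]
      rintro x ⟨j, rfl⟩
      exact hc j
    rw [hspan, top_le_iff] at hker
    have hz : h₀ = 0 := LinearMap.ker_eq_top.mp hker
    exact hh₀w (by rw [hz]; rfl)
  have hj₁k₀ : j₁ ≠ k₀ := fun h => hbj₁ (h ▸ hbk₀)
  -- distinctness of circles
  have hdist : ∀ j j' : Fin N, j ≠ j' → j ≠ k₀ → j' ≠ k₀ → b j ≠ 0 → b j' ≠ 0 →
      ¬ (a j * b j' = a j' * b j ∧ Complex.abs (b j) = Complex.abs (b j')) := by
    have haane : ∀ i, a i ≠ 0 := hg₁ne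
    rintro j j' hjj' hjk hj'k hbj hbj' ⟨hcen, hrad⟩
    by_cases hp : v (j, j') ∈ Submodule.span ℂ {u k₀}
    · obtain ⟨c, hc⟩ := Submodule.mem_span_singleton.mp hp
      have hg1v : g₁ (v (j, j')) = 0 := by
        simp only [hv_def, map_sub, map_smul, smul_eq_mul, ha_def]
        ring
      have hc0 : c = 0 := by
        have h1 := congrArg g₁ hc
        rw [map_smul, smul_eq_mul, hg₁1, mul_one, hg1v] at h1
        exact h1
      have hv0 : a j' • u j = a j • u j' := by
        have h2 : v (j, j') = 0 := by rw [← hc, hc0, zero_smul]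
        simp only [hv_def] at h2
        exact sub_eq_zero.mp h2
      have huj' : u j' = ((a j)⁻¹ * a j') • u j := by
        calc u j' = ((a j)⁻¹ * a j) • u j' := by
              rw [inv_mul_cancel₀ (haane j), one_smul]
          _ = (a j)⁻¹ • (a j • u j') := by rw [mul_smul]
          _ = (a j)⁻¹ • (a j' • u j) := by rw [hv0]
          _ = ((a j)⁻¹ * a j') • u j := by rw [mul_smul]
      have hbj'eq : b j' = ((a j)⁻¹ * a j') * b j := by
        have h3 := congrArg h₀ huj'
        rw [map_smul, smul_eq_mul] at h3
        exact h3
      have hb0 : Complex.abs (b j) ≠ 0 := Complex.abs.ne_zero hbj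
      have h5 : Complex.abs (b j) = Complex.abs ((a j)⁻¹ * a j') * Complex.abs (b j) := by
        rw [← map_mul, ← hbj'eq, hrad]
      have habs1 : Complex.abs ((a j)⁻¹ * a j') = 1 := by
        apply mul_right_cancel₀ hb0
        rw [one_mul, ← h5]
      refine hess j' ⟨fun i => if i = j then (a j)⁻¹ * a j' else 0, ?_, ?_, ?_⟩
      · simp only [if_neg (Ne.symm hjj')]
      · rw [habsingle, habs1]
      · rw [hsingle]
        exact huj'
    · have hvS : v (j, j') ∈ S := by
        rw [hS_def]
        exact Finset.mem_insert_of_mem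
          (Finset.mem_image.mpr ⟨(j, j'), Finset.mem_filter.mpr ⟨Finset.mem_univ _, hp⟩, rfl⟩)
      apply hh₀ne _ hvS
      simp only [hv_def, map_sub, map_smul, smul_eq_mul]
      have hb' : ∀ i, h₀ (u i) = b i := fun i => rfl
      rw [hb' j, hb' j']
      linear_combination - hcen
  -- the active-set geometry
  set J : Finset (Fin N) := Finset.univ.filter (fun j => j ≠ k₀ ∧ b j ≠ 0) with hJ_def
  have hj₁J : j₁ ∈ J := by rw [hJ_def]; exact Finset.mem_filter.mpr ⟨Finset.mem_univ _, hj₁k₀, hbj₁⟩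
  set Sθ : ℝ → Set ℝ :=
    fun θ => {t | 0 ≤ t ∧ ∀ j, Complex.abs (a j + (↑t * Complex.exp (θ * Complex.I)) * b j) ≤ 1}
    with hSθ_def
  set ρ : ℝ → ℝ := fun θ => sSup (Sθ θ) with hρ_def
  -- basic properties of Sθ
  have hS0 : ∀ θ, (0:ℝ) ∈ Sθ θ := by
    intro θ
    refine ⟨le_refl 0, fun j => ?_⟩
    simp only [Complex.ofReal_zero, zero_mul, add_zero]
    by_cases hj : j = k₀
    · subst hj; simp only [ha_def]; rw [hg₁1]; simp
    · exact le_of_lt (hg₁lt j hj)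
  have habs_unit : ∀ θ : ℝ, Complex.abs (Complex.exp (θ * Complex.I)) = 1 := by
    intro θ
    rw [Complex.abs_exp]
    have : (↑θ * Complex.I).re = 0 := by simp
    rw [this, Real.exp_zero]
  have habs_z : ∀ (θ t : ℝ), 0 ≤ t → ∀ c : ℂ,
      Complex.abs ((↑t * Complex.exp (θ * Complex.I)) * c) = t * Complex.abs c := by
    intro θ t ht c
    rw [map_mul, map_mul, Complex.abs_ofReal, habs_unit θ, _root_.abs_of_nonneg ht]
    ring
  have hSbdd : ∀ θ, BddAbove (Sθ θ) := by
    intro θ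
    refine ⟨2 / Complex.abs (b j₁), ?_⟩
    rintro t ⟨ht0, ht⟩
    have h1 := ht j₁
    have h2 : Complex.abs ((↑t * Complex.exp (θ * Complex.I)) * b j₁)
        ≤ Complex.abs (a j₁ + (↑t * Complex.exp (θ * Complex.I)) * b j₁) + Complex.abs (a j₁) := by
      calc Complex.abs ((↑t * Complex.exp (θ * Complex.I)) * b j₁)
          = Complex.abs ((a j₁ + (↑t * Complex.exp (θ * Complex.I)) * b j₁) + (- a j₁)) := by
            congr 1; ring
        _ ≤ _ := by
            refine le_trans (Complex.abs.add_le _ _) ?_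
            rw [Complex.abs.map_neg]
    have h3 : Complex.abs (a j₁) ≤ 1 := le_of_lt (hg₁lt j₁ hj₁k₀)
    rw [habs_z θ t ht0] at h2
    have h4 : t * Complex.abs (b j₁) ≤ 2 := by linarith
    have h5 : 0 < Complex.abs (b j₁) := Complex.abs.pos hbj₁
    rw [le_div_iff₀ h5]
    exact h4
  have hSclosed : ∀ θ, IsClosed (Sθ θ) := by
    intro θ
    have heq : Sθ θ = {t : ℝ | 0 ≤ t} ∩
        ⋂ j, {t : ℝ | Complex.abs (a j + (↑t * Complex.exp (θ * Complex.I)) * b j) ≤ 1} := by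
      ext t
      simp only [hSθ_def, Set.mem_setOf_eq, Set.mem_inter_iff, Set.mem_iInter]
    rw [heq]
    refine (isClosed_le continuous_const continuous_id).inter (isClosed_iInter fun j => ?_)
    refine isClosed_le ?_ continuous_const
    exact Complex.continuous_abs.comp (continuous_const.add
      ((Complex.continuous_ofReal.mul continuous_const).mul continuous_const))
  have hρmem : ∀ θ, ρ θ ∈ Sθ θ := fun θ => (hSclosed θ).csSup_mem ⟨0, hS0 θ⟩ (hSbdd θ)
  have hJne : (Finset.univ.erase k₀).Nonempty := ⟨j₁, Finset.mem_erase.mpr ⟨hj₁k₀, Finset.mem_univ _⟩⟩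
  set ε₀ : ℝ := ((Finset.univ.erase k₀).image
      (fun j => (1 - Complex.abs (a j)) / (Complex.abs (b j) + 1))).min'
      (hJne.image _) with hε₀_def
  have hε₀pos : 0 < ε₀ := by
    have hmem := Finset.min'_mem ((Finset.univ.erase k₀).image
      (fun j => (1 - Complex.abs (a j)) / (Complex.abs (b j) + 1))) (hJne.image _)
    rw [← hε₀_def] at hmem
    obtain ⟨j, hj, hval⟩ := Finset.mem_image.mp hmem
    have hjk : j ≠ k₀ := (Finset.mem_erase.mp hj).1
    rw [← hval]
    have h1 : Complex.abs (a j) < 1 := hg₁lt j hjk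
    have h2 : (0:ℝ) < Complex.abs (b j) + 1 := by positivity
    exact div_pos (by linarith) h2
  have hε₀le : ∀ j, j ≠ k₀ → ε₀ ≤ (1 - Complex.abs (a j)) / (Complex.abs (b j) + 1) := by
    intro j hj
    exact Finset.min'_le _ _ (Finset.mem_image.mpr
      ⟨j, Finset.mem_erase.mpr ⟨hj, Finset.mem_univ _⟩, rfl⟩)
  have hε₀mem : ∀ θ : ℝ, ε₀ ∈ Sθ θ := by
    intro θ
    refine ⟨le_of_lt hε₀pos, fun j => ?_⟩
    by_cases hj : j = k₀
    · subst hj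
      simp only [ha_def, hb_def]
      rw [hg₁1, hh₀k]
      simp
    · have h1 : ε₀ * (Complex.abs (b j) + 1) ≤ 1 - Complex.abs (a j) := by
        rw [← le_div_iff₀ (by positivity : (0:ℝ) < Complex.abs (b j) + 1)]
        exact hε₀le j hj
      calc Complex.abs (a j + (↑ε₀ * Complex.exp (θ * Complex.I)) * b j)
          ≤ Complex.abs (a j) + Complex.abs ((↑ε₀ * Complex.exp (θ * Complex.I)) * b j) :=
            Complex.abs.add_le _ _
        _ = Complex.abs (a j) + ε₀ * Complex.abs (b j) := by
            rw [habs_z θ ε₀ (le_of_lt hε₀pos)]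
        _ ≤ 1 := by nlinarith [Complex.abs.nonneg (b j), Complex.abs.nonneg (a j)]
  have hρpos : ∀ θ, 0 < ρ θ := by
    intro θ
    exact lt_of_lt_of_le hε₀pos (le_csSup (hSbdd θ) (hε₀mem θ))
  have hactive : ∀ θ : ℝ, ∃ j ∈ J,
      Complex.abs (a j + (↑(ρ θ) * Complex.exp (θ * Complex.I)) * b j) = 1 := by
    intro θ
    by_contra hc
    push_neg at hc
    have hlt1 : ∀ j ∈ J, Complex.abs (a j + (↑(ρ θ) * Complex.exp (θ * Complex.I)) * b j) < 1 :=
      fun j hj => lt_of_le_of_ne ((hρmem θ).2 j) (hc j hj)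
    set O : Set ℝ := ⋂ j ∈ J,
      {t : ℝ | Complex.abs (a j + (↑t * Complex.exp (θ * Complex.I)) * b j) < 1} with hO_def
    have hOopen : IsOpen O := by
      apply isOpen_biInter_finset
      intro j _
      refine isOpen_lt ?_ continuous_const
      exact Complex.continuous_abs.comp (continuous_const.add
        ((Complex.continuous_ofReal.mul continuous_const).mul continuous_const))
    have hOmem : ρ θ ∈ O := by
      rw [hO_def]
      rw [Set.mem_iInter₂]
      exact fun j hj => hlt1 j hj
    obtain ⟨δ, hδpos, hball⟩ := Metric.isOpen_iff.mp hOopen (ρ θ) hOmem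
    have htmem : ρ θ + δ/2 ∈ Sθ θ := by
      have hin : ρ θ + δ/2 ∈ O := by
        apply hball
        rw [Metric.mem_ball, Real.dist_eq]
        rw [_root_.abs_of_nonneg (by linarith)]
        ring_nf
        linarith
      refine ⟨by linarith [hρpos θ], fun j => ?_⟩
      by_cases hjJ : j ∈ J
      · rw [hO_def, Set.mem_iInter₂] at hin
        exact le_of_lt (hin j hjJ)
      · rw [hJ_def] at hjJ
        simp only [Finset.mem_filter, Finset.mem_univ, true_and, not_and, not_not] at hjJ
        by_cases hjk : j = k₀
        · subst hjk
          simp only [ha_def, hb_def]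
          rw [hg₁1, hh₀k]
          simp
        · rw [hjJ hjk, mul_zero, add_zero]
          exact le_of_lt (hg₁lt j hjk)
    have := le_csSup (hSbdd θ) htmem
    rw [hρ_def] at this
    linarith
  -- the finite bad set
  set P : Set ℂ := ⋃ (p : Fin N × Fin N) (_ : p.1 ∈ J ∧ p.2 ∈ J ∧ p.1 ≠ p.2),
      {z : ℂ | Complex.abs (a p.1 + z * b p.1) = 1 ∧ Complex.abs (a p.2 + z * b p.2) = 1}
    with hP_def
  have hPfin : P.Finite := by
    rw [hP_def]
    apply Set.Finite.biUnion (Set.toFinite _)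
    rintro ⟨j, j'⟩ ⟨hj, hj', hne⟩
    have hjf := (Finset.mem_filter.mp hj).2
    have hjf' := (Finset.mem_filter.mp hj').2
    exact two_circles_finite _ _ _ _ hjf.2 hjf'.2
      (hdist j j' hne hjf.1 hjf'.1 hjf.2 hjf'.2)
  -- infinitely many boundary points
  set φ : ℝ → ℂ := fun θ => ↑(ρ θ) * Complex.exp (θ * Complex.I) with hφ_def
  have hinj : Set.InjOn φ (Set.Ico 0 (2 * Real.pi)) := by
    intro θ hθ θ' hθ' heq
    simp only [hφ_def] at heq
    have habsθ : Complex.abs (↑(ρ θ) * Complex.exp (θ * Complex.I)) = ρ θ := by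
      rw [map_mul, Complex.abs_ofReal, habs_unit, mul_one, _root_.abs_of_nonneg (le_of_lt (hρpos θ))]
    have habsθ' : Complex.abs (↑(ρ θ') * Complex.exp (θ' * Complex.I)) = ρ θ' := by
      rw [map_mul, Complex.abs_ofReal, habs_unit, mul_one, _root_.abs_of_nonneg (le_of_lt (hρpos θ'))]
    have hρeq : ρ θ = ρ θ' := by rw [← habsθ, ← habsθ', heq]
    have hexp : Complex.exp (θ * Complex.I) = Complex.exp (θ' * Complex.I) := by
      have hne : (↑(ρ θ) : ℂ) ≠ 0 := by
        simp only [ne_eq, Complex.ofReal_eq_zero]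
        exact ne_of_gt (hρpos θ)
      rw [hρeq] at heq
      exact mul_left_cancel₀ (by rw [← hρeq]; exact hne) heq
    obtain ⟨m, hm⟩ := Complex.exp_eq_exp_iff_exists_int.mp hexp
    have him : θ = θ' + m * (2 * Real.pi) := by
      have := congrArg Complex.im hm
      simpa using this
    have hmabs : |(m:ℝ)| < 1 := by
      rw [abs_lt]
      constructor <;> nlinarith [Real.pi_pos, hθ.1, hθ.2, hθ'.1, hθ'.2]
    have hm0 : m = 0 := by
      have : |m| < 1 := by exact_mod_cast (by rwa [← Int.cast_abs] at hmabs : ((|m|:ℤ):ℝ) < 1)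
      exact Int.abs_lt_one_iff.mp this
    rw [hm0] at him
    simpa using him
  have hinf : ((φ '' Set.Ico 0 (2 * Real.pi)) \ P).Infinite :=
    ((Set.Ico_infinite (by positivity)).image hinj).diff hPfin
  obtain ⟨z, hz, hzP⟩ := hinf.nonempty
  obtain ⟨θ, hθ, rfl⟩ := hz
  obtain ⟨j₂, hj₂J, hj₂act⟩ := hactive θ
  have hj₂ : j₂ ≠ k₀ ∧ b j₂ ≠ 0 := (Finset.mem_filter.mp hj₂J).2
  -- the final functional
  set F : (Fin n → ℂ) →ₗ[ℂ] ℂ := g₁ + φ θ • h₀ with hF_def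
  have hFval : ∀ j, F (u j) = a j + φ θ * b j := by
    intro j
    simp [hF_def, ha_def, hb_def]
  have hFk₀ : Complex.abs (F (u k₀)) = 1 := by
    rw [hFval k₀]
    simp only [ha_def, hb_def]
    rw [hg₁1, hh₀k]
    simp
  have hFj₂ : Complex.abs (F (u j₂)) = 1 := by
    rw [hFval j₂, hφ_def]
    exact hj₂act
  have hFlt : ∀ j, j ≠ k₀ → j ≠ j₂ → Complex.abs (F (u j)) < 1 := by
    intro j hjk hjj2
    rw [hFval j]
    by_cases hbj : b j = 0
    · rw [hbj, mul_zero, add_zero]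
      exact hg₁lt j hjk
    · have hjJ : j ∈ J := by
        rw [hJ_def]; exact Finset.mem_filter.mpr ⟨Finset.mem_univ _, hjk, hbj⟩
      have hle : Complex.abs (a j + φ θ * b j) ≤ 1 := (hρmem θ).2 j
      refine lt_of_le_of_ne hle ?_
      intro heq1
      apply hzP
      rw [hP_def]
      rw [Set.mem_iUnion]
      refine ⟨(j₂, j), ?_⟩
      rw [Set.mem_iUnion]
      exact ⟨⟨hj₂J, hjJ, fun h => hjj2 (congrArg id h).symm⟩, hj₂act, heq1⟩
  rcases lt_or_gt_of_ne hj₂.1 with hlt | hlt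
  · exact ⟨j₂, k₀, hlt, F, hFj₂, hFk₀, fun j h1 h2 => hFlt j h2 h1⟩
  · exact ⟨k₀, j₂, hlt, F, hFk₀, hFj₂, fun j h1 h2 => hFlt j h1 h2⟩
end

section
/- Let n ≥ 2. There is no norm ‖·‖ on ℂⁿ that is simultaneously a complex polytope norm and an adjoint complex polytope norm. That is, there do not exist a norm ‖·‖ on ℂⁿ, vectors u₁, …, u_N spanning ℂⁿ whose absolutely convex hull absconv{u₁, …, u_N} equals the closed unit ball of ‖·‖, and ℂ-linear functionals f₁, …, f_M : ℂⁿ → ℂ such that ‖x‖ = max_{1 ≤ j ≤ M} |f_j(x)| for all x ∈ ℂⁿ. -/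
open Finset in
lemma ext_line {n M N : ℕ} (f : Fin M → ((Fin n → ℂ) →ₗ[ℂ] ℂ)) (u : Fin N → (Fin n → ℂ))
    (hBB : ∀ x : Fin n → ℂ, (∀ k, ‖f k x‖ ≤ 1) ↔
      ∃ α : Fin N → ℂ, (∑ j, ‖α j‖) ≤ 1 ∧ x = ∑ j, α j • u j)
    (x : Fin n → ℂ) (hx : ∀ k, ‖f k x‖ ≤ 1)
    (k₀ : Fin M) (hk₀ : ‖f k₀ x‖ = 1)
    (htriv : ∀ d, (∀ k, ‖f k x‖ = 1 → f k d = 0) → d = 0) :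
    ∃ (i : Fin N) (ξ : ℂ), x = ξ • u i := by
  obtain ⟨α, hα1, hα2⟩ := (hBB x).mp hx
  have hu : ∀ i k, ‖f k (u i)‖ ≤ 1 := by
    intro i k
    refine (hBB (u i)).mpr ⟨fun j => if j = i then 1 else 0, ?_, ?_⟩ k
    · simp [apply_ite (fun z : ℂ => ‖z‖)]
    · simp [ite_smul]
  have key : ∀ k, ‖f k x‖ = 1 → ∀ i, α i ≠ 0 →
      α i * f k (u i) = (‖α i‖ : ℂ) * f k x := by
    intro k hk
    have hfx : ∑ j, α j * f k (u j) = f k x := by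
      rw [hα2, map_sum]
      simp [smul_eq_mul]
    have hterm_le : ∀ j, ((starRingEnd ℂ) (f k x) * (α j * f k (u j))).re ≤ ‖α j‖ := by
      intro j
      refine le_trans (Complex.re_le_norm _) ?_
      rw [norm_mul, norm_mul, Complex.norm_conj, hk, one_mul]
      exact mul_le_of_le_one_right (norm_nonneg _) (hu j k)
    have hsum_re : ∑ j, ((starRingEnd ℂ) (f k x) * (α j * f k (u j))).re = 1 := by
      have h1 : ((starRingEnd ℂ) (f k x) * ∑ j, α j * f k (u j)).re
          = ((starRingEnd ℂ) (f k x) * f k x).re := by rw [hfx]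
      rw [Finset.mul_sum, Complex.re_sum] at h1
      rw [h1, mul_comm, Complex.mul_conj]
      rw [← Complex.sq_norm, hk]
      norm_num
    have hall : ∀ j, ‖α j‖ = ((starRingEnd ℂ) (f k x) * (α j * f k (u j))).re := by
      have hnn : ∀ j ∈ Finset.univ (α := Fin N),
          0 ≤ ‖α j‖ - ((starRingEnd ℂ) (f k x) * (α j * f k (u j))).re :=
        fun j _ => sub_nonneg.2 (hterm_le j)
      have h0 : ∑ j, (‖α j‖ - ((starRingEnd ℂ) (f k x) * (α j * f k (u j))).re) = 0 := by
        refine le_antisymm ?_ (Finset.sum_nonneg hnn)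
        rw [Finset.sum_sub_distrib, hsum_re]
        linarith
      intro j
      have := (Finset.sum_eq_zero_iff_of_nonneg hnn).mp h0 j (Finset.mem_univ j)
      linarith
    intro i hi
    set w := (starRingEnd ℂ) (f k x) * (α i * f k (u i)) with hwdef
    have hwre : w.re = ‖α i‖ := (hall i).symm
    have hwabs : ‖w‖ ≤ ‖α i‖ := by
      rw [hwdef, norm_mul, norm_mul, Complex.norm_conj, hk, one_mul]
      exact mul_le_of_le_one_right (norm_nonneg _) (hu i k)
    have him : w.im = 0 := by
      have h1 : w.re ^ 2 + w.im ^ 2 = (‖w‖) ^ 2 := by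
        rw [Complex.sq_norm, Complex.normSq_apply]; ring
      nlinarith [norm_nonneg w]
    have hw : w = (‖α i‖ : ℂ) := by
      apply Complex.ext
      · simpa using hwre
      · simpa using him
    have hcc : f k x * (starRingEnd ℂ) (f k x) = 1 := by
      rw [Complex.mul_conj, ← Complex.sq_norm, hk]
      norm_num
    calc α i * f k (u i) = (f k x * (starRingEnd ℂ) (f k x)) * (α i * f k (u i)) := by
          rw [hcc, one_mul]
      _ = f k x * w := by rw [hwdef]; ring
      _ = (‖α i‖ : ℂ) * f k x := by rw [hw]; ring
  have hex : ∃ i, α i ≠ 0 := by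
    by_contra h
    push_neg at h
    have hx0 : x = 0 := by
      rw [hα2]
      exact Finset.sum_eq_zero fun j _ => by rw [h j, zero_smul]
    rw [hx0] at hk₀
    simp at hk₀
  obtain ⟨i, hi⟩ := hex
  have hd : α i • u i - (‖α i‖ : ℂ) • x = 0 := by
    apply htriv
    intro k hk
    rw [map_sub, map_smul, map_smul, smul_eq_mul, smul_eq_mul, key k hk i hi, sub_self]
  have habs0 : (‖α i‖ : ℂ) ≠ 0 := by
    simpa using (norm_ne_zero_iff.mpr hi)
  refine ⟨i, (‖α i‖ : ℂ)⁻¹ * α i, ?_⟩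
  have heq : α i • u i = (‖α i‖ : ℂ) • x := sub_eq_zero.mp hd
  calc x = (‖α i‖ : ℂ)⁻¹ • ((‖α i‖ : ℂ) • x) := by
        rw [smul_smul, inv_mul_cancel₀ habs0, one_smul]
    _ = (‖α i‖ : ℂ)⁻¹ • (α i • u i) := by rw [heq]
    _ = ((‖α i‖ : ℂ)⁻¹ * α i) • u i := by rw [smul_smul]

lemma push_bdry {n M : ℕ} (f : Fin M → ((Fin n → ℂ) →ₗ[ℂ] ℂ))
    (hker : ∀ x : Fin n → ℂ, (∀ k, f k x = 0) → x = 0)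
    (x d : Fin n → ℂ) (hx : ∀ k, ‖f k x‖ ≤ 1) (hd0 : d ≠ 0)
    (hd : ∀ k, ‖f k x‖ = 1 → f k d = 0) :
    ∃ t : ℝ, 0 < t ∧ (∀ k, ‖f k (x + (t : ℂ) • d)‖ ≤ 1) ∧
      ∃ k, ‖f k (x + (t : ℂ) • d)‖ = 1 ∧ f k d ≠ 0 := by
  obtain ⟨ks, hks⟩ : ∃ k, f k d ≠ 0 := by
    by_contra h
    push_neg at h
    exact hd0 (hker d h)
  haveI : Nonempty (Fin M) := ⟨ks⟩
  have hfk : ∀ (k : Fin M) (t : ℝ), f k (x + (t : ℂ) • d) = f k x + (t : ℂ) * f k d := by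
    intro k t
    rw [map_add, map_smul, smul_eq_mul]
  set T : Set ℝ := {t | 0 ≤ t ∧ ∀ k, ‖f k x + (t : ℂ) * f k d‖ ≤ 1} with hT
  have h0T : (0 : ℝ) ∈ T := ⟨le_refl 0, fun k => by simpa using hx k⟩
  have hbdd : BddAbove T := by
    refine ⟨2 / ‖f ks d‖, fun t ht => ?_⟩
    have hpos : 0 < ‖f ks d‖ := norm_pos_iff.mpr hks
    have h3 : ‖(t : ℂ) * f ks d‖ ≤
        ‖f ks x + (t : ℂ) * f ks d‖ + ‖f ks x‖ := by
      calc ‖(t : ℂ) * f ks d‖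
          = ‖(f ks x + (t : ℂ) * f ks d) + -(f ks x)‖ := by ring_nf
        _ ≤ ‖f ks x + (t : ℂ) * f ks d‖ + ‖-(f ks x)‖ :=
            norm_add_le _ _
        _ = ‖f ks x + (t : ℂ) * f ks d‖ + ‖f ks x‖ := by
            rw [norm_neg]
    have h4 : ‖(t : ℂ) * f ks d‖ = t * ‖f ks d‖ := by
      rw [norm_mul, Complex.norm_real, Real.norm_eq_abs, abs_of_nonneg ht.1]
    rw [le_div_iff₀ hpos]
    have := ht.2 ks
    have := hx ks
    linarith [h4 ▸ h3]
  have hclosed : IsClosed T := by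
    have hTeq : T = Set.Ici (0 : ℝ) ∩
        ⋂ k, (fun t : ℝ => ‖f k x + (t : ℂ) * f k d‖) ⁻¹' Set.Iic 1 := by
      ext t
      simp [hT, Set.mem_iInter]
    rw [hTeq]
    refine isClosed_Ici.inter (isClosed_iInter fun k => IsClosed.preimage ?_ isClosed_Iic)
    exact continuous_norm.comp (continuous_const.add (Complex.continuous_ofReal.mul continuous_const))
  have hstep : ∀ s : ℝ, 0 ≤ s → (∀ k, ‖f k x + (s : ℂ) * f k d‖ ≤ 1) →
      (∀ k, f k d ≠ 0 → ‖f k x + (s : ℂ) * f k d‖ < 1) →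
      ∃ δ : ℝ, 0 < δ ∧ (s + δ) ∈ T := by
    intro s hs hball hslack
    set ε := Finset.univ.inf' Finset.univ_nonempty
      (fun k => if f k d = 0 then 1 else (1 - ‖f k x + (s : ℂ) * f k d‖) / ‖f k d‖) with hε
    have hεpos : 0 < ε := by
      rw [hε, Finset.lt_inf'_iff]
      intro k _
      split_ifs with h
      · norm_num
      · exact div_pos (by linarith [hslack k h]) (norm_pos_iff.mpr h)
    refine ⟨ε, hεpos, ⟨by linarith, fun k => ?_⟩⟩
    have hεle : ε ≤ (if f k d = 0 then 1 else (1 - ‖f k x + (s : ℂ) * f k d‖) / ‖f k d‖) := by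
      rw [hε]
      exact Finset.inf'_le _ (Finset.mem_univ k)
    by_cases h : f k d = 0
    · rw [h, mul_zero, add_zero]
      simpa using hx k
    · rw [if_neg h] at hεle
      have heq : f k x + (((s + ε) : ℝ) : ℂ) * f k d = (f k x + (s : ℂ) * f k d) + (ε : ℂ) * f k d := by
        push_cast
        ring
      rw [heq]
      refine le_trans (norm_add_le _ _) ?_
      have habsε : ‖(ε : ℂ) * f k d‖ = ε * ‖f k d‖ := by
        rw [norm_mul, Complex.norm_real, Real.norm_eq_abs, abs_of_nonneg (le_of_lt hεpos)]
      have hmul : ε * ‖f k d‖ ≤ 1 - ‖f k x + (s : ℂ) * f k d‖ :=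
        (le_div_iff₀ (norm_pos_iff.mpr h)).mp hεle
      rw [habsε]
      linarith
  set t0 := sSup T with ht0def
  have ht0 : t0 ∈ T := hclosed.csSup_mem ⟨0, h0T⟩ hbdd
  have ht0pos : 0 < t0 := by
    obtain ⟨δ, hδ, hδT⟩ := hstep 0 le_rfl (fun k => by simpa using hx k)
      (fun k h => lt_of_le_of_ne (by simpa using hx k)
        (fun he => h (hd k (by simpa using he))))
    have := le_csSup hbdd hδT
    rw [zero_add] at this
    linarith
  have hnew : ∃ k, ‖f k x + (t0 : ℂ) * f k d‖ = 1 ∧ f k d ≠ 0 := by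
    by_contra h
    push_neg at h
    obtain ⟨δ, hδ, hδT⟩ := hstep t0 ht0.1 ht0.2
      (fun k hk => lt_of_le_of_ne (ht0.2 k) (fun he => hk (h k he)))
    have := le_csSup hbdd hδT
    linarith
  obtain ⟨k, hk1, hk2⟩ := hnew
  exact ⟨t0, ht0pos, fun k' => by rw [hfk]; exact ht0.2 k', k, by rw [hfk]; exact hk1, hk2⟩
lemma desc {n M : ℕ} (f : Fin M → ((Fin n → ℂ) →ₗ[ℂ] ℂ))
    (hker : ∀ x : Fin n → ℂ, (∀ k, f k x = 0) → x = 0) :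
    ∀ (m : ℕ) (x : Fin n → ℂ),
      Module.finrank ℂ (⨅ k ∈ {k : Fin M | ‖f k x‖ = 1}, LinearMap.ker (f k) :
        Submodule ℂ (Fin n → ℂ)) ≤ m →
      (∀ k, ‖f k x‖ ≤ 1) →
      ∃ w : Fin n → ℂ, (∀ k, ‖f k w‖ ≤ 1) ∧
        (∀ k, ‖f k x‖ = 1 → f k w = f k x) ∧
        (∀ d, (∀ k, ‖f k w‖ = 1 → f k d = 0) → d = 0) := by
  have hmem : ∀ (y : Fin n → ℂ) (v : Fin n → ℂ),
      (v ∈ (⨅ k ∈ {k : Fin M | ‖f k y‖ = 1}, LinearMap.ker (f k) :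
        Submodule ℂ (Fin n → ℂ))) ↔ ∀ k, ‖f k y‖ = 1 → f k v = 0 := by
    intro y v
    simp [Submodule.mem_iInf, LinearMap.mem_ker]
  intro m
  induction m with
  | zero =>
    intro x hrk hx
    refine ⟨x, hx, fun k _ => rfl, fun d hdmem => ?_⟩
    by_contra hd0
    have hdS : d ∈ (⨅ k ∈ {k : Fin M | ‖f k x‖ = 1}, LinearMap.ker (f k) :
        Submodule ℂ (Fin n → ℂ)) := (hmem x d).mpr hdmem
    have hle : Submodule.span ℂ {d} ≤
        (⨅ k ∈ {k : Fin M | ‖f k x‖ = 1}, LinearMap.ker (f k) :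
          Submodule ℂ (Fin n → ℂ)) := by
      rw [Submodule.span_singleton_le_iff_mem]
      exact hdS
    have h1 := Submodule.finrank_mono hle
    rw [finrank_span_singleton hd0] at h1
    omega
  | succ m ih =>
    intro x hrk hx
    by_cases hbot : (⨅ k ∈ {k : Fin M | ‖f k x‖ = 1}, LinearMap.ker (f k) :
        Submodule ℂ (Fin n → ℂ)) = ⊥
    · refine ⟨x, hx, fun k _ => rfl, fun d hdmem => ?_⟩
      have hdS := (hmem x d).mpr hdmem
      rw [hbot] at hdS
      exact (Submodule.mem_bot ℂ).mp hdS
    · obtain ⟨d, hdS, hd0⟩ := (Submodule.ne_bot_iff _).mp hbot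
      have hdker : ∀ k, ‖f k x‖ = 1 → f k d = 0 := (hmem x d).mp hdS
      obtain ⟨t, ht, hball, k', hk'1, hk'2⟩ := push_bdry f hker x d hx hd0 hdker
      set x' := x + (t : ℂ) • d with hx'
      have hpres : ∀ k, ‖f k x‖ = 1 → f k x' = f k x := by
        intro k hk
        rw [hx', map_add, map_smul, hdker k hk, smul_zero, add_zero]
      have hlt : (⨅ k ∈ {k : Fin M | ‖f k x'‖ = 1}, LinearMap.ker (f k) :
          Submodule ℂ (Fin n → ℂ)) <
          (⨅ k ∈ {k : Fin M | ‖f k x‖ = 1}, LinearMap.ker (f k) :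
          Submodule ℂ (Fin n → ℂ)) := by
      
        rw [SetLike.lt_iff_le_and_exists]
        refine ⟨?_, d, hdS, ?_⟩
        · intro v hv
          rw [hmem] at hv ⊢
          intro k hk
          exact hv k (by rw [hpres k hk]; exact hk)
        · rw [hmem]
          push_neg
          exact ⟨k', hk'1, hk'2⟩
      have hrk' : Module.finrank ℂ (⨅ k ∈ {k : Fin M | ‖f k x'‖ = 1},
          LinearMap.ker (f k) : Submodule ℂ (Fin n → ℂ)) ≤ m := by
        have h2 := Submodule.finrank_lt_finrank_of_lt hlt
        omega
      obtain ⟨w, hw1, hw2, hw3⟩ := ih x' hrk' hball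
      exact ⟨w, hw1, fun k hk => by rw [hw2 k (by rw [hpres k hk]; exact hk), hpres k hk], hw3⟩

theorem stmt2 (n : ℕ) (hn : 2 ≤ n) :
    ¬ ∃ (nrm : (Fin n → ℂ) → ℝ),
      (∀ x y, nrm (x + y) ≤ nrm x + nrm y) ∧
      (∀ (c : ℂ) x, nrm (c • x) = ‖c‖ * nrm x) ∧
      (∀ x, nrm x = 0 → x = 0) ∧
      (∃ (N : ℕ) (u : Fin N → (Fin n → ℂ)),
        Submodule.span ℂ (Set.range u) = ⊤ ∧
        {x | nrm x ≤ 1} =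
          {x | ∃ α : Fin N → ℂ, (∑ j, ‖α j‖) ≤ 1 ∧ x = ∑ j, α j • u j}) ∧
      (∃ (M : ℕ) (f : Fin M → ((Fin n → ℂ) →ₗ[ℂ] ℂ)),
        ∀ x, IsGreatest (Set.range fun j => ‖f j x‖) (nrm x)) := by
  rintro ⟨nrm, htri, hsmul, hzero, ⟨N, u, hspan, hballset⟩, ⟨M, f, hmax⟩⟩
  have hub : ∀ x k, ‖f k x‖ ≤ nrm x := fun x k => (hmax x).2 ⟨k, rfl⟩
  have hattain : ∀ x, ∃ k, ‖f k x‖ = nrm x := fun x => (hmax x).1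
  have hker : ∀ x : Fin n → ℂ, (∀ k, f k x = 0) → x = 0 := by
    intro x hx
    obtain ⟨k, hk⟩ := hattain x
    apply hzero
    rw [← hk, hx k]
    simp
  have hballset' := Set.ext_iff.mp hballset
  have hBB : ∀ x : Fin n → ℂ, (∀ k, ‖f k x‖ ≤ 1) ↔
      ∃ α : Fin N → ℂ, (∑ j, ‖α j‖) ≤ 1 ∧ x = ∑ j, α j • u j := by
    intro x
    constructor
    · intro h
      refine (hballset' x).mp ?_
      obtain ⟨k, hk⟩ := hattain x
      show nrm x ≤ 1
      rw [← hk]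
      exact h k
    · intro h k
      exact le_trans (hub x k) ((hballset' x).mpr h)
  have hfte : Module.finrank ℂ (Fin n → ℂ) = n := by
    simp [Module.finrank_pi]
  obtain ⟨i₀, hi₀⟩ : ∃ i₀, u i₀ ≠ 0 := by
    by_contra h
    push_neg at h
    have hle : Submodule.span ℂ (Set.range u) ≤ ⊥ := by
      rw [Submodule.span_le]
      rintro _ ⟨i, rfl⟩
      simp [h i]
    rw [hspan] at hle
    haveI : Nonempty (Fin n) := ⟨⟨0, by omega⟩⟩
    have hv : (fun _ => (1 : ℂ) : Fin n → ℂ) ≠ 0 := by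
      intro hc
      have := congrFun hc (Classical.arbitrary (Fin n))
      simpa using this
    exact hv ((Submodule.mem_bot ℂ).mp (hle Submodule.mem_top))
  obtain ⟨i₁, hi₁⟩ : ∃ i₁, u i₁ ∉ Submodule.span ℂ {u i₀} := by
    by_contra h
    push_neg at h
    have hle : Submodule.span ℂ (Set.range u) ≤ Submodule.span ℂ {u i₀} := by
      rw [Submodule.span_le]
      rintro _ ⟨i, rfl⟩
      exact h i
    rw [hspan] at hle
    have h1 := Submodule.finrank_mono hle
    rw [finrank_top, hfte, finrank_span_singleton hi₀] at h1
    omega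
  by_cases hdich : ∀ y : Fin n → ℂ, (∀ k, ‖f k y‖ ≤ 1) →
      (∃ k, ‖f k y‖ = 1) →
      (∀ d, (∀ k, ‖f k y‖ = 1 → f k d = 0) → d = 0)
  · -- Case II : every nonzero vector is on a line ℂ · u i
    have hline : ∀ v : Fin n → ℂ, v ≠ 0 → ∃ (i : Fin N) (ξ : ℂ), v = ξ • u i := by
      intro v hv
      obtain ⟨kv, hkv⟩ : ∃ k, f k v ≠ 0 := by
        by_contra h
        push_neg at h
        exact hv (hker v h)
      haveI : Nonempty (Fin M) := ⟨kv⟩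
      set s := Finset.univ.sup' Finset.univ_nonempty (fun k => ‖f k v‖) with hs
      have hsle : ‖f kv v‖ ≤ s := by
        rw [hs]
        exact Finset.le_sup' (fun k => ‖f k v‖) (Finset.mem_univ kv)
      have hspos : 0 < s := lt_of_lt_of_le (norm_pos_iff.mpr hkv) hsle
      set y := (((s⁻¹ : ℝ) : ℂ)) • v with hy
      have habsy : ∀ k, ‖f k y‖ = s⁻¹ * ‖f k v‖ := by
        intro k
        rw [hy, map_smul, smul_eq_mul, norm_mul, Complex.norm_real, Real.norm_eq_abs,
          abs_of_nonneg (le_of_lt (inv_pos.mpr hspos))]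
      have hyle : ∀ k, ‖f k y‖ ≤ 1 := by
        intro k
        rw [habsy k]
        calc s⁻¹ * ‖f k v‖ ≤ s⁻¹ * s := by
              refine mul_le_mul_of_nonneg_left ?_ (le_of_lt (inv_pos.mpr hspos))
              rw [hs]
              exact Finset.le_sup' (fun k => ‖f k v‖) (Finset.mem_univ k)
          _ = 1 := inv_mul_cancel₀ (ne_of_gt hspos)
      obtain ⟨kmax, _, hkmax⟩ := Finset.exists_mem_eq_sup' Finset.univ_nonempty
        (fun k => ‖f k v‖)
      have hymax : ‖f kmax y‖ = 1 := by
        rw [habsy kmax, ← hkmax, ← hs]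
        exact inv_mul_cancel₀ (ne_of_gt hspos)
      have htriv := hdich y hyle ⟨kmax, hymax⟩
      obtain ⟨i, ξ, hyi⟩ := ext_line f u hBB y hyle kmax hymax htriv
      refine ⟨i, ((s : ℝ) : ℂ) * ξ, ?_⟩
      have hv_eq : v = ((s : ℝ) : ℂ) • y := by
        rw [hy, smul_smul, ← Complex.ofReal_mul, mul_inv_cancel₀ (ne_of_gt hspos)]
        simp
      rw [hv_eq, hyi, smul_smul]
    have hvt : ∀ t : Fin (N+1), u i₀ + ((t : ℕ) : ℂ) • u i₁ ≠ 0 := by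
      intro t hc
      by_cases h0 : ((t : ℕ) : ℂ) = 0
      · rw [h0, zero_smul, add_zero] at hc
        exact hi₀ hc
      · apply hi₁
        rw [Submodule.mem_span_singleton]
        refine ⟨-(((t : ℕ) : ℂ)⁻¹), ?_⟩
        have hneg : ((t : ℕ) : ℂ) • u i₁ = -u i₀ := eq_neg_of_add_eq_zero_right hc
        calc (-(((t : ℕ) : ℂ)⁻¹)) • u i₀ = ((t : ℕ) : ℂ)⁻¹ • (-u i₀) := by
              rw [neg_smul, smul_neg]
          _ = ((t : ℕ) : ℂ)⁻¹ • (((t : ℕ) : ℂ) • u i₁) := by rw [← hneg]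
          _ = u i₁ := by rw [smul_smul, inv_mul_cancel₀ h0, one_smul]
    have H : ∀ t : Fin (N+1), ∃ (i : Fin N) (ξ : ℂ), u i₀ + ((t : ℕ) : ℂ) • u i₁ = ξ • u i :=
      fun t => hline _ (hvt t)
    choose iF ξF hF using H
    obtain ⟨t, t', htt, hiF⟩ := Fintype.exists_ne_map_eq_of_card_lt iF (by simp)
    have htne : ((t : ℕ) : ℂ) ≠ ((t' : ℕ) : ℂ) := by
      intro h
      exact htt (Fin.ext (Nat.cast_injective h))
    have hsubne : (((t : ℕ) : ℂ) - ((t' : ℕ) : ℂ)) ≠ 0 := sub_ne_zero.mpr htne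
    have hsub : (((t : ℕ) : ℂ) - ((t' : ℕ) : ℂ)) • u i₁ = (ξF t - ξF t') • u (iF t) := by
      have h1 := hF t
      have h2 := hF t'
      rw [← hiF] at h2
      calc (((t : ℕ) : ℂ) - ((t' : ℕ) : ℂ)) • u i₁
          = (u i₀ + ((t : ℕ) : ℂ) • u i₁) - (u i₀ + ((t' : ℕ) : ℂ) • u i₁) := by
            rw [sub_smul]; abel
        _ = ξF t • u (iF t) - ξF t' • u (iF t) := by rw [h1, h2]
        _ = (ξF t - ξF t') • u (iF t) := (sub_smul _ _ _).symm
    set σ := (((t : ℕ) : ℂ) - ((t' : ℕ) : ℂ))⁻¹ * (ξF t - ξF t') with hσ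
    have hb : u i₁ = σ • u (iF t) := by
      calc u i₁ = (((t : ℕ) : ℂ) - ((t' : ℕ) : ℂ))⁻¹ •
            ((((t : ℕ) : ℂ) - ((t' : ℕ) : ℂ)) • u i₁) := by
            rw [smul_smul, inv_mul_cancel₀ hsubne, one_smul]
        _ = (((t : ℕ) : ℂ) - ((t' : ℕ) : ℂ))⁻¹ • ((ξF t - ξF t') • u (iF t)) := by rw [hsub]
        _ = σ • u (iF t) := by rw [smul_smul, hσ]
    have ha : u i₀ = (ξF t - ((t : ℕ) : ℂ) * σ) • u (iF t) := by
      have h1 : u i₀ = ξF t • u (iF t) - ((t : ℕ) : ℂ) • u i₁ := by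
        rw [← hF t]; abel
      rw [h1, hb, smul_smul, sub_smul]
    apply hi₁
    rw [Submodule.mem_span_singleton]
    have hρ : (ξF t - ((t : ℕ) : ℂ) * σ) ≠ 0 := by
      intro h
      rw [h, zero_smul] at ha
      exact hi₀ ha
    refine ⟨σ * (ξF t - ((t : ℕ) : ℂ) * σ)⁻¹, ?_⟩
    rw [ha, smul_smul, mul_assoc, inv_mul_cancel₀ hρ, mul_one, ← hb]
  · -- Case I
    push_neg at hdich
    obtain ⟨x₀, hx₀ball, hx₀act, d₀, hd₀ker, hd₀ne⟩ := hdich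
    obtain ⟨k₀, hk₀⟩ := hx₀act
    have H : ∀ l : Fin (M*N+1), ∃ (t : ℝ) (k : Fin M) (i : Fin N) (ξ : ℂ) (w : Fin n → ℂ),
        0 < t ∧ f k₀ w = f k₀ x₀ ∧
        f k w = f k x₀ + (t : ℂ) * ((1 + ((l : ℕ) : ℂ) * Complex.I) * f k d₀) ∧
        f k d₀ ≠ 0 ∧ w = ξ • u i := by
      intro l
      set z : ℂ := 1 + ((l : ℕ) : ℂ) * Complex.I with hz
      have hzne : z ≠ 0 := by
        intro h
        have := congrArg Complex.re h
        simp [hz] at this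
      set d := z • d₀ with hd
      have hdne : d ≠ 0 := smul_ne_zero hzne hd₀ne
      have hdker : ∀ k, ‖f k x₀‖ = 1 → f k d = 0 := by
        intro k hk
        rw [hd, map_smul, hd₀ker k hk, smul_zero]
      obtain ⟨t, htpos, hball, k, hk1, hk2⟩ := push_bdry f hker x₀ d hx₀ball hdne hdker
      obtain ⟨w, hwball, hwpres, hwtriv⟩ := desc f hker _ (x₀ + (t : ℂ) • d) le_rfl hball
      have hwk_eq : f k w = f k (x₀ + (t : ℂ) • d) := hwpres k hk1
      have hwkabs : ‖f k w‖ = 1 := by rw [hwk_eq]; exact hk1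
      obtain ⟨i, ξ, hwi⟩ := ext_line f u hBB w hwball k hwkabs hwtriv
      have hfkd₀ : f k d₀ ≠ 0 := by
        intro h
        apply hk2
        rw [hd, map_smul, h, smul_zero]
      have hk₀x' : f k₀ (x₀ + (t : ℂ) • d) = f k₀ x₀ := by
        rw [map_add, map_smul, hdker k₀ hk₀, smul_zero, add_zero]
      have hk₀abs : ‖f k₀ (x₀ + (t : ℂ) • d)‖ = 1 := by rw [hk₀x']; exact hk₀
      refine ⟨t, k, i, ξ, w, htpos, ?_, ?_, hfkd₀, hwi⟩
      · rw [hwpres k₀ hk₀abs, hk₀x']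
      · rw [hwk_eq, map_add, map_smul, hd, map_smul, smul_eq_mul, smul_eq_mul, hz]
    choose tF kF iF ξF wF hp1 hp2 hp3 hp4 hp5 using H
    obtain ⟨l, l', hll, hpair⟩ := Fintype.exists_ne_map_eq_of_card_lt (fun l => (kF l, iF l))
      (by simp)
    have hkk : kF l = kF l' := congrArg Prod.fst hpair
    have hii : iF l = iF l' := congrArg Prod.snd hpair
    have hcne : f k₀ x₀ ≠ 0 := by
      intro h
      rw [h] at hk₀
      simp at hk₀
    have he1 : ξF l * f k₀ (u (iF l)) = f k₀ x₀ := by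
      have h := hp2 l
      rw [hp5 l, map_smul, smul_eq_mul] at h
      exact h
    have he2 : ξF l' * f k₀ (u (iF l)) = f k₀ x₀ := by
      have h := hp2 l'
      rw [hp5 l', map_smul, smul_eq_mul, ← hii] at h
      exact h
    have hfune : f k₀ (u (iF l)) ≠ 0 := by
      intro h
      rw [h, mul_zero] at he1
      exact hcne he1.symm
    have hξ : ξF l = ξF l' := mul_right_cancel₀ hfune (he1.trans he2.symm)
    have hw_eq : wF l = wF l' := by rw [hp5 l, hp5 l', hξ, hii]
    have he3 := hp3 l
    have he4 := hp3 l'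
    rw [← hkk, ← hw_eq] at he4
    have hmain : ((tF l : ℝ) : ℂ) * (1 + ((l : ℕ) : ℂ) * Complex.I)
        = ((tF l' : ℝ) : ℂ) * (1 + ((l' : ℕ) : ℂ) * Complex.I) := by
      have h5 := add_left_cancel (he3.symm.trans he4)
      have h6 : (((tF l : ℝ) : ℂ) * (1 + ((l : ℕ) : ℂ) * Complex.I)) * f (kF l) d₀
          = (((tF l' : ℝ) : ℂ) * (1 + ((l' : ℕ) : ℂ) * Complex.I)) * f (kF l) d₀ := by
        rw [mul_assoc, mul_assoc]
        exact h5
      exact mul_right_cancel₀ (hp4 l) h6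
    have hre := congrArg Complex.re hmain
    have him := congrArg Complex.im hmain
    simp [Complex.mul_re, Complex.mul_im] at hre him
    have hteq : tF l = tF l' := hre
    have hlval : ((l : ℕ) : ℝ) = ((l' : ℕ) : ℝ) := by
      have htpos := hp1 l
      rw [hteq] at him
      exact mul_left_cancel₀ (by rw [← hteq]; exact ne_of_gt htpos) him
    exact hll (Fin.ext (Nat.cast_injective hlval))
end

section
/- Let X = (ℂⁿ, ‖·‖) where ‖x‖ = max_{1 ≤ j ≤ N} |f_j(x)| for nonzero ℂ-linear functionals f₁, …, f_N : ℂⁿ → ℂ, and suppose this defines a norm. Let Y ⊆ X be a linear subspace and x ∈ X \ Y. Then: (i) 0 is a best approximation for x in Y if and only if for every y ∈ Y there exists 1 ≤ j ≤ N such that |f_j(x)| = ‖x‖ and Re(conj(f_j(x))·f_j(y)) ≤ 0; (ii) 0 is the unique best approximation for x in Y if and only if for every nonzero y ∈ Y there exists 1 ≤ j ≤ N such that |f_j(x)| = ‖x‖, Re(conj(f_j(x))·f_j(y)) ≤ 0, and f_j(y) ≠ 0. -/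
lemma nsq_sub' (a b : ℂ) (t : ℝ) :
    Complex.normSq (a - t * b) =
      Complex.normSq a - 2 * t * ((starRingEnd ℂ a) * b).re + t ^ 2 * Complex.normSq b := by
  simp [Complex.normSq_apply, Complex.mul_re, Complex.mul_im, Complex.sub_re, Complex.sub_im]
  ring

lemma L1 (a b : ℂ) (M : ℝ) (h : ‖a‖ < M) :
    ∃ ε > 0, ∀ t : ℝ, 0 < t → t < ε → ‖a - t * b‖ < M := by
  refine ⟨(M - ‖a‖) / (‖b‖ + 1), div_pos (by linarith) (by positivity), fun t ht htε => ?_⟩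
  have h2 : t * (‖b‖ + 1) < M - ‖a‖ :=
    (lt_div_iff₀ (by positivity)).mp htε
  calc ‖a - t * b‖ ≤ ‖a‖ + ‖(t : ℂ) * b‖ := by
        simpa using norm_sub_le a ((t:ℂ) * b)
    _ = ‖a‖ + t * ‖b‖ := by
        rw [norm_mul, Complex.norm_real, Real.norm_eq_abs, abs_of_pos ht]
    _ < M := by nlinarith [norm_nonneg b]

lemma L2 (a b : ℂ) (h : 0 < ((starRingEnd ℂ a) * b).re) :
    ∃ ε > 0, ∀ t : ℝ, 0 < t → t < ε → ‖a - t * b‖ < ‖a‖ := by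
  refine ⟨2 * ((starRingEnd ℂ a) * b).re / (Complex.normSq b + 1), div_pos (by linarith) (by linarith [Complex.normSq_nonneg b]),
    fun t ht htε => ?_⟩
  have h2 : t * (Complex.normSq b + 1) < 2 * ((starRingEnd ℂ a) * b).re :=
    (lt_div_iff₀ (by linarith [Complex.normSq_nonneg b])).mp htε
  have key : Complex.normSq (a - t * b) < Complex.normSq a := by
    rw [nsq_sub']
    nlinarith [Complex.normSq_nonneg b, mul_lt_mul_of_pos_left h2 ht]
  have := Real.sqrt_lt_sqrt (Complex.normSq_nonneg _) key
  simpa [Complex.norm_def] using this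

lemma L3 (a b : ℂ) (h : ((starRingEnd ℂ a) * b).re ≤ 0) :
    ‖a‖ ≤ ‖a - b‖ := by
  have key : Complex.normSq a ≤ Complex.normSq (a - b) := by
    have h1 := nsq_sub' a b 1
    simp only [Complex.mul_re, Complex.conj_re, Complex.conj_im] at h h1
    simp at h1
    nlinarith [Complex.normSq_nonneg b]
  have := Real.sqrt_le_sqrt key
  simpa [Complex.norm_def] using this

lemma L4 (a b : ℂ) (h : ((starRingEnd ℂ a) * b).re ≤ 0) (hb : b ≠ 0) :
    ‖a‖ < ‖a - b‖ := by
  have key : Complex.normSq a < Complex.normSq (a - b) := by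
    have h1 := nsq_sub' a b 1
    simp only [Complex.mul_re, Complex.conj_re, Complex.conj_im] at h h1
    simp at h1
    have := Complex.normSq_pos.mpr hb
    nlinarith
  have := Real.sqrt_lt_sqrt (Complex.normSq_nonneg _) key
  simpa [Complex.norm_def] using this

lemma combine {N : ℕ} [Nonempty (Fin N)] (ε : Fin N → ℝ) (hε : ∀ j, 0 < ε j) :
    ∃ t : ℝ, 0 < t ∧ ∀ j, t < ε j := by
  have hne : (Finset.univ : Finset (Fin N)).Nonempty := Finset.univ_nonempty
  have hpos : 0 < Finset.univ.inf' hne ε :=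
    (Finset.lt_inf'_iff hne).mpr fun j _ => hε j
  refine ⟨Finset.univ.inf' hne ε / 2, by linarith, fun j => ?_⟩
  have := Finset.inf'_le ε (Finset.mem_univ j)
  linarith

theorem stmt3 (n N : ℕ) (f : Fin N → ((Fin n → ℂ) →ₗ[ℂ] ℂ)) (hf : ∀ j, f j ≠ 0)
    (nrm : (Fin n → ℂ) → ℝ)
    (hnrm : ∀ z, IsGreatest (Set.range fun j => ‖f j z‖) (nrm z))
    (hdef : ∀ z, nrm z = 0 → z = 0)
    (Y : Submodule ℂ (Fin n → ℂ)) (x : Fin n → ℂ) (hx : x ∉ Y) :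
    ((∀ y ∈ Y, nrm (x - y) ≥ nrm x) ↔
      (∀ y ∈ Y, ∃ j, ‖f j x‖ = nrm x ∧
        (starRingEnd ℂ (f j x) * f j y).re ≤ 0)) ∧
    ((∀ y ∈ Y, y ≠ 0 → nrm (x - y) > nrm x) ↔
      (∀ y ∈ Y, y ≠ 0 → ∃ j, ‖f j x‖ = nrm x ∧
        (starRingEnd ℂ (f j x) * f j y).re ≤ 0 ∧ f j y ≠ 0)) := by
  have hub : ∀ z j, ‖f j z‖ ≤ nrm z := fun z j => (hnrm z).2 ⟨j, rfl⟩
  have hmem : ∀ z, ∃ j, ‖f j z‖ = nrm z := fun z => (hnrm z).1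
  have hNe : Nonempty (Fin N) := by
    obtain ⟨j, _⟩ := hmem x; exact ⟨j⟩
  have hfsub : ∀ (j) (t : ℝ) (y : Fin n → ℂ),
      f j (x - (t : ℂ) • y) = f j x - t * f j y := by
    intro j t y
    rw [map_sub, map_smul, smul_eq_mul]
  constructor
  · constructor
    · intro h y hy
      by_contra hc
      push_neg at hc
      have hchoice : ∀ j, ∃ ε > 0, ∀ t : ℝ, 0 < t → t < ε →
          ‖f j x - t * f j y‖ < nrm x := by
        intro j
        rcases (hub x j).lt_or_eq with hlt | heq
        · exact L1 _ _ _ hlt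
        · obtain ⟨ε, hε, hp⟩ := L2 (f j x) (f j y) (hc j heq)
          exact ⟨ε, hε, fun t ht h2 => (hp t ht h2).trans_le (le_of_eq heq)⟩
      choose ε hε hprop using hchoice
      obtain ⟨t, ht, htε⟩ := combine ε hε
      have hmemY : (t : ℂ) • y ∈ Y := Y.smul_mem _ hy
      obtain ⟨j1, hj1⟩ := hmem (x - (t : ℂ) • y)
      have h1 := hprop j1 t ht (htε j1)
      rw [← hfsub j1 t y, hj1] at h1
      have := h _ hmemY
      linarith
    · intro h y hy
      obtain ⟨j, heq, hre⟩ := h y hy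
      have h1 : ‖f j x‖ ≤ ‖f j (x - y)‖ := by
        rw [map_sub]; exact L3 _ _ hre
      have h2 := hub (x - y) j
      linarith [heq ▸ h1]
  · constructor
    · intro h y hy hy0
      by_contra hc
      push_neg at hc
      have hchoice : ∀ j, ∃ ε > 0, ∀ t : ℝ, 0 < t → t < ε →
          ‖f j x - t * f j y‖ ≤ nrm x := by
        intro j
        rcases (hub x j).lt_or_eq with hlt | heq
        · obtain ⟨ε, hε, hp⟩ := L1 (f j x) (f j y) (nrm x) hlt
          exact ⟨ε, hε, fun t ht h2 => (hp t ht h2).le⟩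
        · by_cases hre : (starRingEnd ℂ (f j x) * f j y).re ≤ 0
          · have hz : f j y = 0 := hc j heq hre
            exact ⟨1, one_pos, fun t ht _ => by
              rw [hz, mul_zero, sub_zero, heq]⟩
          · push_neg at hre
            obtain ⟨ε, hε, hp⟩ := L2 (f j x) (f j y) hre
            exact ⟨ε, hε, fun t ht h2 => ((hp t ht h2).trans_le (le_of_eq heq)).le⟩
      choose ε hε hprop using hchoice
      obtain ⟨t, ht, htε⟩ := combine ε hε
      have hmemY : (t : ℂ) • y ∈ Y := Y.smul_mem _ hy
      have hne0 : (t : ℂ) • y ≠ 0 :=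
        smul_ne_zero (Complex.ofReal_ne_zero.mpr ht.ne') hy0
      obtain ⟨j1, hj1⟩ := hmem (x - (t : ℂ) • y)
      have h1 := hprop j1 t ht (htε j1)
      rw [← hfsub j1 t y, hj1] at h1
      have := h _ hmemY hne0
      linarith
    · intro h y hy hy0
      obtain ⟨j, heq, hre, hne⟩ := h y hy hy0
      have h1 : ‖f j x‖ < ‖f j (x - y)‖ := by
        rw [map_sub]; exact L4 _ _ hre hne
      have h2 := hub (x - y) j
      rw [heq] at h1
      linarith
end

section
/- Let X = (ℂⁿ, ‖·‖) be a complex normed space with an adjoint complex polytope norm, i.e. ‖x‖ = max_{1 ≤ j ≤ N} |f_j(x)| for finitely many ℂ-linear functionals f₁, …, f_N on ℂⁿ. Let Y ⊆ X be a one-dimensional linear subspace and let x ∈ X \ Y be a vector for which y₀ ∈ Y is the unique best approximation in Y. Then y₀ is a 2-strongly unique best approximation for x in Y: there exists r > 0 such that ‖x − y‖² ≥ ‖x − y₀‖² + r‖y − y₀‖² for all y ∈ Y. -/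
theorem absSub_sq_aux (a w : ℂ) :
    ‖a - w‖ ^ 2
      = ‖a‖ ^ 2 + ‖w‖ ^ 2 - 2 * (w * (starRingEnd ℂ) a).re := by
  rw [Complex.sq_norm, Complex.sq_norm, Complex.sq_norm]
  simp [Complex.normSq_apply, Complex.mul_re, Complex.conj_re, Complex.conj_im,
    Complex.sub_re, Complex.sub_im]
  ring

theorem stmt4 (n N : ℕ) (f : Fin N → ((Fin n → ℂ) →ₗ[ℂ] ℂ))
    (nrm : (Fin n → ℂ) → ℝ)
    (hnrm : ∀ z, IsGreatest (Set.range fun j => ‖f j z‖) (nrm z))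
    (hdef : ∀ z, nrm z = 0 → z = 0)
    (Y : Submodule ℂ (Fin n → ℂ)) (hY : Module.finrank ℂ Y = 1)
    (x : Fin n → ℂ) (hx : x ∉ Y) (y₀ : Fin n → ℂ) (hy₀ : y₀ ∈ Y)
    (huniq : ∀ y ∈ Y, y ≠ y₀ → nrm (x - y) > nrm (x - y₀)) :
    ∃ r > 0, ∀ y ∈ Y, nrm (x - y) ^ 2 ≥ nrm (x - y₀) ^ 2 + r * nrm (y - y₀) ^ 2 := by
  classical
  -- basic facts about nrm
  have hub : ∀ z j, ‖f j z‖ ≤ nrm z := fun z j => (hnrm z).2 ⟨j, rfl⟩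
  have hex : ∀ z, ∃ j, nrm z = ‖f j z‖ := by
    intro z; obtain ⟨j, hj⟩ := (hnrm z).1; exact ⟨j, hj.symm⟩
  have hnn : ∀ z, 0 ≤ nrm z := by
    intro z; obtain ⟨j, hj⟩ := hex z; rw [hj]; exact norm_nonneg _
  have hsmul : ∀ (t : ℂ) z, nrm (t • z) = ‖t‖ * nrm z := by
    intro t z
    apply le_antisymm
    · obtain ⟨j, hj⟩ := hex (t • z)
      rw [hj, map_smul, smul_eq_mul, norm_mul]
      exact mul_le_mul_of_nonneg_left (hub z j) (norm_nonneg t)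
    · obtain ⟨j, hj⟩ := hex z
      rw [hj, ← norm_mul, ← smul_eq_mul (α := ℂ), ← map_smul]
      exact hub _ j
  -- a generator of Y
  obtain ⟨v', hv0, hvspan⟩ := finrank_eq_one_iff'.mp hY
  set v : Fin n → ℂ := (v' : Fin n → ℂ) with hvdef
  have hvY : v ∈ Y := v'.2
  have hv : v ≠ 0 := fun h => hv0 (Subtype.ext h)
  have hmem : ∀ y ∈ Y, ∃ t : ℂ, y = y₀ + t • v := by
    intro y hy
    obtain ⟨t, ht⟩ := hvspan ⟨y - y₀, Y.sub_mem hy hy₀⟩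
    refine ⟨t, ?_⟩
    have : t • v = y - y₀ := congrArg Subtype.val ht
    rw [this]; ring
  have hxy₀ : x - y₀ ≠ 0 := by
    intro h
    exact hx (by rw [sub_eq_zero] at h; rw [h]; exact hy₀)
  have hm : 0 < nrm (x - y₀) :=
    lt_of_le_of_ne (hnn _) (fun h => hxy₀ (hdef _ h.symm))
  have hc : 0 < nrm v := lt_of_le_of_ne (hnn _) (fun h => hv (hdef _ h.symm))
  -- the key "engine": for every direction t₀ there is an active functional j
  -- with f j v ≠ 0 and nonpositive linear term.
  have engine : ∀ t₀ : ℂ, t₀ ≠ 0 →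
      ∃ j, ‖f j (x - y₀)‖ = nrm (x - y₀) ∧ f j v ≠ 0 ∧
        (t₀ * f j v * (starRingEnd ℂ) (f j (x - y₀))).re ≤ 0 := by
    intro t₀ ht₀
    by_contra hcon
    push_neg at hcon
    have hev : ∀ j : Fin N, ∀ᶠ ε : ℝ in nhdsWithin 0 (Set.Ioi 0),
        ‖f j (x - y₀) - ((ε : ℂ) * t₀) * f j v‖ ≤ nrm (x - y₀) := by
      intro j
      set a : ℂ := f j (x - y₀) with ha
      set b : ℂ := f j v with hb
      by_cases hja : ‖a‖ = nrm (x - y₀)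
      · by_cases hjb : b = 0
        · filter_upwards with ε
          simp [hjb, hja.le]
        · have hpos : 0 < (t₀ * b * (starRingEnd ℂ) a).re := hcon j hja hjb
          have hK : (0:ℝ) < Complex.normSq (t₀ * b) :=
            Complex.normSq_pos.mpr (mul_ne_zero ht₀ hjb)
          have htend : Filter.Tendsto (fun ε : ℝ => ε * Complex.normSq (t₀ * b))
              (nhdsWithin 0 (Set.Ioi 0)) (nhds 0) := by
            have h0 : Filter.Tendsto (fun ε : ℝ => ε * Complex.normSq (t₀ * b))
                (nhds 0) (nhds (0 * Complex.normSq (t₀ * b))) :=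
              (continuous_id.mul continuous_const).tendsto 0
            rw [zero_mul] at h0
            exact h0.mono_left nhdsWithin_le_nhds
          have h1 := htend.eventually_lt_const
            (show (0:ℝ) < 2 * (t₀ * b * (starRingEnd ℂ) a).re by linarith)
          filter_upwards [h1, self_mem_nhdsWithin] with ε hε hε0
          rw [Set.mem_Ioi] at hε0
          have habsw : ‖(ε : ℂ) * (t₀ * b)‖ ^ 2
              = ε ^ 2 * Complex.normSq (t₀ * b) := by
            rw [Complex.sq_norm, Complex.normSq_mul, Complex.normSq_ofReal]
            ring
          have hre : ((ε : ℂ) * (t₀ * b) * (starRingEnd ℂ) a).re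
              = ε * (t₀ * b * (starRingEnd ℂ) a).re := by
            rw [mul_assoc, Complex.re_ofReal_mul]
          have hsq : ‖a - ((ε : ℂ) * t₀) * b‖ ^ 2 ≤ nrm (x - y₀) ^ 2 := by
            rw [mul_assoc, absSub_sq_aux a ((ε : ℂ) * (t₀ * b)), habsw, hre, hja]
            nlinarith [sq_nonneg ε]
          nlinarith [norm_nonneg (a - ((ε : ℂ) * t₀) * b), hnn (x - y₀),
            sq_nonneg (‖a - ((ε : ℂ) * t₀) * b‖ + nrm (x - y₀))]
      · have hja' : ‖a‖ < nrm (x - y₀) := lt_of_le_of_ne (hub _ j) hja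
        have hcont : Filter.Tendsto (fun ε : ℝ => ‖a - ((ε : ℂ) * t₀) * b‖)
            (nhds 0) (nhds (‖a - (((0:ℝ) : ℂ) * t₀) * b‖)) := by
          apply Continuous.tendsto
          exact continuous_norm.comp
            (continuous_const.sub ((Complex.continuous_ofReal.mul continuous_const).mul
              continuous_const))
        have : Filter.Tendsto (fun ε : ℝ => ‖a - ((ε : ℂ) * t₀) * b‖)
            (nhds 0) (nhds (‖a‖)) := by simpa using hcont
        have := (this.mono_left (nhdsWithin_le_nhds (s := Set.Ioi (0:ℝ)))).eventually_lt_const hja'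
        filter_upwards [this] with ε hε using hε.le
    have hall : ∀ᶠ ε : ℝ in nhdsWithin 0 (Set.Ioi 0),
        (∀ j, ‖f j (x - y₀) - ((ε : ℂ) * t₀) * f j v‖ ≤ nrm (x - y₀))
          ∧ 0 < ε := by
      filter_upwards [Filter.eventually_all.mpr hev, self_mem_nhdsWithin] with ε h1 h2
      exact ⟨h1, h2⟩
    obtain ⟨ε, hεall, hε0⟩ := hall.exists
    set w : ℂ := (ε : ℂ) * t₀ with hw
    have hw0 : w ≠ 0 := mul_ne_zero (by exact_mod_cast hε0.ne') ht₀
    have hyY : y₀ + w • v ∈ Y := Y.add_mem hy₀ (Y.smul_mem w hvY)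
    have hyne : y₀ + w • v ≠ y₀ := by
      intro h
      have : w • v = 0 := by
        have := congrArg (fun z => z - y₀) h
        simpa using this
      exact hv ((smul_eq_zero.mp this).resolve_left hw0)
    have hgt := huniq _ hyY hyne
    obtain ⟨j, hj⟩ := hex (x - (y₀ + w • v))
    have hrw : x - (y₀ + w • v) = (x - y₀) - w • v := by ring
    have : nrm (x - (y₀ + w • v)) ≤ nrm (x - y₀) := by
      rw [hj, hrw, map_sub, map_smul, smul_eq_mul]
      exact hεall j
    linarith
  -- the active set with nonzero coefficient
  set S : Finset (Fin N) := Finset.univ.filter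
    (fun j => ‖f j (x - y₀)‖ = nrm (x - y₀) ∧ f j v ≠ 0) with hS
  have hSne : S.Nonempty := by
    obtain ⟨j, h1, h2, _⟩ := engine 1 one_ne_zero
    exact ⟨j, Finset.mem_filter.mpr ⟨Finset.mem_univ _, h1, h2⟩⟩
  set β : ℝ := S.inf' hSne (fun j => ‖f j v‖ ^ 2) with hβ
  have hβpos : 0 < β := by
    rw [hβ, Finset.lt_inf'_iff]
    intro j hj
    have hj' : f j v ≠ 0 := (Finset.mem_filter.mp hj).2.2
    exact pow_pos (norm_pos_iff.mpr hj') 2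
  refine ⟨β / nrm v ^ 2, by positivity, ?_⟩
  intro y hy
  obtain ⟨t, rfl⟩ := hmem y hy
  have hyy₀ : y₀ + t • v - y₀ = t • v := by ring
  rw [hyy₀, hsmul]
  by_cases ht : t = 0
  · simp [ht, hnn]
  · obtain ⟨j, hja, hjb, hjre⟩ := engine t ht
    have hjS : j ∈ S := Finset.mem_filter.mpr ⟨Finset.mem_univ _, hja, hjb⟩
    have hβle : β ≤ ‖f j v‖ ^ 2 := Finset.inf'_le _ hjS
    set a : ℂ := f j (x - y₀) with ha
    set b : ℂ := f j v with hb
    have hval : ‖f j (x - (y₀ + t • v))‖ = ‖a - t * b‖ := by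
      have hrw : x - (y₀ + t • v) = (x - y₀) - t • v := by ring
      rw [hrw, map_sub, map_smul, smul_eq_mul]
    have h1 : ‖a - t * b‖ ≤ nrm (x - (y₀ + t • v)) := by
      rw [← hval]; exact hub _ j
    have h1' : ‖a - t * b‖ ^ 2 ≤ nrm (x - (y₀ + t • v)) ^ 2 :=
      pow_le_pow_left₀ (norm_nonneg _) h1 2
    have h2 := absSub_sq_aux a (t * b)
    have habs : ‖t * b‖ ^ 2 = ‖t‖ ^ 2 * ‖b‖ ^ 2 := by
      rw [norm_mul]; ring
    have h3 : β / nrm v ^ 2 * (‖t‖ * nrm v) ^ 2 = β * ‖t‖ ^ 2 := by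
      field_simp
    rw [ge_iff_le, h3]
    have h4 : β * ‖t‖ ^ 2 ≤ ‖t‖ ^ 2 * ‖b‖ ^ 2 := by
      nlinarith [sq_nonneg (‖t‖)]
    nlinarith [hja]
end

section
/- Let X = (ℂⁿ, ‖·‖) be a complex normed space whose closed unit ball equals absconv{u₁, …, u_N} for vectors u₁, …, u_N ∈ ℂⁿ. Let Y ⊆ X be a linear subspace and let x ∈ X \ Y have a representation x = a₁u₁ + … + a_N u_N with ‖x‖ = |a₁| + … + |a_N|, where a_j ≠ 0 for 1 ≤ j ≤ m and a_j = 0 for m+1 ≤ j ≤ N. Then: (i) 0 is a best approximation for x in Y if and only if for every y ∈ Y and every representation y = b₁u₁ + … + b_N u_N one has |Σ_{j=1}^{m} (conj(a_j)/|a_j|)·b_j| ≤ Σ_{j=m+1}^{N} |b_j|; (ii) 0 is the unique best approximation for x in Y if and only if in addition: whenever y = b₁u₁ + … + b_N u_N ∈ Y is nonzero and Σ_{j=1}^{m} (conj(a_j)/|a_j|)·b_j = Σ_{j=m+1}^{N} |b_j|, there exists 1 ≤ j ≤ m with Im(conj(a_j)·b_j) ≠ 0. -/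
lemma myAbsBound (r t : ℝ) (hr : 0 < r) (z : ℂ) :
    ‖(r:ℂ) - (t:ℂ) * z‖ ≤ r - t * z.re + t^2 * (‖z‖)^2 / (2*r) := by
  have h1 : (‖(r:ℂ) - (t:ℂ)*z‖)^2 = r^2 - 2*t*r*z.re + t^2*(‖z‖)^2 := by
    rw [Complex.sq_norm, Complex.sq_norm, Complex.normSq_apply, Complex.normSq_apply]
    simp [Complex.sub_re, Complex.sub_im, Complex.mul_re, Complex.mul_im]
    ring
  have h2r : 0 < 2*r := by linarith
  rw [show r - t*z.re + t^2*(‖z‖)^2/(2*r)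
      = (2*r*(r - t*z.re) + t^2*(‖z‖)^2)/(2*r) by field_simp]
  rw [le_div_iff₀ h2r]
  nlinarith [sq_nonneg (‖(r:ℂ) - (t:ℂ)*z‖ - r)]

lemma myAbsFactor (a w : ℂ) (ha : a ≠ 0) :
    ‖a - w‖ =
      ‖(‖a‖ : ℂ) - (starRingEnd ℂ a / (‖a‖ : ℂ)) * w‖ := by
  have h0 : (‖a‖ : ℂ) ≠ 0 := by
    simpa using norm_ne_zero_iff.mpr ha
  have hid : (‖a‖ : ℂ) - (starRingEnd ℂ a / (‖a‖:ℂ)) * w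
      = (starRingEnd ℂ a / (‖a‖:ℂ)) * (a - w) := by
    field_simp
    rw [mul_sub, mul_comm ((starRingEnd ℂ) a) a, Complex.mul_conj, Complex.normSq_eq_norm_sq]
    push_cast
    ring
  rw [hid, norm_mul, norm_div, Complex.norm_conj, Complex.norm_real, Real.norm_eq_abs,
    abs_of_nonneg (norm_nonneg a), div_self (norm_ne_zero_iff.mpr ha), one_mul]

lemma myReEqAbs {z : ℂ} (h : z.re = ‖z‖) : z = (‖z‖ : ℂ) := by
  have h2 := Complex.sq_norm z
  rw [Complex.normSq_apply] at h2
  have h4 : ‖z‖ ^ 2 = z.re ^ 2 := by rw [← h]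
  have h3 : z.im * z.im = 0 := by nlinarith
  apply Complex.ext
  · simpa using h
  · simpa using mul_self_eq_zero.mp h3

lemma myUnit (z : ℂ) (hz : z ≠ 0) :
    ‖starRingEnd ℂ z / (‖z‖ : ℂ)‖ = 1 ∧
      (starRingEnd ℂ z / (‖z‖ : ℂ)) * z = (‖z‖ : ℂ) := by
  have h0 : ‖z‖ ≠ 0 := norm_ne_zero_iff.mpr hz
  have h0' : (‖z‖ : ℂ) ≠ 0 := by exact_mod_cast h0
  constructor
  · rw [norm_div, Complex.norm_conj, Complex.norm_real, Real.norm_eq_abs,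
      abs_of_nonneg (norm_nonneg z), div_self h0]
  · field_simp
    rw [mul_comm ((starRingEnd ℂ) z) z, Complex.mul_conj, Complex.normSq_eq_norm_sq]
    push_cast
    ring

lemma mySplit {M : Type*} [AddCommMonoid M] {N : ℕ} (m : ℕ) (f : Fin N → M) :
    ∑ j, f j = (∑ j ∈ Finset.univ.filter (fun j : Fin N => (j:ℕ) < m), f j)
      + ∑ j ∈ Finset.univ.filter (fun j : Fin N => m ≤ (j:ℕ)), f j := by
  rw [← Finset.sum_filter_add_sum_filter_not Finset.univ (fun j : Fin N => (j:ℕ) < m) f]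
  congr 1
  apply Finset.sum_congr _ (fun _ _ => rfl)
  ext j; simp [not_lt]

section
variable {n N : ℕ} (u : Fin N → (Fin n → ℂ)) (nrm : (Fin n → ℂ) → ℝ)

lemma myNrmZero (hsmul : ∀ (c : ℂ) v, nrm (c • v) = ‖c‖ * nrm v) : nrm 0 = 0 := by
  have := hsmul 0 0
  simpa using this

lemma myNrmLe (hsmul : ∀ (c : ℂ) v, nrm (c • v) = ‖c‖ * nrm v)
    (hball : {v | nrm v ≤ 1} =
      {v | ∃ α : Fin N → ℂ, (∑ j, ‖α j‖) ≤ 1 ∧ v = ∑ j, α j • u j})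
    (c : Fin N → ℂ) : nrm (∑ j, c j • u j) ≤ ∑ j, ‖c j‖ := by
  set s := ∑ j, ‖c j‖ with hs
  have hs0 : 0 ≤ s := Finset.sum_nonneg fun j _ => norm_nonneg _
  rcases eq_or_lt_of_le hs0 with h | h
  · have hc : ∀ j, c j = 0 := by
      intro j
      have := Finset.sum_eq_zero_iff_of_nonneg (fun j _ => norm_nonneg (c j)) |>.mp h.symm
      exact norm_eq_zero.mp (this j (Finset.mem_univ j))
    have : (∑ j, c j • u j) = 0 := by
      apply Finset.sum_eq_zero; intro j _; rw [hc j, zero_smul]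
    rw [this, myNrmZero nrm hsmul, ← h]
  · have hw : ((s:ℂ)⁻¹ • ∑ j, c j • u j) ∈ {v | nrm v ≤ 1} := by
      rw [hball]
      refine ⟨fun j => (s:ℂ)⁻¹ * c j, ?_, ?_⟩
      · have : ∀ j, ‖(s:ℂ)⁻¹ * c j‖ = s⁻¹ * ‖c j‖ := by
          intro j; rw [norm_mul, norm_inv, Complex.norm_real, Real.norm_eq_abs, abs_of_pos h]
        rw [Finset.sum_congr rfl fun j _ => this j, ← Finset.mul_sum, ← hs,
          inv_mul_cancel₀ (ne_of_gt h)]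
      · rw [Finset.smul_sum]
        simp [smul_smul]
    have h1 : nrm ((s:ℂ)⁻¹ • ∑ j, c j • u j) = s⁻¹ * nrm (∑ j, c j • u j) := by
      rw [hsmul, norm_inv, Complex.norm_real, Real.norm_eq_abs, abs_of_pos h]
    rw [Set.mem_setOf_eq, h1] at hw
    calc nrm (∑ j, c j • u j) = s * (s⁻¹ * nrm (∑ j, c j • u j)) := by
          field_simp
      _ ≤ s * 1 := by exact mul_le_mul_of_nonneg_left hw hs0
      _ = s := mul_one s

lemma myNrmRep (hadd : ∀ v w, nrm (v + w) ≤ nrm v + nrm w)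
    (hsmul : ∀ (c : ℂ) v, nrm (c • v) = ‖c‖ * nrm v)
    (hdef : ∀ v, nrm v = 0 → v = 0)
    (hball : {v | nrm v ≤ 1} =
      {v | ∃ α : Fin N → ℂ, (∑ j, ‖α j‖) ≤ 1 ∧ v = ∑ j, α j • u j})
    (v : Fin n → ℂ) : ∃ c : Fin N → ℂ, v = ∑ j, c j • u j ∧ ∑ j, ‖c j‖ ≤ nrm v := by
  have hn0 : 0 ≤ nrm v := by
    have h1 := hadd v (-v)
    have h2 : nrm (-v) = nrm v := by
      have := hsmul (-1) v; simpa using this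
    have h3 : nrm (v + -v) = 0 := by rw [add_neg_cancel, myNrmZero nrm hsmul]
    linarith
  rcases eq_or_lt_of_le hn0 with h | h
  · refine ⟨0, ?_, ?_⟩
    · rw [hdef v h.symm]; simp
    · simp [← h]
  · have hw : ((nrm v : ℂ)⁻¹ • v) ∈ {w | nrm w ≤ 1} := by
      rw [Set.mem_setOf_eq, hsmul, norm_inv, Complex.norm_real, Real.norm_eq_abs, abs_of_pos h,
        inv_mul_cancel₀ (ne_of_gt h)]
    rw [hball] at hw
    obtain ⟨α, hα1, hα2⟩ := hw
    refine ⟨fun j => (nrm v : ℂ) * α j, ?_, ?_⟩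
    · have h5 : (nrm v : ℂ) • ((nrm v : ℂ)⁻¹ • v) = ∑ j, ((nrm v:ℂ) * α j) • u j := by
        rw [hα2, Finset.smul_sum]
        simp [smul_smul]
      rw [← h5, smul_smul, mul_inv_cancel₀ (by exact_mod_cast ne_of_gt h), one_smul]
    · have : ∀ j, ‖(nrm v:ℂ) * α j‖ = nrm v * ‖α j‖ := by
        intro j; rw [norm_mul, Complex.norm_real, Real.norm_eq_abs, abs_of_pos h]
      rw [Finset.sum_congr rfl fun j _ => this j, ← Finset.mul_sum]
      calc nrm v * ∑ j, ‖α j‖ ≤ nrm v * 1 := by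
            exact mul_le_mul_of_nonneg_left hα1 (le_of_lt h)
        _ = nrm v := mul_one _
end

theorem stmt6 (n N : ℕ) (u : Fin N → (Fin n → ℂ))
    (nrm : (Fin n → ℂ) → ℝ)
    (hadd : ∀ v w, nrm (v + w) ≤ nrm v + nrm w)
    (hsmul : ∀ (c : ℂ) v, nrm (c • v) = ‖c‖ * nrm v)
    (hdef : ∀ v, nrm v = 0 → v = 0)
    (hball : {v | nrm v ≤ 1} =
      {v | ∃ α : Fin N → ℂ, (∑ j, ‖α j‖) ≤ 1 ∧ v = ∑ j, α j • u j})
    (Y : Submodule ℂ (Fin n → ℂ)) (x : Fin n → ℂ) (hx : x ∉ Y)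
    (a : Fin N → ℂ) (hxa : x = ∑ j, a j • u j) (hna : nrm x = ∑ j, ‖a j‖)
    (m : ℕ) (hm : m ≤ N) (ha : ∀ j : Fin N, a j ≠ 0 ↔ (j : ℕ) < m) :
    ((∀ y ∈ Y, nrm (x - y) ≥ nrm x) ↔
      (∀ y ∈ Y, ∀ b : Fin N → ℂ, y = ∑ j, b j • u j →
        ‖∑ j ∈ Finset.univ.filter (fun j : Fin N => (j : ℕ) < m),
            (starRingEnd ℂ (a j) / (‖a j‖ : ℂ)) * b j‖
          ≤ ∑ j ∈ Finset.univ.filter (fun j : Fin N => m ≤ (j : ℕ)),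
              ‖b j‖)) ∧
    ((∀ y ∈ Y, y ≠ 0 → nrm (x - y) > nrm x) ↔
      ((∀ y ∈ Y, ∀ b : Fin N → ℂ, y = ∑ j, b j • u j →
        ‖∑ j ∈ Finset.univ.filter (fun j : Fin N => (j : ℕ) < m),
            (starRingEnd ℂ (a j) / (‖a j‖ : ℂ)) * b j‖
          ≤ ∑ j ∈ Finset.univ.filter (fun j : Fin N => m ≤ (j : ℕ)),
              ‖b j‖) ∧
       (∀ y ∈ Y, y ≠ 0 → ∀ b : Fin N → ℂ, y = ∑ j, b j • u j →
         (∑ j ∈ Finset.univ.filter (fun j : Fin N => (j : ℕ) < m),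
             (starRingEnd ℂ (a j) / (‖a j‖ : ℂ)) * b j)
           = ((∑ j ∈ Finset.univ.filter (fun j : Fin N => m ≤ (j : ℕ)),
               ‖b j‖ : ℝ) : ℂ) →
         ∃ j : Fin N, (j : ℕ) < m ∧ (starRingEnd ℂ (a j) * b j).im ≠ 0))) := by
  classical
  set F := Finset.univ.filter (fun j : Fin N => (j : ℕ) < m) with hF
  set G := Finset.univ.filter (fun j : Fin N => m ≤ (j : ℕ)) with hG
  have memF : ∀ j : Fin N, j ∈ F ↔ (j:ℕ) < m := by intro j; simp [hF]
  have memG : ∀ j : Fin N, j ∈ G ↔ m ≤ (j:ℕ) := by intro j; simp [hG]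
  have hsplitR : ∀ f : Fin N → ℝ, ∑ j, f j = ∑ j ∈ F, f j + ∑ j ∈ G, f j := by
    intro f; rw [hF, hG]; exact mySplit m f
  have habsF : ∀ j : Fin N, (j:ℕ) < m → 0 < ‖a j‖ := by
    intro j hj
    exact norm_pos_iff.mpr ((ha j).mpr hj)
  have haG : ∀ j : Fin N, m ≤ (j:ℕ) → a j = 0 := by
    intro j hj
    by_contra h
    exact absurd ((ha j).mp h) (not_lt.mpr hj)
  have hσ1 : ∀ j : Fin N, (j:ℕ) < m →
      ‖starRingEnd ℂ (a j) / (‖a j‖:ℂ)‖ = 1 :=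
    fun j hj => (myUnit (a j) ((ha j).mpr hj)).1
  have hσa : ∀ j : Fin N, (j:ℕ) < m →
      (starRingEnd ℂ (a j) / (‖a j‖:ℂ)) * a j = (‖a j‖ : ℂ) :=
    fun j hj => (myUnit (a j) ((ha j).mpr hj)).2
  have hnxF : nrm x = ∑ j ∈ F, ‖a j‖ := by
    rw [hna, hsplitR]
    have h0 : ∑ j ∈ G, ‖a j‖ = 0 := by
      apply Finset.sum_eq_zero
      intro j hj
      rw [haG j ((memG j).mp hj)]
      simp
    rw [h0, add_zero]
  -- representation of y given representation of x - y
  have hrepy : ∀ y : Fin n → ℂ, ∀ c : Fin N → ℂ, x - y = ∑ j, c j • u j →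
      y = ∑ j, (a j - c j) • u j := by
    intro y c hc1
    have h1 : y = x - (x - y) := (sub_sub_cancel x y).symm
    rw [h1, hc1]
    conv_lhs => rw [hxa]
    rw [← Finset.sum_sub_distrib]
    exact Finset.sum_congr rfl fun j _ => (sub_smul _ _ _).symm
  -- key2 : P → best
  have key2 : (∀ y ∈ Y, ∀ b : Fin N → ℂ, y = ∑ j, b j • u j →
        ‖∑ j ∈ F, (starRingEnd ℂ (a j) / (‖a j‖ : ℂ)) * b j‖
          ≤ ∑ j ∈ G, ‖b j‖) →
      ∀ y ∈ Y, nrm x ≤ nrm (x - y) := by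
    intro hP y hy
    obtain ⟨c, hc1, hc2⟩ := myNrmRep u nrm hadd hsmul hdef hball (x - y)
    have hyb := hrepy y c hc1
    have hPy := hP y hy _ hyb
    have hGeq : ∑ j ∈ G, ‖a j - c j‖ = ∑ j ∈ G, ‖c j‖ := by
      apply Finset.sum_congr rfl
      intro j hj
      rw [haG j ((memG j).mp hj), zero_sub, norm_neg]
    have hre : (∑ j ∈ F, (starRingEnd ℂ (a j) / (‖a j‖:ℂ)) * (a j - c j)).re
        = ∑ j ∈ F, ‖a j‖
          - ∑ j ∈ F, ((starRingEnd ℂ (a j) / (‖a j‖:ℂ)) * c j).re := by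
      rw [Complex.re_sum, ← Finset.sum_sub_distrib]
      apply Finset.sum_congr rfl
      intro j hj
      rw [mul_sub, hσa j ((memF j).mp hj)]
      simp [Complex.sub_re]
    have hrele : ∀ j ∈ F,
        ((starRingEnd ℂ (a j) / (‖a j‖:ℂ)) * c j).re ≤ ‖c j‖ := by
      intro j hj
      calc ((starRingEnd ℂ (a j) / (‖a j‖:ℂ)) * c j).re
          ≤ ‖(starRingEnd ℂ (a j) / (‖a j‖:ℂ)) * c j‖ :=
            Complex.re_le_norm _
        _ = ‖c j‖ := by rw [norm_mul, hσ1 j ((memF j).mp hj), one_mul]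
    have h4 := Complex.re_le_norm (∑ j ∈ F, (starRingEnd ℂ (a j) / (‖a j‖:ℂ)) * (a j - c j))
    have h5 : ‖∑ j ∈ F, (starRingEnd ℂ (a j) / (‖a j‖:ℂ)) * (a j - c j)‖
        ≤ ∑ j ∈ G, ‖c j‖ := by rw [← hGeq]; exact hPy
    have h6 : ∑ j ∈ F, ‖c j‖ + ∑ j ∈ G, ‖c j‖ ≤ nrm (x - y) := by
      rw [← hsplitR]; exact hc2
    have h7 := Finset.sum_le_sum hrele
    rw [hnxF]
    linarith [hre ▸ h4]
  -- key1 : best → P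
  have key1 : (∀ y ∈ Y, nrm (x - y) ≥ nrm x) →
      (∀ y ∈ Y, ∀ b : Fin N → ℂ, y = ∑ j, b j • u j →
        ‖∑ j ∈ F, (starRingEnd ℂ (a j) / (‖a j‖ : ℂ)) * b j‖
          ≤ ∑ j ∈ G, ‖b j‖) := by
    intro hbest y hy b hb
    set Bg := ∑ j ∈ G, ‖b j‖ with hBgdef
    set S := ∑ j ∈ F, (starRingEnd ℂ (a j) / (‖a j‖ : ℂ)) * b j with hSdef
    by_contra hcon
    push_neg at hcon
    have hBg0 : 0 ≤ Bg := Finset.sum_nonneg fun j _ => norm_nonneg _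
    have hS0 : S ≠ 0 := by
      intro h
      rw [h] at hcon
      simp at hcon
      linarith
    obtain ⟨hl1, hl2⟩ := myUnit S hS0
    set lam := starRingEnd ℂ S / (‖S‖ : ℂ) with hlam
    set C := ∑ j ∈ F, (‖b j‖)^2 / (2 * ‖a j‖) with hC
    have hC0 : 0 ≤ C := by
      apply Finset.sum_nonneg
      intro j hj
      apply div_nonneg (sq_nonneg _)
      have := norm_nonneg (a j)
      linarith
    set t := (‖S‖ - Bg)/(C+1) with htdef
    have ht0 : 0 < t := div_pos (by linarith) (by linarith)
    have hy' : ((t:ℂ) * lam) • y ∈ Y := Y.smul_mem _ hy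
    have hrep : x - ((t:ℂ)*lam) • y = ∑ j, (a j - ((t:ℂ)*lam) * b j) • u j := by
      conv_lhs => rw [hxa, hb]
      rw [Finset.smul_sum, ← Finset.sum_sub_distrib]
      apply Finset.sum_congr rfl
      intro j _
      rw [smul_smul, ← sub_smul]
    have hle : nrm (x - ((t:ℂ)*lam) • y) ≤ ∑ j, ‖a j - ((t:ℂ)*lam) * b j‖ := by
      rw [hrep]
      exact myNrmLe u nrm hsmul hball _
    have hGle : ∑ j ∈ G, ‖a j - ((t:ℂ)*lam) * b j‖ = t * Bg := by
      rw [hBgdef, Finset.mul_sum]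
      apply Finset.sum_congr rfl
      intro j hj
      rw [haG j ((memG j).mp hj), zero_sub, norm_neg, norm_mul, norm_mul, hl1,
        Complex.norm_real, Real.norm_eq_abs, abs_of_pos ht0, mul_one]
    have hFle : ∀ j ∈ F, ‖a j - ((t:ℂ)*lam) * b j‖
        ≤ ‖a j‖
          - t * (lam * ((starRingEnd ℂ (a j) / (‖a j‖:ℂ)) * b j)).re
          + t^2 * (‖b j‖)^2 / (2 * ‖a j‖) := by
      intro j hj
      have hjm := (memF j).mp hj
      have haj := (ha j).mpr hjm
      rw [myAbsFactor (a j) _ haj]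
      have hw : (starRingEnd ℂ (a j) / (‖a j‖:ℂ)) * (((t:ℂ)*lam) * b j)
          = (t:ℂ) * (lam * ((starRingEnd ℂ (a j) / (‖a j‖:ℂ)) * b j)) := by ring
      rw [hw]
      have hbd := myAbsBound (‖a j‖) t (habsF j hjm)
        (lam * ((starRingEnd ℂ (a j) / (‖a j‖:ℂ)) * b j))
      have habz : ‖lam * ((starRingEnd ℂ (a j) / (‖a j‖:ℂ)) * b j)‖
          = ‖b j‖ := by
        rw [norm_mul, norm_mul, hl1, hσ1 j hjm, one_mul, one_mul]
      rw [habz] at hbd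
      exact hbd
    have hReSum : ∑ j ∈ F,
        (lam * ((starRingEnd ℂ (a j) / (‖a j‖:ℂ)) * b j)).re = ‖S‖ := by
      rw [← Complex.re_sum, ← Finset.mul_sum, ← hSdef, hl2, Complex.ofReal_re]
    have hsumF : ∑ j ∈ F, ‖a j - ((t:ℂ)*lam) * b j‖
        ≤ nrm x - t * ‖S‖ + t^2 * C := by
      calc ∑ j ∈ F, ‖a j - ((t:ℂ)*lam) * b j‖
          ≤ ∑ j ∈ F, (‖a j‖
              - t * (lam * ((starRingEnd ℂ (a j) / (‖a j‖:ℂ)) * b j)).re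
              + t^2 * (‖b j‖)^2 / (2 * ‖a j‖)) :=
            Finset.sum_le_sum hFle
        _ = ∑ j ∈ F, ‖a j‖
            - t * ∑ j ∈ F, (lam * ((starRingEnd ℂ (a j) / (‖a j‖:ℂ)) * b j)).re
            + t^2 * C := by
            rw [hC, Finset.mul_sum, Finset.mul_sum, ← Finset.sum_sub_distrib,
              ← Finset.sum_add_distrib]
            apply Finset.sum_congr rfl
            intro j _
            ring
        _ = nrm x - t * ‖S‖ + t^2 * C := by rw [hReSum, hnxF]
    have htot : nrm (x - ((t:ℂ)*lam) • y) ≤ nrm x - t * ‖S‖ + t^2 * C + t * Bg := by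
      calc nrm (x - ((t:ℂ)*lam) • y) ≤ ∑ j, ‖a j - ((t:ℂ)*lam) * b j‖ := hle
        _ = ∑ j ∈ F, ‖a j - ((t:ℂ)*lam) * b j‖
            + ∑ j ∈ G, ‖a j - ((t:ℂ)*lam) * b j‖ := hsplitR _
        _ ≤ nrm x - t * ‖S‖ + t^2 * C + t * Bg := by
            rw [hGle] at *
            linarith [hsumF]
    have h7 : t * C < ‖S‖ - Bg := by
      rw [htdef, div_mul_eq_mul_div, div_lt_iff₀ (by linarith)]
      nlinarith
    have h8 : t^2 * C < t * (‖S‖ - Bg) := by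
      have := mul_lt_mul_of_pos_left h7 ht0
      calc t^2 * C = t * (t * C) := by ring
        _ < t * (‖S‖ - Bg) := this
    have h9 := hbest _ hy'
    nlinarith
  -- key3 : unique → cond2
  have key3 : (∀ y ∈ Y, y ≠ 0 → nrm (x - y) > nrm x) →
      ∀ y ∈ Y, y ≠ 0 → ∀ b : Fin N → ℂ, y = ∑ j, b j • u j →
        (∑ j ∈ F, (starRingEnd ℂ (a j) / (‖a j‖ : ℂ)) * b j)
          = ((∑ j ∈ G, ‖b j‖ : ℝ) : ℂ) →
        ∃ j : Fin N, (j : ℕ) < m ∧ (starRingEnd ℂ (a j) * b j).im ≠ 0 := by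
    intro hu y hy hy0 b hb hSeq
    by_contra hcon
    push_neg at hcon
    by_cases hFne : F.Nonempty
    · -- main case
      have hreal : ∀ j ∈ F, (starRingEnd ℂ (a j) / (‖a j‖:ℂ)) * b j
          = ((((starRingEnd ℂ (a j) / (‖a j‖:ℂ)) * b j).re : ℝ) : ℂ) := by
        intro j hj
        have hjm := (memF j).mp hj
        have habj : (‖a j‖ : ℂ) ≠ 0 := by
          exact_mod_cast (habsF j hjm).ne'
        have him : ((starRingEnd ℂ (a j) / (‖a j‖:ℂ)) * b j).im = 0 := by
          have h11 : starRingEnd ℂ (a j) * b j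
              = (‖a j‖:ℂ) * ((starRingEnd ℂ (a j) / (‖a j‖:ℂ)) * b j) := by
            field_simp
          have h12 := hcon j hjm
          rw [h11] at h12
          rw [Complex.mul_im] at h12
          simp only [Complex.ofReal_re, Complex.ofReal_im, zero_mul, add_zero] at h12
          rcases mul_eq_zero.mp h12 with h | h
          · exact absurd h (ne_of_gt (habsF j hjm))
          · exact h
        apply Complex.ext
        · simp
        · simpa using him
      set t := F.inf' hFne (fun j => ‖a j‖ / (‖b j‖ + 1)) with htdef
      have ht0 : 0 < t := by
        rw [htdef, Finset.lt_inf'_iff]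
        intro j hj
        apply div_pos (habsF j ((memF j).mp hj))
        have := norm_nonneg (b j)
        linarith
      have hty : ((t:ℂ)) • y ∈ Y := Y.smul_mem _ hy
      have hty0 : ((t:ℂ)) • y ≠ 0 := by
        apply smul_ne_zero _ hy0
        exact_mod_cast ht0.ne'
      have hrep : x - (t:ℂ) • y = ∑ j, (a j - (t:ℂ) * b j) • u j := by
        conv_lhs => rw [hxa, hb]
        rw [Finset.smul_sum, ← Finset.sum_sub_distrib]
        apply Finset.sum_congr rfl
        intro j _
        rw [smul_smul, ← sub_smul]
      have hle : nrm (x - (t:ℂ) • y) ≤ ∑ j, ‖a j - (t:ℂ) * b j‖ := by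
        rw [hrep]
        exact myNrmLe u nrm hsmul hball _
      have hGs : ∑ j ∈ G, ‖a j - (t:ℂ)*b j‖ = t * ∑ j ∈ G, ‖b j‖ := by
        rw [Finset.mul_sum]
        apply Finset.sum_congr rfl
        intro j hj
        rw [haG j ((memG j).mp hj), zero_sub, norm_neg, norm_mul,
          Complex.norm_real, Real.norm_eq_abs, abs_of_pos ht0]
      have hFs : ∑ j ∈ F, ‖a j - (t:ℂ)*b j‖
          = ∑ j ∈ F, (‖a j‖
              - t * (((starRingEnd ℂ (a j) / (‖a j‖:ℂ)) * b j).re)) := by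
        apply Finset.sum_congr rfl
        intro j hj
        have hjm := (memF j).mp hj
        rw [myAbsFactor (a j) _ ((ha j).mpr hjm)]
        have hw : (starRingEnd ℂ (a j) / (‖a j‖:ℂ)) * ((t:ℂ) * b j)
            = (t:ℂ) * ((starRingEnd ℂ (a j) / (‖a j‖:ℂ)) * b j) := by ring
        rw [hw, hreal j hj, ← Complex.ofReal_mul, ← Complex.ofReal_sub, Complex.norm_real, Real.norm_eq_abs]
        have h13 : t ≤ ‖a j‖ / (‖b j‖ + 1) := Finset.inf'_le _ hj
        have h14 : |(((starRingEnd ℂ (a j) / (‖a j‖:ℂ)) * b j).re)|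
            ≤ ‖b j‖ := by
          calc |(((starRingEnd ℂ (a j) / (‖a j‖:ℂ)) * b j).re)|
              ≤ ‖(starRingEnd ℂ (a j) / (‖a j‖:ℂ)) * b j‖ :=
                Complex.abs_re_le_norm _
            _ = ‖b j‖ := by rw [norm_mul, hσ1 j hjm, one_mul]
        have h15 : t * (‖b j‖ + 1) ≤ ‖a j‖ := by
          rw [← le_div_iff₀ (by linarith [norm_nonneg (b j)])]
          exact h13
        have h16 : t * (((starRingEnd ℂ (a j) / (‖a j‖:ℂ)) * b j).re)
            < ‖a j‖ := by
          have := le_abs_self (((starRingEnd ℂ (a j) / (‖a j‖:ℂ)) * b j).re)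
          nlinarith
        rw [abs_of_nonneg (by linarith)]
        simp
      have hReS : ∑ j ∈ F, (((starRingEnd ℂ (a j) / (‖a j‖:ℂ)) * b j).re)
          = ∑ j ∈ G, ‖b j‖ := by
        rw [← Complex.re_sum, hSeq, Complex.ofReal_re]
      have htot : nrm (x - (t:ℂ) • y) ≤ nrm x := by
        calc nrm (x - (t:ℂ) • y) ≤ ∑ j, ‖a j - (t:ℂ)*b j‖ := hle
          _ = ∑ j ∈ F, ‖a j - (t:ℂ)*b j‖
              + ∑ j ∈ G, ‖a j - (t:ℂ)*b j‖ := hsplitR _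
          _ = (∑ j ∈ F, ‖a j‖
                - t * ∑ j ∈ F, (((starRingEnd ℂ (a j) / (‖a j‖:ℂ)) * b j).re))
              + t * ∑ j ∈ G, ‖b j‖ := by
              rw [hFs, hGs, Finset.sum_sub_distrib, ← Finset.mul_sum]
          _ = nrm x := by rw [hReS, hnxF]; ring
      have := hu _ hty hty0
      linarith
    · -- F empty
      have hF0 : F = ∅ := Finset.not_nonempty_iff_eq_empty.mp hFne
      have hGall : ∀ j : Fin N, m ≤ (j:ℕ) := by
        intro j
        by_contra hj
        exact hFne ⟨j, (memF j).mpr (not_le.mp hj)⟩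
      have h17 : (0:ℂ) = ((∑ j ∈ G, ‖b j‖ : ℝ):ℂ) := by
        rw [← hSeq, hF0, Finset.sum_empty]
      have hB0 : ∑ j ∈ G, ‖b j‖ = 0 := by exact_mod_cast h17.symm
      have hb0 : ∀ j : Fin N, b j = 0 := by
        intro j
        have hmem : j ∈ G := (memG j).mpr (hGall j)
        have := (Finset.sum_eq_zero_iff_of_nonneg
          (fun j _ => norm_nonneg (b j))).mp hB0 j hmem
        exact norm_eq_zero.mp this
      apply hy0
      rw [hb]
      apply Finset.sum_eq_zero
      intro j _
      rw [hb0 j, zero_smul]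
  -- key4 : P ∧ cond2 → unique
  have key4 : (∀ y ∈ Y, ∀ b : Fin N → ℂ, y = ∑ j, b j • u j →
        ‖∑ j ∈ F, (starRingEnd ℂ (a j) / (‖a j‖ : ℂ)) * b j‖
          ≤ ∑ j ∈ G, ‖b j‖) →
      (∀ y ∈ Y, y ≠ 0 → ∀ b : Fin N → ℂ, y = ∑ j, b j • u j →
        (∑ j ∈ F, (starRingEnd ℂ (a j) / (‖a j‖ : ℂ)) * b j)
          = ((∑ j ∈ G, ‖b j‖ : ℝ) : ℂ) →
        ∃ j : Fin N, (j : ℕ) < m ∧ (starRingEnd ℂ (a j) * b j).im ≠ 0) →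
      ∀ y ∈ Y, y ≠ 0 → nrm x < nrm (x - y) := by
    intro hP h2 y hy hy0
    rcases lt_or_eq_of_le (key2 hP y hy) with h | h
    · exact h
    exfalso
    obtain ⟨c, hc1, hc2⟩ := myNrmRep u nrm hadd hsmul hdef hball (x - y)
    have hyb := hrepy y c hc1
    have hPy := hP y hy _ hyb
    have hGeq : ∑ j ∈ G, ‖a j - c j‖ = ∑ j ∈ G, ‖c j‖ := by
      apply Finset.sum_congr rfl
      intro j hj
      rw [haG j ((memG j).mp hj), zero_sub, norm_neg]
    have hre : (∑ j ∈ F, (starRingEnd ℂ (a j) / (‖a j‖:ℂ)) * (a j - c j)).re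
        = ∑ j ∈ F, ‖a j‖
          - ∑ j ∈ F, ((starRingEnd ℂ (a j) / (‖a j‖:ℂ)) * c j).re := by
      rw [Complex.re_sum, ← Finset.sum_sub_distrib]
      apply Finset.sum_congr rfl
      intro j hj
      rw [mul_sub, hσa j ((memF j).mp hj)]
      simp [Complex.sub_re]
    have hrele : ∀ j ∈ F,
        ((starRingEnd ℂ (a j) / (‖a j‖:ℂ)) * c j).re ≤ ‖c j‖ := by
      intro j hj
      calc ((starRingEnd ℂ (a j) / (‖a j‖:ℂ)) * c j).re
          ≤ ‖(starRingEnd ℂ (a j) / (‖a j‖:ℂ)) * c j‖ :=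
            Complex.re_le_norm _
        _ = ‖c j‖ := by rw [norm_mul, hσ1 j ((memF j).mp hj), one_mul]
    have h4 := Complex.re_le_norm
      (∑ j ∈ F, (starRingEnd ℂ (a j) / (‖a j‖:ℂ)) * (a j - c j))
    have h5 : ‖∑ j ∈ F, (starRingEnd ℂ (a j) / (‖a j‖:ℂ)) * (a j - c j)‖
        ≤ ∑ j ∈ G, ‖c j‖ := by rw [← hGeq]; exact hPy
    have h6 : ∑ j ∈ F, ‖c j‖ + ∑ j ∈ G, ‖c j‖ ≤ nrm x := by
      rw [h, ← hsplitR]; exact hc2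
    have h7 := Finset.sum_le_sum hrele
    have h4' : ∑ j ∈ F, ‖a j‖
          - ∑ j ∈ F, ((starRingEnd ℂ (a j) / (‖a j‖:ℂ)) * c j).re
        ≤ ‖∑ j ∈ F, (starRingEnd ℂ (a j) / (‖a j‖:ℂ)) * (a j - c j)‖ := by
      rw [← hre]
      exact h4
    rw [hnxF] at h6
    -- equalities
    have eA : ∑ j ∈ F, ((starRingEnd ℂ (a j) / (‖a j‖:ℂ)) * c j).re
        = ∑ j ∈ F, ‖c j‖ := by
      apply le_antisymm h7
      linarith
    have eRe : (∑ j ∈ F, (starRingEnd ℂ (a j) / (‖a j‖:ℂ)) * (a j - c j)).re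
        = ‖∑ j ∈ F, (starRingEnd ℂ (a j) / (‖a j‖:ℂ)) * (a j - c j)‖ := by
      apply le_antisymm h4
      rw [hre, eA]
      linarith
    have eAbs : ‖∑ j ∈ F, (starRingEnd ℂ (a j) / (‖a j‖:ℂ)) * (a j - c j)‖
        = ∑ j ∈ G, ‖c j‖ := by
      apply le_antisymm h5
      linarith
    have hterm := (Finset.sum_eq_sum_iff_of_le hrele).mp eA
    have hcr : ∀ j ∈ F, (starRingEnd ℂ (a j) / (‖a j‖:ℂ)) * c j
        = ((‖c j‖ : ℝ) : ℂ) := by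
      intro j hj
      have hjm := (memF j).mp hj
      have h8 : ‖(starRingEnd ℂ (a j) / (‖a j‖:ℂ)) * c j‖
          = ‖c j‖ := by rw [norm_mul, hσ1 j hjm, one_mul]
      have h9 := myReEqAbs (z := (starRingEnd ℂ (a j) / (‖a j‖:ℂ)) * c j)
        (by rw [h8]; exact hterm j hj)
      rw [h8] at h9
      exact h9
    have hS : (∑ j ∈ F, (starRingEnd ℂ (a j) / (‖a j‖:ℂ)) * (a j - c j))
        = ((∑ j ∈ G, ‖a j - c j‖ : ℝ) : ℂ) := by
      have h10 := myReEqAbs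
        (z := ∑ j ∈ F, (starRingEnd ℂ (a j) / (‖a j‖:ℂ)) * (a j - c j)) eRe
      rw [h10, eAbs, ← hGeq]
    obtain ⟨j, hjm, hjim⟩ := h2 y hy hy0 _ hyb hS
    apply hjim
    have hjF : j ∈ F := (memF j).mpr hjm
    have habj : (‖a j‖ : ℂ) ≠ 0 := by exact_mod_cast (habsF j hjm).ne'
    have e10 : starRingEnd ℂ (a j)
        = (‖a j‖:ℂ) * (starRingEnd ℂ (a j) / (‖a j‖:ℂ)) := by
      field_simp
    have e9 : starRingEnd ℂ (a j) * (a j - c j)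
        = (‖a j‖ : ℂ) * ((‖a j‖ : ℂ) - (‖c j‖:ℂ)) := by
      calc starRingEnd ℂ (a j) * (a j - c j)
          = (‖a j‖:ℂ)
            * ((starRingEnd ℂ (a j) / (‖a j‖:ℂ)) * (a j - c j)) := by
            field_simp
        _ = (‖a j‖:ℂ)
            * ((starRingEnd ℂ (a j) / (‖a j‖:ℂ)) * a j
              - (starRingEnd ℂ (a j) / (‖a j‖:ℂ)) * c j) := by rw [mul_sub]
        _ = (‖a j‖ : ℂ) * ((‖a j‖ : ℂ) - (‖c j‖:ℂ)) := by
            rw [hσa j hjm, hcr j hjF]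
    rw [e9]
    simp [Complex.mul_im, Complex.sub_im, Complex.ofReal_im, Complex.sub_re, Complex.ofReal_re]
  -- assemble
  refine ⟨⟨key1, fun hP y hy => key2 hP y hy⟩, ?_, ?_⟩
  · intro hu
    have hbest : ∀ y ∈ Y, nrm (x - y) ≥ nrm x := by
      intro y hy
      by_cases h : y = 0
      · rw [h, sub_zero]
      · exact le_of_lt (hu y hy h)
    exact ⟨key1 hbest, key3 hu⟩
  · rintro ⟨hP, h2⟩ y hy hy0
    exact key4 hP h2 y hy hy0
end

section
/- Let x, y ∈ ℂ be complex numbers with x ≠ 0. Then for every real number t satisfying |t·y| ≤ |x|/2 we have |x − t·y| ≥ |x| − t·Re(conj(x)·y)/|x| + t²·Im(conj(x)·y)²/(4|x|³). -/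
set_option maxHeartbeats 800000


theorem stmt7 (x y : ℂ) (hx : x ≠ 0) (t : ℝ)
    (ht : ‖(t : ℂ) * y‖ ≤ ‖x‖ / 2) :
    ‖x - (t : ℂ) * y‖ ≥
      ‖x‖ - t * (starRingEnd ℂ x * y).re / ‖x‖
        + t ^ 2 * (starRingEnd ℂ x * y).im ^ 2 / (4 * ‖x‖ ^ 3) := by
  set a := ‖x‖ with ha_def
  set b := ‖x - (t : ℂ) * y‖ with hb_def
  set c := ‖(t : ℂ) * y‖ with hc_def
  set r := (starRingEnd ℂ x * y).re with hr_def
  set i := (starRingEnd ℂ x * y).im with hi_def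
  have ha : 0 < a := norm_pos_iff.mpr hx
  have hb : 0 ≤ b := norm_nonneg _
  have hc0 : 0 ≤ c := norm_nonneg _
  -- identity 1 : b^2 = a^2 - 2*(t*r) + c^2
  have h1 : b ^ 2 = a ^ 2 - 2 * (t * r) + c ^ 2 := by
    rw [hb_def, ha_def, hc_def, Complex.sq_norm, Complex.sq_norm, Complex.sq_norm,
      Complex.normSq_sub]
    have : (x * (starRingEnd ℂ) ((t : ℂ) * y)).re = t * r := by
      rw [hr_def]
      simp [Complex.mul_re, Complex.mul_im, Complex.conj_re, Complex.conj_im]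
      ring
    rw [this]; ring
  -- identity 2 : a^2 * c^2 = t^2 * (r^2 + i^2)
  have h2 : a ^ 2 * c ^ 2 = t ^ 2 * (r ^ 2 + i ^ 2) := by
    have : a * c = ‖(t : ℂ) * (starRingEnd ℂ x * y)‖ := by
      rw [ha_def, hc_def, ← Complex.norm_conj x, ← norm_mul]
      ring_nf
    have h3 : (a * c) ^ 2 = t ^ 2 * (r ^ 2 + i ^ 2) := by
      rw [this, Complex.sq_norm, Complex.normSq_mul, Complex.normSq_apply,
        Complex.normSq_apply]
      simp [hr_def, hi_def]
      ring
    nlinarith [h3]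
  -- bound |t*r| ≤ a*c
  have htr : |t * r| ≤ a * c := by
    have h4 : a * c = ‖(t : ℂ) * (starRingEnd ℂ x * y)‖ := by
      rw [ha_def, hc_def, ← Complex.norm_conj x, ← norm_mul]
      ring_nf
    have h5 : ((t : ℂ) * (starRingEnd ℂ x * y)).re = t * r := by
      simp [hr_def, Complex.mul_re]
    calc |t * r| = |((t : ℂ) * (starRingEnd ℂ x * y)).re| := by rw [h5]
      _ ≤ ‖(t : ℂ) * (starRingEnd ℂ x * y)‖ := Complex.abs_re_le_norm _
      _ = a * c := h4.symm
  have htr' : -(a * c) ≤ t * r ∧ t * r ≤ a * c := abs_le.mp htr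
  have hca : c ≤ a / 2 := ht
  -- rewrite the RHS with a single denominator
  have hrw : a - t * r / a + t ^ 2 * i ^ 2 / (4 * a ^ 3)
      = (4 * a ^ 4 - 4 * (t * r) * a ^ 2 + t ^ 2 * i ^ 2) / (4 * a ^ 3) := by
    field_simp
  rw [ge_iff_le, hrw, div_le_iff₀ (by positivity)]
  set L := 4 * a ^ 4 - 4 * (t * r) * a ^ 2 + t ^ 2 * i ^ 2 with hL_def
  have hti : t ^ 2 * i ^ 2 ≤ a ^ 2 * c ^ 2 := by nlinarith [sq_nonneg (t * r)]
  have hac : a * c ≤ a ^ 2 / 2 := by nlinarith [mul_le_mul_of_nonneg_left hca ha.le]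
  have hc2 : c ^ 2 ≤ a ^ 2 / 4 := by nlinarith [mul_le_mul_of_nonneg_left hca hc0]
  have hL : 0 < L := by
    rw [hL_def]
    nlinarith [mul_le_mul_of_nonneg_right htr'.2 (sq_nonneg a),
      mul_le_mul_of_nonneg_right hac (sq_nonneg a), sq_nonneg (t * i),
      pow_pos ha 4]
  have key : (b * (4 * a ^ 3)) ^ 2 - L ^ 2
      = (t ^ 2 * i ^ 2) * (8 * a ^ 4 + 8 * (t * r) * a ^ 2 - t ^ 2 * i ^ 2) := by
    rw [hL_def]
    linear_combination (16 * a ^ 6) * h1 + (16 * a ^ 4) * h2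
  have hfac : 0 ≤ 8 * a ^ 4 + 8 * (t * r) * a ^ 2 - t ^ 2 * i ^ 2 := by
    nlinarith [mul_le_mul_of_nonneg_right htr'.1 (sq_nonneg a),
      mul_le_mul_of_nonneg_right hac (sq_nonneg a), hti,
      mul_le_mul_of_nonneg_right hc2 (sq_nonneg a)]
  have hsq : L ^ 2 ≤ (b * (4 * a ^ 3)) ^ 2 := by
    nlinarith [key, mul_nonneg (mul_nonneg (sq_nonneg t) (sq_nonneg i)) hfac]
  have hM : 0 ≤ b * (4 * a ^ 3) := by positivity
  nlinarith [hsq, hL, hM, mul_pos hL hL]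
end

section
/- Let X be a normed space over 𝕂 (𝕂 = ℝ or ℂ), let Y ⊆ X be a finite-dimensional linear subspace, and let x ∈ X \ Y be a vector such that 0 is the unique best approximation for x in Y. Then for every d > 0 there exists a constant r_d > 0 such that ‖x − y‖ ≥ ‖x‖ + r_d‖y‖ for every y ∈ Y with ‖y‖ ≥ d. -/
theorem stmt8 (𝕜 : Type*) [RCLike 𝕜] (X : Type*) [NormedAddCommGroup X] [NormedSpace 𝕜 X]
    (Y : Submodule 𝕜 X) [FiniteDimensional 𝕜 Y] (x : X) (hx : x ∉ Y)
    (huniq : ∀ y ∈ Y, y ≠ 0 → ‖x - y‖ > ‖x‖)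
    (d : ℝ) (hd : 0 < d) :
    ∃ r > 0, ∀ y ∈ Y, d ≤ ‖y‖ → ‖x - y‖ ≥ ‖x‖ + r * ‖y‖ := by
  have hx0 : x ≠ 0 := fun h => hx (h ▸ Y.zero_mem)
  have hxn : (0:ℝ) < ‖x‖ := norm_pos_iff.mpr hx0
  set R : ℝ := max (4 * ‖x‖) d with hRdef
  -- the key fact for large y
  have hlarge : ∀ y : X, R < ‖y‖ → ‖x - y‖ ≥ ‖x‖ + (1/2) * ‖y‖ := by
    intro y hy
    have h4 : 4 * ‖x‖ ≤ R := le_max_left _ _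
    have h1 : ‖y‖ - ‖x‖ ≤ ‖x - y‖ := by
      have h := norm_sub_le x (x - y)
      rw [sub_sub_cancel] at h
      linarith
    have : 4 * ‖x‖ < ‖y‖ := lt_of_le_of_lt h4 hy
    linarith
  set T : Set Y := {y : Y | d ≤ ‖(y:X)‖ ∧ ‖(y:X)‖ ≤ R} with hTdef
  have hTc : IsCompact T := by
    apply Metric.isCompact_of_isClosed_isBounded
    · exact IsClosed.inter
        (isClosed_le continuous_const (continuous_norm.comp continuous_subtype_val))
        (isClosed_le (continuous_norm.comp continuous_subtype_val) continuous_const)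
    · apply (Metric.isBounded_iff_subset_closedBall 0).mpr
      refine ⟨R, fun y hy => ?_⟩
      simp only [Metric.mem_closedBall, dist_zero_right]
      exact hy.2
  set g : Y → ℝ := fun y => (‖x - (y:X)‖ - ‖x‖) / ‖(y:X)‖ with hgdef
  have hgc : ContinuousOn g T := by
    apply ContinuousOn.div
    · exact ((continuous_const.sub continuous_subtype_val).norm.sub continuous_const).continuousOn
    · exact (continuous_subtype_val.norm).continuousOn
    · intro y hy
      exact ne_of_gt (lt_of_lt_of_le hd hy.1)
  by_cases hTne : T.Nonempty
  · obtain ⟨y0, hy0T, hmin'⟩ := hTc.exists_isMinOn hTne hgc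
    have hmin : ∀ z ∈ T, g y0 ≤ g z := fun z hz => hmin' hz
    have hy0n : (0:ℝ) < ‖(y0:X)‖ := lt_of_lt_of_le hd hy0T.1
    have hy0ne : (y0:X) ≠ 0 := norm_pos_iff.mp hy0n
    have hm : 0 < g y0 := div_pos (by linarith [huniq y0 y0.2 hy0ne]) hy0n
    refine ⟨min (g y0) (1/2), lt_min hm (by norm_num), ?_⟩
    intro y hyY hyd
    by_cases hyR : ‖y‖ ≤ R
    · have hyT : (⟨y, hyY⟩ : Y) ∈ T := ⟨hyd, hyR⟩
      have := hmin ⟨y, hyY⟩ hyT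
      have hyn : (0:ℝ) < ‖y‖ := lt_of_lt_of_le hd hyd
      have h2 : g y0 * ‖y‖ ≤ ‖x - y‖ - ‖x‖ := by
        calc g y0 * ‖y‖ ≤ (‖x - y‖ - ‖x‖) / ‖y‖ * ‖y‖ := by
              exact mul_le_mul_of_nonneg_right (hmin ⟨y, hyY⟩ hyT) hyn.le
          _ = ‖x - y‖ - ‖x‖ := div_mul_cancel₀ _ (ne_of_gt hyn)
      have hrle : min (g y0) (1/2) * ‖y‖ ≤ g y0 * ‖y‖ :=
        mul_le_mul_of_nonneg_right (min_le_left _ _) (norm_nonneg y)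
      linarith
    · have := hlarge y (lt_of_not_ge hyR)
      have hrle : min (g y0) (1/2) * ‖y‖ ≤ (1/2) * ‖y‖ :=
        mul_le_mul_of_nonneg_right (min_le_right _ _) (norm_nonneg y)
      linarith
  · refine ⟨1/2, by norm_num, ?_⟩
    intro y hyY hyd
    by_cases hyR : ‖y‖ ≤ R
    · exact absurd ⟨hyd, hyR⟩ (fun h => hTne ⟨⟨y, hyY⟩, h⟩)
    · exact hlarge y (lt_of_not_ge hyR)
end

section
/- Let Y be a linear subspace of the complex space ℓ₁ⁿ and suppose y₀ ∈ Y is the unique best approximation in Y for a vector x ∈ ℓ₁ⁿ \ Y. Then y₀ is a 2-strongly unique best approximation for x in Y: there exists r > 0 such that ‖x − y‖₁² ≥ ‖x − y₀‖₁² + r‖y − y₀‖₁² for all y ∈ Y. -/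
private lemma sqrt_key {s v D : ℝ} (hD : 0 < D) (hle : Real.sqrt (s^2 + v^2) ≤ D) :
    s + v^2 / (2*D) ≤ Real.sqrt (s^2 + v^2) := by
  set L := Real.sqrt (s^2+v^2) with hLdef
  have hL0 : 0 ≤ L := Real.sqrt_nonneg _
  have hLsq : L^2 = s^2 + v^2 := Real.sq_sqrt (by positivity)
  have hsL : s ≤ L := by nlinarith [sq_nonneg v, sq_nonneg (s - L), sq_nonneg (s + L)]
  have h2 : v^2 ≤ (L - s) * (2*D) := by nlinarith
  have h3 : v^2/(2*D) ≤ L - s := by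
    rw [div_le_iff₀ (by positivity)]; linarith
  linarith

private lemma abs_sub_eq (a z : ℂ) (ha : a ≠ 0) :
    ‖a - z‖ =
      Real.sqrt ((‖a‖ - ((starRingEnd ℂ) (a / ‖a‖) * z).re)^2
        + (((starRingEnd ℂ) (a / ‖a‖) * z).im)^2) := by
  have haa : (‖a‖ : ℝ) ≠ 0 := (norm_ne_zero_iff.mpr ha)
  set σ : ℂ := a / ‖a‖ with hσdef
  have hσ : ‖σ‖ = 1 := by
    simp [hσdef, norm_div, Complex.norm_real, Real.norm_eq_abs, abs_of_nonneg (norm_nonneg a),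
      div_self haa]
  have hkey : a - z = σ * ((‖a‖ : ℂ) - (starRingEnd ℂ) σ * z) := by
    have h1 : σ * (‖a‖ : ℂ) = a := by
      rw [hσdef, div_mul_cancel₀]
      exact_mod_cast haa
    have h2 : σ * ((starRingEnd ℂ) σ * z) = z := by
      rw [← mul_assoc, Complex.mul_conj, ← Complex.sq_norm, hσ]
      simp
    rw [mul_sub, h1, h2]
  rw [hkey, norm_mul, hσ, one_mul, Complex.norm_def, Complex.normSq_apply]
  congr 1
  simp [Complex.sub_re, Complex.sub_im, Complex.ofReal_re, Complex.ofReal_im]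
  ring

private lemma coord_lower (a z : ℂ) (ha : a ≠ 0) :
    ‖a‖ - ((starRingEnd ℂ) (a / ‖a‖) * z).re
      + (((starRingEnd ℂ) (a / ‖a‖) * z).im)^2
        / (2*(‖a‖ + ‖z‖)) ≤ ‖a - z‖ := by
  rw [abs_sub_eq a z ha]
  have ha0 : 0 < ‖a‖ := norm_pos_iff.mpr ha
  have hz0 : 0 ≤ ‖z‖ := norm_nonneg z
  apply sqrt_key
  · positivity
  · rw [← abs_sub_eq a z ha]
    simpa [sub_eq_add_neg] using norm_add_le a (-z)

private lemma coord_upper (a z : ℂ) (ha : a ≠ 0) (hz : ‖z‖ ≤ ‖a‖ / 2) :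
    ‖a - z‖ ≤ ‖a‖ - ((starRingEnd ℂ) (a / ‖a‖) * z).re
      + (((starRingEnd ℂ) (a / ‖a‖) * z).im)^2 / ‖a‖ := by
  have ha0 : 0 < ‖a‖ := norm_pos_iff.mpr ha
  set w : ℂ := (starRingEnd ℂ) (a / ‖a‖) * z with hwdef
  have hwabs : ‖w‖ = ‖z‖ := by
    have haa : (‖a‖ : ℝ) ≠ 0 := ne_of_gt ha0
    simp [hwdef, norm_mul, Complex.norm_conj, norm_div, Complex.norm_real, Real.norm_eq_abs,
      abs_of_nonneg (norm_nonneg a), div_self haa]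
  have hre : w.re ≤ ‖z‖ := hwabs ▸ (Complex.re_le_norm w)
  set s : ℝ := ‖a‖ - w.re with hsdef
  have hs : ‖a‖ / 2 ≤ s := by
    have := Complex.re_le_norm w
    rw [hwabs] at this
    simp only [hsdef]; linarith
  have hs0 : 0 < s := by linarith
  rw [abs_sub_eq a z ha, ← hwdef, ← hsdef]
  have h1 : Real.sqrt (s^2 + w.im^2) ≤ s + w.im^2/(2*s) := by
    have hexp : (s + w.im^2/(2*s))^2 = s^2 + w.im^2 + (w.im^2/(2*s))^2 := by
      field_simp; ring
    have hle : s^2 + w.im^2 ≤ (s + w.im^2/(2*s))^2 := by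
      rw [hexp]; nlinarith [sq_nonneg (w.im^2/(2*s))]
    calc Real.sqrt (s^2 + w.im^2) ≤ Real.sqrt ((s + w.im^2/(2*s))^2) :=
          Real.sqrt_le_sqrt hle
      _ = s + w.im^2/(2*s) := Real.sqrt_sq (by positivity)
  have h2 : w.im^2/(2*s) ≤ w.im^2 / ‖a‖ := by
    apply div_le_div_of_nonneg_left (sq_nonneg _) ha0
    linarith
  calc Real.sqrt (s^2 + w.im^2) ≤ s + w.im^2/(2*s) := h1
    _ ≤ s + w.im^2 / ‖a‖ := by linarith

private lemma coord_exact (a z : ℂ) (ha : a ≠ 0)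
    (him : ((starRingEnd ℂ) (a / ‖a‖) * z).im = 0)
    (hz : ‖z‖ ≤ ‖a‖) :
    ‖a - z‖ = ‖a‖ - ((starRingEnd ℂ) (a / ‖a‖) * z).re := by
  have ha0 : 0 < ‖a‖ := norm_pos_iff.mpr ha
  set w : ℂ := (starRingEnd ℂ) (a / ‖a‖) * z with hwdef
  have hwabs : ‖w‖ = ‖z‖ := by
    have haa : (‖a‖ : ℝ) ≠ 0 := ne_of_gt ha0
    simp [hwdef, norm_mul, Complex.norm_conj, norm_div, Complex.norm_real, Real.norm_eq_abs,
      abs_of_nonneg (norm_nonneg a), div_self haa]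
  have hre : w.re ≤ ‖z‖ := hwabs ▸ (Complex.re_le_norm w)
  rw [abs_sub_eq a z ha, ← hwdef, him]
  rw [show (0:ℝ)^2 = 0 by norm_num, add_zero, Real.sqrt_sq (by linarith)]

set_option maxHeartbeats 2000000 in
theorem stmt9 (n : ℕ) (Y : Submodule ℂ (Fin n → ℂ)) (x : Fin n → ℂ) (hx : x ∉ Y)
    (y₀ : Fin n → ℂ) (hy₀ : y₀ ∈ Y)
    (huniq : ∀ y ∈ Y, y ≠ y₀ →
      (∑ j, ‖(x - y) j‖) > ∑ j, ‖(x - y₀) j‖) :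
    ∃ r > 0, ∀ y ∈ Y,
      (∑ j, ‖(x - y) j‖) ^ 2 ≥
        (∑ j, ‖(x - y₀) j‖) ^ 2 + r * (∑ j, ‖(y - y₀) j‖) ^ 2 := by
  classical
  rcases Nat.eq_zero_or_pos n with hn | hn
  · subst hn
    have hx0 : x = 0 := funext fun j => Fin.elim0 j
    exact absurd (hx0 ▸ Y.zero_mem) hx
  have hFN : (Finset.univ : Finset (Fin n)).Nonempty := ⟨⟨0, hn⟩, Finset.mem_univ _⟩
  set a : Fin n → ℂ := fun j => x j - y₀ j with hadef
  set w : (Fin n → ℂ) → Fin n → ℂ :=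
    fun z j => (starRingEnd ℂ) (a j / ‖a j‖) * z j with hwdef
  set φ : (Fin n → ℂ) → ℝ :=
    fun z => ∑ j, (if a j = 0 then ‖z j‖ else -(w z j).re) with hφdef
  set Q : (Fin n → ℂ) → ℝ := fun z => ∑ j, (w z j).im ^ 2 with hQdef
  set T : (Fin n → ℂ) → ℝ := fun z => ∑ j, ‖z j‖ with hTdef
  -- basic facts
  have hw0 : ∀ z j, a j = 0 → w z j = 0 := by
    intro z j h; simp [hwdef, h]
  have hTnn : ∀ z, 0 ≤ T z := by
    intro z; exact Finset.sum_nonneg fun j _ => norm_nonneg _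
  have hTzero : ∀ z, T z = 0 → z = 0 := by
    intro z hz
    funext j
    have := (Finset.sum_eq_zero_iff_of_nonneg
      (fun j _ => norm_nonneg (z j))).mp hz j (Finset.mem_univ j)
    simpa using this
  have hane : ∃ j, a j ≠ 0 := by
    by_contra h
    push_neg at h
    have : x = y₀ := by
      funext j
      have := h j
      simpa [hadef, sub_eq_zero] using this
    exact hx (this ▸ hy₀)
  have hN₀ : 0 < T a := by
    obtain ⟨j, hj⟩ := hane
    have h1 : ‖a j‖ ≤ T a :=
      Finset.single_le_sum (fun i _ => norm_nonneg (a i)) (Finset.mem_univ j)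
    exact lt_of_lt_of_le (norm_pos_iff.mpr hj) h1
  have habs_le : ∀ z j, ‖z j‖ ≤ T z := by
    intro z j
    exact Finset.single_le_sum (fun i _ => norm_nonneg (z i)) (Finset.mem_univ j)
  have hNy : ∀ y : Fin n → ℂ, (∑ j, ‖(x - y) j‖)
      = ∑ j, ‖a j - (y j - y₀ j)‖ := by
    intro y
    apply Finset.sum_congr rfl
    intro j _
    congr 1
    simp [hadef]
  have hN₀y : (∑ j, ‖(x - y₀) j‖) = T a := by
    rw [hNy y₀]
    simp [hTdef]
  have hTy : ∀ y : Fin n → ℂ, (∑ j, ‖(y - y₀) j‖) = T (y - y₀) := by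
    intro y; rfl
  have hQnn : ∀ z, 0 ≤ Q z := fun z => Finset.sum_nonneg fun j _ => sq_nonneg _
  -- real-scalar homogeneity
  have hwsmul : ∀ (c : ℝ) (z : Fin n → ℂ) (j : Fin n), w ((c:ℂ) • z) j = (c:ℂ) * w z j := by
    intro c z j
    simp only [hwdef, Pi.smul_apply, smul_eq_mul]
    ring
  have hφh : ∀ (c : ℝ), 0 ≤ c → ∀ z, φ ((c:ℂ) • z) = c * φ z := by
    intro c hc z
    simp only [hφdef, Finset.mul_sum]
    apply Finset.sum_congr rfl
    intro j _
    by_cases h : a j = 0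
    · simp [h, abs_of_nonneg hc]
    · simp only [if_neg h, hwsmul, mul_assoc, Complex.re_ofReal_mul]
      ring
  have hQh : ∀ (c : ℝ) (z : Fin n → ℂ), Q ((c:ℂ) • z) = c^2 * Q z := by
    intro c z
    simp only [hQdef, Finset.mul_sum]
    apply Finset.sum_congr rfl
    intro j _
    simp only [hwsmul, mul_assoc, Complex.im_ofReal_mul]
    ring
  have hTh : ∀ (c : ℝ), 0 ≤ c → ∀ z, T ((c:ℂ) • z) = c * T z := by
    intro c hc z
    simp only [hTdef, Finset.mul_sum]
    apply Finset.sum_congr rfl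
    intro j _
    simp [abs_of_nonneg hc]
  -- main lower bound
  have hM1 : ∀ z : Fin n → ℂ,
      T a + φ z + Q z / (2*(T a + T z)) ≤ ∑ j, ‖a j - z j‖ := by
    intro z
    have hD : 0 < 2*(T a + T z) := by nlinarith [hTnn z]
    have key : ∀ j ∈ Finset.univ, ‖a j‖
        + (if a j = 0 then ‖z j‖ else -(w z j).re)
        + (w z j).im^2 / (2*(T a + T z)) ≤ ‖a j - z j‖ := by
      intro j _
      by_cases h : a j = 0
      · simp [h, hw0 z j h]
      · have h1 := coord_lower (a j) (z j) h
        have hwj : (starRingEnd ℂ) (a j / ‖a j‖) * z j = w z j := rfl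
        rw [hwj] at h1
        have hb0 : 0 < 2*(‖a j‖ + ‖z j‖) := by
          have := norm_pos_iff.mpr h
          have := norm_nonneg (z j)
          linarith
        have h2 : (w z j).im^2 / (2*(T a + T z))
            ≤ (w z j).im^2 / (2*(‖a j‖ + ‖z j‖)) := by
          apply div_le_div_of_nonneg_left (sq_nonneg _) hb0
          have := habs_le a j
          have := habs_le z j
          linarith
        rw [if_neg h]
        linarith
    calc T a + φ z + Q z / (2*(T a + T z))
        = ∑ j, (‖a j‖ + (if a j = 0 then ‖z j‖ else -(w z j).re)
            + (w z j).im^2 / (2*(T a + T z))) := by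
          rw [Finset.sum_add_distrib, Finset.sum_add_distrib, ← Finset.sum_div]
      _ ≤ _ := Finset.sum_le_sum key
  -- minimum modulus
  set μ : ℝ := Finset.univ.inf' hFN (fun j => if a j = 0 then (1:ℝ) else ‖a j‖)
    with hμdef
  have hμ0 : 0 < μ := by
    rw [hμdef, Finset.lt_inf'_iff]
    intro j _
    by_cases h : a j = 0
    · simp [h]
    · simpa [h] using norm_pos_iff.mpr h
  have hμle : ∀ j, a j ≠ 0 → μ ≤ ‖a j‖ := by
    intro j h
    have h2 := Finset.inf'_le (b := j)
      (fun j => if a j = 0 then (1:ℝ) else ‖a j‖) (Finset.mem_univ j)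
    rw [if_neg h] at h2
    exact h2
  -- evaluating the norm at y₀ + t • z
  have hNarg : ∀ (t : ℝ) (z : Fin n → ℂ),
      (∑ j, ‖(x - (y₀ + (t:ℂ) • z)) j‖) = ∑ j, ‖a j - (t:ℂ) * z j‖ := by
    intro t z
    rw [hNy]
    apply Finset.sum_congr rfl
    intro j _
    congr 1
    simp [Pi.add_apply, Pi.smul_apply, smul_eq_mul]
  -- first-order optimality
  have hφ0 : ∀ z, z ∈ Y → 0 ≤ φ z := by
    intro z hzY
    by_contra hneg
    push_neg at hneg
    have hz0 : z ≠ 0 := by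
      rintro rfl
      simp [hφdef, hwdef] at hneg
    set C : ℝ := ∑ j, (w z j).im^2 / ‖a j‖ with hCdef
    have hC0 : 0 ≤ C := Finset.sum_nonneg fun j _ => div_nonneg (sq_nonneg _) (norm_nonneg _)
    have hTz1 : 0 < T z + 1 := by nlinarith [hTnn z]
    set t : ℝ := min (μ / (2*(T z + 1))) ((-φ z) / (2*(C+1))) with htdef
    have ht0 : 0 < t := by
      apply lt_min
      · exact div_pos hμ0 (by linarith)
      · exact div_pos (by linarith) (by linarith)
    have htz : ∀ j, a j ≠ 0 → ‖(t:ℂ) * z j‖ ≤ ‖a j‖ / 2 := by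
      intro j hj
      rw [norm_mul, Complex.norm_real, Real.norm_eq_abs, abs_of_pos ht0]
      have h1 : t ≤ μ / (2*(T z + 1)) := min_le_left _ _
      have h2 : ‖z j‖ ≤ T z := habs_le z j
      have h3 : μ ≤ ‖a j‖ := hμle j hj
      have h4 : t * ‖z j‖ ≤ μ / (2*(T z + 1)) * T z :=
        mul_le_mul h1 h2 (norm_nonneg _) (div_nonneg hμ0.le (by linarith))
      have h5 : μ / (2*(T z + 1)) * T z ≤ μ / 2 := by
        rw [div_mul_eq_mul_div, div_le_div_iff₀ (by linarith) (by norm_num)]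
        nlinarith [hμ0.le, hTnn z]
      linarith
    -- upper bound
    have hupper : ∑ j, ‖a j - (t:ℂ) * z j‖ ≤ T a + t * φ z + t^2 * C := by
      have key : ∀ j ∈ Finset.univ, ‖a j - (t:ℂ) * z j‖ ≤
          ‖a j‖ + t * (if a j = 0 then ‖z j‖ else -(w z j).re)
            + t^2 * ((w z j).im^2 / ‖a j‖) := by
        intro j _
        by_cases h : a j = 0
        · simp [h, hw0 z j h, abs_of_pos ht0]
        · have h1 := coord_upper (a j) ((t:ℂ) * z j) h (htz j h)
          have hwt : (starRingEnd ℂ) (a j / ‖a j‖) * ((t:ℂ) * z j)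
              = (t:ℂ) * w z j := by
            simp only [hwdef]
            ring
          rw [hwt, Complex.re_ofReal_mul, Complex.im_ofReal_mul] at h1
          rw [if_neg h]
          calc ‖a j - (t:ℂ) * z j‖
              ≤ ‖a j‖ - t * (w z j).re
                + (t * (w z j).im)^2 / ‖a j‖ := h1
            _ = ‖a j‖ + t * -(w z j).re
                + t^2 * ((w z j).im^2 / ‖a j‖) := by ring
      calc ∑ j, ‖a j - (t:ℂ) * z j‖
          ≤ ∑ j, (‖a j‖ + t * (if a j = 0 then ‖z j‖ else -(w z j).re)
            + t^2 * ((w z j).im^2 / ‖a j‖)) := Finset.sum_le_sum key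
        _ = T a + t * φ z + t^2 * C := by
            rw [Finset.sum_add_distrib, Finset.sum_add_distrib, ← Finset.mul_sum, ← Finset.mul_sum]
    -- strict inequality from uniqueness
    have hy1 : y₀ + (t:ℂ) • z ∈ Y := Y.add_mem hy₀ (Y.smul_mem _ hzY)
    have hyne : y₀ + (t:ℂ) • z ≠ y₀ := by
      intro h
      have h2 : (t:ℂ) • z = 0 := by
        have := congrArg (· - y₀) h
        simpa using this
      rcases smul_eq_zero.mp h2 with h3 | h3
      · exact Complex.ofReal_ne_zero.mpr (ne_of_gt ht0) h3
      · exact hz0 h3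
    have hkey := huniq _ hy1 hyne
    rw [hN₀y, hNarg t z] at hkey
    have ht2 : t ≤ (-φ z) / (2*(C+1)) := min_le_right _ _
    have ht2' : t * (2*(C+1)) ≤ -φ z := (le_div_iff₀ (by linarith)).mp ht2
    have h5 : t^2*(2*(C+1)) ≤ t*(-φ z) := by nlinarith
    have h6 : t * φ z < 0 := mul_neg_of_pos_of_neg ht0 hneg
    nlinarith [hkey, hupper]
  -- strict positivity on the unit sphere
  have hpos : ∀ z, z ∈ Y → T z = 1 → 0 < φ z + Q z := by
    intro z hzY hTz
    rcases lt_or_ge 0 (φ z + Q z) with h | h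
    · exact h
    exfalso
    have hφz : φ z = 0 := le_antisymm (by nlinarith [hQnn z, hφ0 z hzY]) (hφ0 z hzY)
    have hQz : Q z = 0 := by nlinarith [hφ0 z hzY, hQnn z]
    have him : ∀ j, (w z j).im = 0 := by
      intro j
      have h2 := (Finset.sum_eq_zero_iff_of_nonneg
        (fun j _ => sq_nonneg ((w z j).im))).mp hQz j (Finset.mem_univ j)
      exact pow_eq_zero_iff (two_ne_zero) |>.mp h2
    have hz0 : z ≠ 0 := by
      intro h2
      rw [h2] at hTz
      simp [hTdef] at hTz
    set t : ℝ := μ / 2 with htdef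
    have ht0 : 0 < t := by positivity
    have hexact : ∑ j, ‖a j - (t:ℂ) * z j‖ = T a + t * φ z := by
      have key : ∀ j ∈ Finset.univ, ‖a j - (t:ℂ) * z j‖ =
          ‖a j‖ + t * (if a j = 0 then ‖z j‖ else -(w z j).re) := by
        intro j _
        by_cases h : a j = 0
        · simp [h, hw0 z j h, abs_of_pos ht0]
        · have hwt : (starRingEnd ℂ) (a j / ‖a j‖) * ((t:ℂ) * z j)
              = (t:ℂ) * w z j := by
            simp only [hwdef]
            ring
          have him' : ((starRingEnd ℂ) (a j / ‖a j‖) * ((t:ℂ) * z j)).im = 0 := by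
            rw [hwt, Complex.im_ofReal_mul, him j, mul_zero]
          have habsz : ‖(t:ℂ) * z j‖ ≤ ‖a j‖ := by
            rw [norm_mul, Complex.norm_real, Real.norm_eq_abs, abs_of_pos ht0]
            have h2 : ‖z j‖ ≤ T z := habs_le z j
            have h3 : μ ≤ ‖a j‖ := hμle j h
            rw [hTz] at h2
            calc t * ‖z j‖ ≤ t * 1 := by
                  apply mul_le_mul_of_nonneg_left h2 ht0.le
              _ = μ / 2 := by rw [mul_one]
              _ ≤ ‖a j‖ := by linarith
          have h1 := coord_exact (a j) ((t:ℂ) * z j) h him' habsz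
          rw [hwt, Complex.re_ofReal_mul] at h1
          rw [h1, if_neg h]
          ring
      calc ∑ j, ‖a j - (t:ℂ) * z j‖
          = ∑ j, (‖a j‖
              + t * (if a j = 0 then ‖z j‖ else -(w z j).re)) :=
            Finset.sum_congr rfl key
        _ = T a + t * φ z := by
            rw [Finset.sum_add_distrib, ← Finset.mul_sum]
    have hy1 : y₀ + (t:ℂ) • z ∈ Y := Y.add_mem hy₀ (Y.smul_mem _ hzY)
    have hyne : y₀ + (t:ℂ) • z ≠ y₀ := by
      intro h2
      have h3 : (t:ℂ) • z = 0 := by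
        have := congrArg (· - y₀) h2
        simpa using this
      rcases smul_eq_zero.mp h3 with h4 | h4
      · exact Complex.ofReal_ne_zero.mpr (ne_of_gt ht0) h4
      · exact hz0 h4
    have hkey := huniq _ hy1 hyne
    rw [hN₀y, hNarg t z, hexact, hφz] at hkey
    simp at hkey
  -- continuity
  have hφc : Continuous φ := by
    rw [hφdef]
    apply continuous_finset_sum
    intro j _
    by_cases h : a j = 0
    · simpa [h] using (continuous_apply j).norm
    · simp only [if_neg h, hwdef]
      exact (Complex.continuous_re.comp (continuous_const.mul (continuous_apply j))).neg
  have hQc : Continuous Q := by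
    rw [hQdef]
    apply continuous_finset_sum
    intro j _
    simp only [hwdef]
    exact (Complex.continuous_im.comp (continuous_const.mul (continuous_apply j))).pow 2
  have hTc : Continuous T := by
    rw [hTdef]
    exact continuous_finset_sum _ fun j _ => continuous_norm.comp (continuous_apply j)
  -- the sphere
  set S : Set (Fin n → ℂ) := {z | z ∈ Y ∧ T z = 1} with hSdef
  have hScompact : IsCompact S := by
    apply Metric.isCompact_of_isClosed_isBounded
    · exact IsClosed.inter (Submodule.closed_of_finiteDimensional Y)
        (isClosed_eq hTc continuous_const)
    · apply Bornology.IsBounded.subset (Metric.isBounded_closedBall (x := (0 : Fin n → ℂ)) (r := 1))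
      intro z hz
      rw [Metric.mem_closedBall, dist_zero_right]
      rw [pi_norm_le_iff_of_nonneg (by norm_num)]
      intro j
      have h1 : ‖z j‖ ≤ T z := habs_le z j
      rw [hz.2] at h1
      simpa using h1
  set g : (Fin n → ℂ) → ℝ := fun z => φ z / (4 * T a) + Q z / (10 * T a) with hgdef
  have hgc : Continuous g := by
    rw [hgdef]
    exact (hφc.div_const _).add (hQc.div_const _)
  -- trivial subspace case
  by_cases hYtriv : ∀ z ∈ Y, z = (0 : Fin n → ℂ)
  · refine ⟨1, one_pos, ?_⟩
    intro y hyY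
    have h1 : y = y₀ := by rw [hYtriv y hyY, hYtriv y₀ hy₀]
    rw [h1]
    simp
  push_neg at hYtriv
  obtain ⟨z₁, hz₁Y, hz₁0⟩ := hYtriv
  have hTz₁ : 0 < T z₁ := by
    rcases (hTnn z₁).lt_or_eq with h | h
    · exact h
    · exact absurd (hTzero z₁ h.symm) hz₁0
  have hSne : S.Nonempty := by
    refine ⟨(((T z₁)⁻¹ : ℝ) : ℂ) • z₁, Y.smul_mem _ hz₁Y, ?_⟩
    rw [hTh _ (by positivity) z₁]
    field_simp
  obtain ⟨u₀, hu₀S, hmin⟩ := hScompact.exists_isMinOn hSne hgc.continuousOn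
  set δ : ℝ := g u₀ with hδdef
  have hδ0 : 0 < δ := by
    have hsum := hpos u₀ hu₀S.1 hu₀S.2
    have hφu := hφ0 u₀ hu₀S.1
    have hQu := hQnn u₀
    have hδeq : δ = φ u₀ / (4 * T a) + Q u₀ / (10 * T a) := rfl
    rw [hδeq]
    by_cases hc : φ u₀ = 0
    · have hQpos : 0 < Q u₀ := by linarith [hsum]
      have h1 : 0 < Q u₀ / (10 * T a) := div_pos hQpos (by linarith)
      have h2 : 0 ≤ φ u₀ / (4 * T a) := div_nonneg hφu (by linarith)
      linarith
    · have hφpos : 0 < φ u₀ := lt_of_le_of_ne hφu (Ne.symm hc)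
      have h1 : 0 < φ u₀ / (4 * T a) := div_pos hφpos (by linarith)
      have h2 : 0 ≤ Q u₀ / (10 * T a) := div_nonneg hQu (by linarith)
      linarith
  refine ⟨min (2 * T a * δ) (1/2), lt_min (by positivity) (by norm_num), ?_⟩
  set r : ℝ := min (2 * T a * δ) (1/2) with hrdef
  have hr1 : r ≤ 2 * T a * δ := min_le_left _ _
  have hr2 : r ≤ 1/2 := min_le_right _ _
  have hr0 : 0 < r := lt_min (by positivity) (by norm_num)
  intro y hyY
  set z : Fin n → ℂ := y - y₀ with hzdef
  have hzY : z ∈ Y := Y.sub_mem hyY hy₀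
  have hNval : (∑ j, ‖(x - y) j‖) = ∑ j, ‖a j - z j‖ := hNy y
  have hTval : (∑ j, ‖(y - y₀) j‖) = T z := rfl
  rw [hNval, hN₀y, hTval, ge_iff_le]
  set t : ℝ := T z with htdef
  have ht0 : 0 ≤ t := hTnn z
  rcases ht0.eq_or_lt with ht | ht
  · have hz0 : z = 0 := hTzero z ht.symm
    rw [← ht, hz0]
    simp [hTdef]
  rcases le_or_gt t (4 * T a) with ht4 | ht4
  · -- small perturbation case
    have htne : (t : ℝ) ≠ 0 := ne_of_gt ht
    set u : Fin n → ℂ := ((t⁻¹ : ℝ) : ℂ) • z with hudef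
    have huY : u ∈ Y := Y.smul_mem _ hzY
    have hzu : z = ((t : ℝ) : ℂ) • u := by
      rw [hudef, smul_smul, ← Complex.ofReal_mul, mul_inv_cancel₀ htne, Complex.ofReal_one,
        one_smul]
    have hTu : T u = 1 := by
      rw [hudef, hTh _ (inv_nonneg.mpr ht.le) z, ← htdef, inv_mul_cancel₀ htne]
    have huS : u ∈ S := ⟨huY, hTu⟩
    have hgu : δ ≤ g u := hmin huS
    have hφu : 0 ≤ φ u := hφ0 u huY
    have hQu : 0 ≤ Q u := hQnn u
    have hφz : φ z = t * φ u := by rw [hzu, hφh t ht.le]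
    have hQz : Q z = t^2 * Q u := by rw [hzu, hQh t]
    have hlow := hM1 z
    rw [← htdef, hφz, hQz] at hlow
    have h4Ta : 0 < 4 * T a := by linarith
    have hd1 : t^2 * (φ u / (4 * T a)) ≤ t * φ u := by
      rw [← mul_div_assoc, div_le_iff₀ h4Ta]
      nlinarith [mul_nonneg (mul_nonneg (by linarith : (0:ℝ) ≤ 4 * T a - t) ht.le) hφu]
    have hd2 : t^2 * (Q u / (10 * T a)) ≤ t^2 * Q u / (2 * (T a + t)) := by
      rw [← mul_div_assoc]
      exact div_le_div_of_nonneg_left (mul_nonneg (sq_nonneg t) hQu)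
        (by linarith : (0:ℝ) < 2 * (T a + t)) (by linarith : 2 * (T a + t) ≤ 10 * T a)
    clear_value t δ
    have hNlow : T a + t^2 * δ ≤ ∑ j, ‖a j - z j‖ := by
      have hgueq : g u = φ u / (4 * T a) + Q u / (10 * T a) := rfl
      have h3 : t^2 * δ ≤ t^2 * (φ u / (4 * T a)) + t^2 * (Q u / (10 * T a)) := by
        calc t^2 * δ ≤ t^2 * g u := mul_le_mul_of_nonneg_left hgu (sq_nonneg t)
          _ = t^2 * (φ u / (4 * T a)) + t^2 * (Q u / (10 * T a)) := by rw [hgueq]; ring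
      linarith [hlow, hd1, hd2, h3]
    have hNN : (T a + t^2 * δ)^2 ≤ (∑ j, ‖a j - z j‖)^2 := by
      apply pow_le_pow_left₀ (by nlinarith [mul_nonneg (sq_nonneg t) hδ0.le]) hNlow
    nlinarith [hNN, mul_le_mul_of_nonneg_right hr1 (sq_nonneg t), hN₀, hδ0,
      sq_nonneg (t^2), mul_nonneg (mul_nonneg hN₀.le (sq_nonneg t)) hδ0.le,
      sq_nonneg (t^2 * δ)]
  · -- large perturbation case
    have hrev : ∀ j ∈ Finset.univ,
        ‖z j‖ - ‖a j‖ ≤ ‖a j - z j‖ := by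
      intro j _
      have h1 : ‖z j‖ ≤ ‖a j‖ + ‖z j - a j‖ := by
        simpa using norm_add_le (a j) (z j - a j)
      have h2 : ‖z j - a j‖ = ‖a j - z j‖ := norm_sub_rev _ _
      linarith [h2.le, h2.ge]
    have hNlow : t - T a ≤ ∑ j, ‖a j - z j‖ := by
      have h3 := Finset.sum_le_sum hrev
      rwa [Finset.sum_sub_distrib, show (∑ j, ‖z j‖) = t from rfl,
        show (∑ j, ‖a j‖) = T a from rfl] at h3
    have hNpos : 0 ≤ t - T a := by linarith
    have hNN : (t - T a)^2 ≤ (∑ j, ‖a j - z j‖)^2 := pow_le_pow_left₀ hNpos hNlow 2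
    nlinarith [hNN, hN₀, mul_le_mul_of_nonneg_right hr2 (sq_nonneg t),
      mul_nonneg ht.le (by linarith : (0:ℝ) ≤ t - 4 * T a)]
end

section
/- Let Y be a linear subspace of the complex space ℓ∞ⁿ that has a basis over ℂ consisting of vectors with all coordinates real, and let x = (1, 1, …, 1) ∈ ℓ∞ⁿ. If 0 is the unique best approximation for x in Y, then 0 is a 2-strongly unique best approximation for x in Y: there exists r > 0 such that ‖x − y‖∞² ≥ ‖x‖∞² + r‖y‖∞² for all y ∈ Y. -/
set_option maxHeartbeats 2000000 in
theorem stmt10 (n : ℕ) (nrm : (Fin n → ℂ) → ℝ)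
    (hnrm : ∀ z : Fin n → ℂ, IsGreatest (Set.range fun j => ‖z j‖) (nrm z))
    (Y : Submodule ℂ (Fin n → ℂ))
    (hreal : ∃ (k : ℕ) (b : Module.Basis (Fin k) ℂ Y), ∀ i j, ((b i : Fin n → ℂ) j).im = 0)
    (x : Fin n → ℂ) (hx : x = fun _ => 1)
    (huniq : ∀ y ∈ Y, y ≠ 0 → nrm (x - y) > nrm x) :
    ∃ r > 0, ∀ y ∈ Y, nrm (x - y) ^ 2 ≥ nrm x ^ 2 + r * nrm y ^ 2 := by
  subst hx
  -- n = 0 is impossible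
  rcases Nat.eq_zero_or_pos n with hn0 | hnpos
  · subst hn0
    obtain ⟨hmem, -⟩ := hnrm 0
    rw [Set.range_eq_empty] at hmem
    exact absurd hmem (Set.notMem_empty _)
  have hne : Nonempty (Fin n) := ⟨⟨0, hnpos⟩⟩
  have huniv : (Finset.univ : Finset (Fin n)).Nonempty := Finset.univ_nonempty
  -- nrm equals the sup norm
  have hnn : ∀ z : Fin n → ℂ, nrm z = ‖z‖ := by
    intro z
    refine (hnrm z).unique ⟨?_, ?_⟩
    · obtain ⟨j, -, hj⟩ := Finset.exists_mem_eq_sup (Finset.univ : Finset (Fin n))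
        huniv (fun j => ‖z j‖₊)
      refine ⟨j, ?_⟩
      have h2 : ‖z‖₊ = ‖z j‖₊ := by rw [Pi.nnnorm_def, hj]
      have h3 := congrArg (fun t : NNReal => (t : ℝ)) h2
      simpa using h3.symm
    · rintro r ⟨j, rfl⟩
      simpa using norm_le_pi_norm z j
  simp only [hnn] at huniq ⊢
  set x : Fin n → ℂ := fun _ => 1 with hxdef
  have hxnorm : ‖x‖ = 1 := by
    rw [hxdef, pi_norm_const]; simp
  have hatt : ∀ z : Fin n → ℂ, ∃ j, ‖z‖ = ‖z j‖ := by
    intro z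
    obtain ⟨j, hj⟩ := (hnrm z).1
    exact ⟨j, by rw [← hnn]; exact hj.symm⟩
  have hle : ∀ (z : Fin n → ℂ) (j : Fin n), ‖z j‖ ≤ ‖z‖ := by
    intro z j
    rw [← hnn]
    exact (hnrm z).2 ⟨j, rfl⟩
  -- real part of an element of Y is in Y
  have hRe : ∀ y ∈ Y, (fun j => (((y j).re : ℝ) : ℂ)) ∈ Y := by
    obtain ⟨k, b, hb⟩ := hreal
    intro y hy
    set c : Fin k → ℂ := fun i => b.repr ⟨y, hy⟩ i with hc
    have hyeq : y = ∑ i, c i • ((b i : Fin n → ℂ)) := by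
      have h1 := b.sum_repr ⟨y, hy⟩
      have h2 := congrArg (fun z : Y => (z : Fin n → ℂ)) h1
      simp only at h2
      rw [← h2]
      push_cast
      rfl
    have hkey : (fun j => (((y j).re : ℝ) : ℂ))
        = ((∑ i, ((c i).re : ℂ) • b i : Y) : Fin n → ℂ) := by
      funext j
      have hyj : y j = ∑ i, c i * (b i : Fin n → ℂ) j := by
        conv_lhs => rw [hyeq]
        simp
      have hRHS : ((∑ i, ((c i).re : ℂ) • b i : Y) : Fin n → ℂ) j
          = ∑ i, ((c i).re : ℂ) * (b i : Fin n → ℂ) j := by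
        push_cast
        simp
      rw [hRHS]
      apply Complex.ext
      · simp only [Complex.ofReal_re]
        rw [hyj, Complex.re_sum, Complex.re_sum]
        refine Finset.sum_congr rfl fun i _ => ?_
        rw [Complex.mul_re, Complex.mul_re, hb i j]
        simp
      · rw [Complex.im_sum]
        simp only [Complex.ofReal_im]
        rw [eq_comm, Finset.sum_eq_zero]
        intro i _
        rw [Complex.mul_im, hb i j]
        simp
    rw [hkey]
    exact (∑ i, ((c i).re : ℂ) • b i : Y).2
  have hIm : ∀ y ∈ Y, (fun j => (((y j).im : ℝ) : ℂ)) ∈ Y := by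
    intro y hy
    have h1 := hRe ((-Complex.I) • y) (Y.smul_mem _ hy)
    have h2 : (fun j => ((((-Complex.I) • y) j).re : ℂ))
        = (fun j => (((y j).im : ℝ) : ℂ)) := by
      funext j
      simp [Complex.mul_re]
    rwa [h2] at h1
  -- the key constant
  have hδ : ∃ δ : ℝ, 0 < δ ∧ δ ≤ 1 ∧ ∀ u : Fin n → ℂ, u ∈ Y →
      (∀ j, (u j).im = 0) → ∃ j, (u j).re ≤ -(δ * ‖u‖) := by
    set K : Set (Fin n → ℂ) := {u | u ∈ Y ∧ (∀ j, (u j).im = 0) ∧ ‖u‖ = 1} with hKdef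
    have hscale : ∀ u : Fin n → ℂ, u ∈ Y → (∀ j, (u j).im = 0) → u ≠ 0 →
        ((‖u‖⁻¹ : ℝ) : ℂ) • u ∈ K := by
      intro u hu him hu0
      have hun : ‖u‖ ≠ 0 := norm_ne_zero_iff.2 hu0
      refine ⟨Y.smul_mem _ hu, ?_, ?_⟩
      · intro j
        simp [Complex.mul_im, him j]
      · rw [norm_smul]
        simp [abs_of_nonneg (inv_nonneg.2 (norm_nonneg u))]
        field_simp
    have hKreal : ∀ u ∈ K, ∃ j, (u j).re ≤ -(1 : ℝ) * 0 → True := fun _ _ => ⟨⟨0, hnpos⟩, fun _ => trivial⟩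
    by_cases hKne : K.Nonempty
    · -- compactness
      have hKclosed : IsClosed K := by
        have heq : K = (Y : Set (Fin n → ℂ)) ∩
            ({u : Fin n → ℂ | ∀ j, (u j).im = 0} ∩ {u : Fin n → ℂ | ‖u‖ = 1}) := by
          ext u; simp [hKdef, Set.mem_setOf_eq, and_assoc]
        rw [heq]
        refine (Submodule.closed_of_finiteDimensional Y).inter (IsClosed.inter ?_ ?_)
        · have : {u : Fin n → ℂ | ∀ j, (u j).im = 0} = ⋂ j, {u : Fin n → ℂ | (u j).im = 0} := by
            ext u; simp
          rw [this]
          exact isClosed_iInter fun j =>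
            isClosed_eq (Complex.continuous_im.comp (continuous_apply j)) continuous_const
        · exact isClosed_eq continuous_norm continuous_const
      have hKbdd : Bornology.IsBounded K := by
        refine (Metric.isBounded_closedBall (x := (0 : Fin n → ℂ)) (r := 1)).subset ?_
        intro u hu
        rw [Metric.mem_closedBall, dist_zero_right, hu.2.2]
      have hKcpt : IsCompact K := Metric.isCompact_of_isClosed_isBounded hKclosed hKbdd
      obtain ⟨u₀, hu₀K, hmin⟩ := hKcpt.exists_isMinOn hKne
        (((continuous_const.sub continuous_id).norm).continuousOn :
          ContinuousOn (fun u : Fin n → ℂ => ‖x - u‖) K)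
      rw [isMinOn_iff] at hmin
      try simp only [id_eq] at hmin
      have hu₀ne : u₀ ≠ 0 := by
        intro h
        have h2 := hu₀K.2.2
        rw [h, norm_zero] at h2
        exact one_ne_zero h2.symm
      have hm1 : 1 < ‖x - u₀‖ := by
        have := huniq u₀ hu₀K.1 hu₀ne
        rwa [hxnorm] at this
      set m : ℝ := ‖x - u₀‖ with hmdef
      refine ⟨min (m - 1) 1, lt_min (by linarith) one_pos, min_le_right _ _, ?_⟩
      intro u hu him
      rcases eq_or_ne u 0 with rfl | hu0
      · exact ⟨⟨0, hnpos⟩, by simp⟩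
      · set w : Fin n → ℂ := ((‖u‖⁻¹ : ℝ) : ℂ) • u with hwdef
        have hwK : w ∈ K := hscale u hu him hu0
        have hun : (0 : ℝ) < ‖u‖ := norm_pos_iff.2 hu0
        have hwge : m ≤ ‖x - w‖ := hmin w hwK
        obtain ⟨j, hj⟩ := hatt (x - w)
        have hwj : (w j) = (((w j).re : ℝ) : ℂ) := by
          apply Complex.ext
          · rfl
          · simp [hwK.2.1 j]
        have hwjle : |(w j).re| ≤ 1 := by
          have h1 := hle w j
          rw [hwK.2.2, hwj, Complex.norm_real, Real.norm_eq_abs] at h1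
          exact h1
        have habs : ‖(x - w) j‖ = |1 - (w j).re| := by
          have h0 : (x - w) j = (((1 - (w j).re : ℝ)) : ℂ) := by
            have hxw : (x - w) j = 1 - w j := rfl
            rw [hxw]
            conv_lhs => rw [hwj]
            push_cast
            ring
          rw [h0, Complex.norm_real, Real.norm_eq_abs]
        have hwjre : (w j).re ≤ -(m - 1) := by
          have h1 : m ≤ |1 - (w j).re| := by rw [← habs, ← hj]; exact hwge
          have h2 : 1 - (w j).re ≥ 0 := by
            have := abs_le.1 hwjle
            linarith [this.2]
          rw [abs_of_nonneg h2] at h1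
          linarith
        refine ⟨j, ?_⟩
        have hwre : (w j).re = ‖u‖⁻¹ * (u j).re := by
          rw [hwdef]
          simp [Complex.mul_re]
        have : ‖u‖⁻¹ * (u j).re ≤ -(m - 1) := hwre ▸ hwjre
        have h3 : (u j).re ≤ -(m - 1) * ‖u‖ := by
          calc (u j).re = ‖u‖ * (‖u‖⁻¹ * (u j).re) := by field_simp
            _ ≤ ‖u‖ * (-(m - 1)) := mul_le_mul_of_nonneg_left this hun.le
            _ = -(m - 1) * ‖u‖ := by ring
        have h4 : min (m - 1) 1 * ‖u‖ ≤ (m - 1) * ‖u‖ :=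
          mul_le_mul_of_nonneg_right (min_le_left _ _) (norm_nonneg u)
        linarith
    · -- K empty: every real element of Y is zero
      refine ⟨1, one_pos, le_refl 1, ?_⟩
      intro u hu him
      rcases eq_or_ne u 0 with rfl | hu0
      · exact ⟨⟨0, hnpos⟩, by simp⟩
      · exact absurd ⟨_, hscale u hu him hu0⟩ hKne
  obtain ⟨δ, hδ0, hδ1, hδprop⟩ := hδ
  refine ⟨δ / 4, by positivity, ?_⟩
  intro y hy
  set u : Fin n → ℂ := fun j => (((y j).re : ℝ) : ℂ) with hudef
  set v : Fin n → ℂ := fun j => (((y j).im : ℝ) : ℂ) with hvdef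
  have hu : u ∈ Y := hRe y hy
  have huim : ∀ j, (u j).im = 0 := fun j => by simp [hudef]
  set a : ℝ := ‖u‖ with hadef
  set bb : ℝ := ‖v‖ with hbdef
  set N : ℝ := ‖x - y‖ with hNdef
  set t : ℝ := ‖y‖ with htdef
  have ha0 : 0 ≤ a := norm_nonneg u
  have hb0 : 0 ≤ bb := norm_nonneg v
  have ht0 : 0 ≤ t := norm_nonneg y
  have hN0 : 0 ≤ N := norm_nonneg _
  have hua : ∀ j, |(y j).re| ≤ a := by
    intro j
    have := hle u j
    rwa [hudef, Complex.norm_real, Real.norm_eq_abs] at this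
  have hva : ∀ j, |(y j).im| ≤ bb := by
    intro j
    have := hle v j
    rwa [hvdef, Complex.norm_real, Real.norm_eq_abs] at this
  have hxyj : ∀ j, (‖(x - y) j‖)^2 = (1 - (y j).re)^2 + ((y j).im)^2 := by
    intro j
    rw [Complex.sq_norm, Complex.normSq_apply]
    simp [hxdef]
    ring
  have hN2 : ∀ j, (1 - (y j).re)^2 + ((y j).im)^2 ≤ N^2 := by
    intro j
    rw [← hxyj j]
    exact pow_le_pow_left₀ (norm_nonneg ((x - y) j)) (hle (x - y) j) 2
  rw [hxnorm]
  -- bound A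
  obtain ⟨j₀, hj₀⟩ := hδprop u hu huim
  have hj₀re : (y j₀).re ≤ -(δ * a) := by
    have : (u j₀).re = (y j₀).re := by simp [hudef]
    rwa [this] at hj₀
  have hMA : 1 + 2 * δ * a ≤ N^2 := by
    have := hN2 j₀
    nlinarith [sq_nonneg ((y j₀).im), mul_nonneg hδ0.le ha0, sq_nonneg (δ * a)]
  -- bound B
  obtain ⟨kk, hkk⟩ := hatt v
  have hkkim : bb = |(y kk).im| := by
    rw [hbdef, hkk, hvdef, Complex.norm_real, Real.norm_eq_abs]
  have hMB : 1 - 2 * a + bb^2 ≤ N^2 := by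
    have h1 := hN2 kk
    have h2 : (y kk).re ≤ a := le_trans (le_abs_self _) (hua kk)
    have h3 : bb^2 = ((y kk).im)^2 := by rw [hkkim, sq_abs]
    nlinarith [sq_nonneg (y kk).re]
  -- bound on t
  have hT : t^2 ≤ a^2 + bb^2 := by
    obtain ⟨j, hj⟩ := hatt y
    have h1 : t^2 = ((y j).re)^2 + ((y j).im)^2 := by
      rw [htdef, hj, Complex.sq_norm, Complex.normSq_apply]; ring
    nlinarith [hua j, hva j, abs_nonneg (y j).re, abs_nonneg (y j).im,
      sq_abs (y j).re, sq_abs (y j).im]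
  clear_value a bb N t
  by_cases hy4 : t ≤ 4
  · have ha4 : a ≤ 4 := by
      obtain ⟨j, hj⟩ := hatt u
      have h1 : a = |(y j).re| := by rw [hadef, hj, hudef, Complex.norm_real, Real.norm_eq_abs]
      have h2 : |(y j).re| ≤ ‖y j‖ := Complex.abs_re_le_norm _
      have h3 := hle y j
      rw [← htdef] at h3
      linarith
    have e1 : δ / 2 * a^2 ≤ N^2 - 1 := by
      nlinarith [hMA, mul_nonneg (mul_nonneg hδ0.le ha0) (sub_nonneg.2 ha4)]
    have e2 : δ / 2 * bb^2 ≤ N^2 - 1 := by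
      have l1 : δ * (1 - 2*a + bb^2) ≤ δ * N^2 := mul_le_mul_of_nonneg_left hMB hδ0.le
      have l2 : 0 ≤ N^2 - 1 := by nlinarith [hMA, mul_nonneg hδ0.le ha0]
      nlinarith [l1, hMA, mul_nonneg l2 (sub_nonneg.2 hδ1)]
    have e3 : δ / 4 * t^2 ≤ δ / 4 * (a^2 + bb^2) :=
      mul_le_mul_of_nonneg_left hT (by positivity)
    rw [ge_iff_le, one_pow]
    linarith
  · push_neg at hy4
    have h1 : t - 1 ≤ N := by
      have := norm_sub_norm_le y x
      rw [norm_sub_rev, hxnorm, ← hNdef, ← htdef] at this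
      linarith
    have h2 : (t - 1)^2 ≤ N^2 := by nlinarith [h1, hN0, hy4]
    rw [ge_iff_le, one_pow]
    nlinarith [h2, mul_le_mul_of_nonneg_right hδ1 (sq_nonneg t),
      mul_pos (show (0:ℝ) < t by linarith) (show (0:ℝ) < 3*t/4 - 2 by linarith)]
end

section
/- Let X = (ℂⁿ, ‖·‖) be a complex normed space whose norm is either (a) a complex polytope norm whose closed unit ball equals absconv{u₁, …, u_N} for vectors u₁, …, u_N with all coordinates real, or (b) an adjoint complex polytope norm ‖x‖ = max_{1 ≤ j ≤ M} |f_j(x)| where each ℂ-linear functional f_j maps vectors with real coordinates to real numbers. Then for any two vectors x, y ∈ ℝⁿ ⊆ ℂⁿ we have ‖x + iy‖ ≥ ‖x‖. -/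
theorem stmt12 (n : ℕ) (nrm : (Fin n → ℂ) → ℝ)
    (hadd : ∀ v w, nrm (v + w) ≤ nrm v + nrm w)
    (hsmul : ∀ (c : ℂ) v, nrm (c • v) = ‖c‖ * nrm v)
    (hdef : ∀ v, nrm v = 0 → v = 0)
    (h : (∃ (N : ℕ) (u : Fin N → (Fin n → ℂ)),
            (∀ k j, (u k j).im = 0) ∧
            Submodule.span ℂ (Set.range u) = ⊤ ∧
            {v | nrm v ≤ 1} =
              {v | ∃ α : Fin N → ℂ, (∑ j, ‖α j‖) ≤ 1 ∧ v = ∑ j, α j • u j})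
         ∨
         (∃ (M : ℕ) (f : Fin M → ((Fin n → ℂ) →ₗ[ℂ] ℂ)),
            (∀ j (v : Fin n → ℂ), (∀ i, (v i).im = 0) → (f j v).im = 0) ∧
            ∀ v, IsGreatest (Set.range fun j => ‖f j v‖) (nrm v)))
    (x y : Fin n → ℝ) :
    nrm (fun j => (x j : ℂ) + (y j : ℂ) * Complex.I) ≥ nrm (fun j => (x j : ℂ)) := by
  have hzero : nrm 0 = 0 := by
    have := hsmul 0 0
    simpa using this
  have nonneg : ∀ v, 0 ≤ nrm v := by
    intro v
    have h1 : nrm (-v) = nrm v := by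
      have := hsmul (-1) v
      simpa using this
    have h2 := hadd v (-v)
    rw [add_neg_cancel, hzero, h1] at h2
    linarith
  set z : Fin n → ℂ := fun j => (x j : ℂ) + (y j : ℂ) * Complex.I with hz
  set zc : Fin n → ℂ := fun j => (x j : ℂ) - (y j : ℂ) * Complex.I with hzc
  set xc : Fin n → ℂ := fun j => ((x j : ℂ)) with hxc
  set yc : Fin n → ℂ := fun j => ((y j : ℂ)) with hyc
  have hsum : z + zc = (2:ℂ) • xc := by
    funext j; simp [hz, hzc, hxc]; ring
  have key : nrm zc ≤ nrm z := by
    rcases h with ⟨N, u, hureal, _, hball⟩ | ⟨M, f, hfreal, hmax⟩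
    · -- conjugation argument
      have conjle : ∀ v : Fin n → ℂ, nrm (fun j => (starRingEnd ℂ) (v j)) ≤ nrm v := by
        intro v
        by_cases hv : nrm v = 0
        · have hv0 : v = 0 := hdef v hv
          subst hv0
          simp only [Pi.zero_apply, map_zero, hv]
          have : (fun _ : Fin n => (0:ℂ)) = (0 : Fin n → ℂ) := rfl
          rw [this, hzero]
        · have ht : 0 < nrm v := lt_of_le_of_ne (nonneg v) (Ne.symm hv)
          set t := nrm v with htdef
          have hw : nrm (((t:ℂ))⁻¹ • v) ≤ 1 := by
            rw [hsmul]
            rw [norm_inv]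
            rw [Complex.norm_real, Real.norm_eq_abs, abs_of_pos ht]
            rw [inv_mul_cancel₀ hv]
          have hwmem : ((t:ℂ))⁻¹ • v ∈ {v | nrm v ≤ 1} := hw
          rw [hball] at hwmem
          obtain ⟨α, hα, hveq⟩ := hwmem
          have hcw : (fun j => (starRingEnd ℂ) ((((t:ℂ))⁻¹ • v) j)) =
              ∑ k, ((starRingEnd ℂ) (α k)) • u k := by
            funext j
            have : (((t:ℂ))⁻¹ • v) j = ∑ k, α k * u k j := by
              rw [hveq]
              simp [Finset.sum_apply]
            rw [this, map_sum]
            simp only [Finset.sum_apply, Pi.smul_apply, smul_eq_mul]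
            congr 1
            funext k
            rw [map_mul]
            congr 1
            exact Complex.conj_eq_iff_im.mpr (hureal k j)
          have hmem2 : (fun j => (starRingEnd ℂ) ((((t:ℂ))⁻¹ • v) j)) ∈ {v | nrm v ≤ 1} := by
            rw [hball]
            exact ⟨fun k => (starRingEnd ℂ) (α k), by simpa using hα, hcw⟩
          have heq : (fun j => (starRingEnd ℂ) ((((t:ℂ))⁻¹ • v) j)) =
              ((t:ℂ))⁻¹ • (fun j => (starRingEnd ℂ) (v j)) := by
            funext j
            simp only [Pi.smul_apply, smul_eq_mul, map_mul, map_inv₀, Complex.conj_ofReal]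
          rw [heq] at hmem2
          have := hmem2
          simp only [Set.mem_setOf_eq] at this
          rw [hsmul, norm_inv, Complex.norm_real, Real.norm_eq_abs, abs_of_pos ht] at this
          calc nrm (fun j => (starRingEnd ℂ) (v j))
              = t * (t⁻¹ * nrm (fun j => (starRingEnd ℂ) (v j))) := by
                field_simp
            _ ≤ t * 1 := by
                apply mul_le_mul_of_nonneg_left this (le_of_lt ht)
            _ = t := mul_one t
      have hzc : zc = fun j => (starRingEnd ℂ) (z j) := by
        funext j
        simp [hz, hzc, Complex.ext_iff]
      rw [hzc]
      exact conjle z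
    · -- functional argument
      obtain ⟨j0, hj0⟩ := (hmax zc).1
      have hub := (hmax z).2
      have hle : ‖f j0 zc‖ ≤ nrm z := by
        have habs : ‖f j0 zc‖ = ‖f j0 z‖ := by
          have hzd : z = xc + Complex.I • yc := by
            funext j; simp [hz, hxc, hyc]; ring
          have hzcd : zc = xc - Complex.I • yc := by
            funext j; simp [hzc, hxc, hyc]; ring
          have hfx : (f j0 xc).im = 0 := hfreal j0 xc (by intro i; simp [hxc])
          have hfy : (f j0 yc).im = 0 := hfreal j0 yc (by intro i; simp [hyc])
          rw [hzd, hzcd]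
          simp only [map_add, map_sub, map_smul, smul_eq_mul]
          rw [Complex.norm_def, Complex.norm_def]
          congr 1
          simp [Complex.normSq_apply, Complex.add_re, Complex.sub_re, Complex.mul_re,
            Complex.mul_im, Complex.I_re, Complex.I_im, hfx, hfy]
        rw [habs]
        exact hub ⟨j0, rfl⟩
      simp only at hj0
      linarith [hle, hj0]
  have htri := hadd z zc
  rw [hsum, hsmul] at htri
  simp only [Complex.norm_two] at htri
  have : nrm xc ≤ nrm z := by
    have h2 : ‖(2:ℂ)‖ = 2 := Complex.norm_two
    nlinarith [htri, key]
  exact this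
end
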